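/- arXiv:2408.04897 — 11 statements merged into one kernel-verified Lean document; each statement's English description precedes it below -/
import Mathlib

section
/- If b ≥ 4 is even, then for every integer c ≥ 1 there exists a magic rectangle set MRS(2,b;c). -/
open Finset

def offA (j : ℕ) : ℕ :=
  if j = 0 then 0 else if j = 1 then 1 else if j = 2 then 2 else if j = 3 then 3
  else if j = 4 then 4 else 6

def offB (j : ℕ) : ℕ :=
  if j = 0 then 5 else if j = 1 then 7 else if j = 2 then 8 else if j = 3 then 9
  else if j = 4 then 10 else 11

lemma offA_le (j : ℕ) : offA j ≤ 6 := by unfold offA; split_ifs <;> omega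
lemma offB_le (j : ℕ) : offB j ≤ 11 := by unfold offB; split_ifs <;> omega

def fB (c k t j : ℕ) : ℕ :=
  if j < 6 then
    (if t = c - 1 ∧ c % 2 = 1 then j
     else 6 * (c % 2) + 12 * (t / 2) + (if t % 2 = 0 then offA j else offB j))
  else 6 * c + 4 * k * t + (j - 6)

def eB (c k t j : ℕ) : Bool :=
  if j < 6 then
    (if t = c - 1 ∧ c % 2 = 1 then decide (j = 3 ∨ j = 5)
     else (if t % 2 = 0 then decide (j = 0 ∨ j = 2 ∨ j = 5)
           else decide (j = 0 ∨ j = 3 ∨ j = 5)))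
  else decide ((j - 6) % 4 = 0 ∨ (j - 6) % 4 = 3)

theorem quadsum' (n x : ℕ) : ∀ (N : ℕ), x + 4 * N ≤ n →
    ∑ j ∈ Finset.range (4 * N),
      (if (decide (j % 4 = 0 ∨ j % 4 = 3)) = true then n + 1 + (x + j) else n - (x + j))
      = N * (4 * n + 2) := by
  intro N
  induction N with
  | zero => simp
  | succ m ih =>
    intro h
    have h4 : 4 * (m + 1) = (4 * m) + 1 + 1 + 1 + 1 := by ring
    rw [h4, Finset.sum_range_succ, Finset.sum_range_succ, Finset.sum_range_succ,
      Finset.sum_range_succ, ih (by omega)]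
    rw [if_pos (by simp only [decide_eq_true_eq]; omega),
      if_neg (by simp only [decide_eq_true_eq]; omega),
      if_neg (by simp only [decide_eq_true_eq]; omega),
      if_pos (by simp only [decide_eq_true_eq]; omega)]
    have e1 : (m + 1) * (4 * n + 2) = m * (4 * n + 2) + (4 * n + 2) := by ring
    omega

theorem sumB (c k t : ℕ) (hc : 1 ≤ c) (ht : t < c) :
    ∑ j ∈ Finset.range (4 * k + 6),
      (if eB c k t j = true then (4 * k + 6) * c + 1 + fB c k t j
       else (4 * k + 6) * c - fB c k t j)
      = (4 * k + 6) * ((4 * k + 6) * c) + (4 * k + 6) / 2 := by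
  set n := (4 * k + 6) * c with hn
  have hn6 : 6 * c ≤ n := Nat.mul_le_mul_right c (by omega)
  have hkc : 6 * c + 4 * k * t + 4 * k ≤ n := by
    have h2 : 4 * k * (t + 1) ≤ 4 * k * c := Nat.mul_le_mul_left (4 * k) ht
    have h3 : 4 * k * (t + 1) = 4 * k * t + 4 * k := by ring
    have h4 : n = 4 * k * c + 6 * c := by rw [hn]; ring
    omega
  have hsplit : ∀ (F : ℕ → ℕ), ∑ j ∈ Finset.range (4 * k + 6), F j
      = ∑ j ∈ Finset.range 6, F j + ∑ j ∈ Finset.range (4 * k), F (6 + j) := by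
    intro F
    rw [show 4 * k + 6 = 6 + 4 * k from by ring, Finset.range_eq_Ico,
      ← Finset.sum_Ico_consecutive F (Nat.zero_le 6) (by omega : 6 ≤ 6 + 4 * k),
      Finset.sum_Ico_eq_sum_range, Finset.sum_Ico_eq_sum_range]
    simp only [Nat.sub_zero, Nat.zero_add, Nat.add_sub_cancel_left]
  rw [hsplit]
  have hquad : ∑ j ∈ Finset.range (4 * k),
      (if eB c k t (6 + j) = true then n + 1 + fB c k t (6 + j)
       else n - fB c k t (6 + j)) = k * (4 * n + 2) := by
    have hpt : ∀ j, (if eB c k t (6 + j) = true then n + 1 + fB c k t (6 + j)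
        else n - fB c k t (6 + j))
        = (if (decide (j % 4 = 0 ∨ j % 4 = 3)) = true then n + 1 + ((6 * c + 4 * k * t) + j)
           else n - ((6 * c + 4 * k * t) + j)) := by
      intro j
      simp only [fB, eB, if_neg (show ¬ (6 + j < 6) from by omega), Nat.add_sub_cancel_left]
    rw [Finset.sum_congr rfl (fun j _ => hpt j)]
    exact quadsum' n (6 * c + 4 * k * t) k (by omega)
  rw [hquad]
  have hsex : ∑ j ∈ Finset.range 6,
      (if eB c k t j = true then n + 1 + fB c k t j else n - fB c k t j) = 6 * n + 3 := by
    by_cases hsp : t = c - 1 ∧ c % 2 = 1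
    · simp only [Finset.sum_range_succ, Finset.sum_range_zero, fB, eB, if_pos hsp]
      norm_num
      omega
    · have hoA : ∀ j, offA j ≤ 6 := offA_le
      have hoB : ∀ j, offB j ≤ 11 := offB_le
      have hlt : 6 * (c % 2) + 12 * (t / 2) + 11 < 6 * c := by
        rcases Nat.even_or_odd c with hce | hco
        · have : c % 2 = 0 := Nat.even_iff.mp hce
          omega
        · have hc1 : c % 2 = 1 := Nat.odd_iff.mp hco
          have htc : t ≠ c - 1 := fun h => hsp ⟨h, hc1⟩
          have : t ≤ c - 2 := by omega
          omega
      by_cases ht2 : t % 2 = 0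
      · simp only [Finset.sum_range_succ, Finset.sum_range_zero, fB, eB, if_neg hsp,
          if_pos ht2, offA]
        norm_num
        omega
      · simp only [Finset.sum_range_succ, Finset.sum_range_zero, fB, eB, if_neg hsp,
          if_neg ht2, offB]
        norm_num
        omega
  rw [hsex]
  have e2 : (4 * k + 6) * n = 4 * (k * n) + 6 * n := by ring
  have e1 : k * (4 * n + 2) = 4 * (k * n) + 2 * k := by ring
  omega

lemma offA_inj (j j' : ℕ) (hj : j < 6) (hj' : j' < 6) (h : offA j = offA j') : j = j' := by
  interval_cases j <;> interval_cases j' <;> simp_all [offA]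

lemma offB_inj (j j' : ℕ) (hj : j < 6) (hj' : j' < 6) (h : offB j = offB j') : j = j' := by
  interval_cases j <;> interval_cases j' <;> simp_all [offB]

lemma offAB (j j' : ℕ) (hj : j < 6) (hj' : j' < 6) : offA j ≠ offB j' := by
  interval_cases j <;> interval_cases j' <;> simp_all [offA, offB]

theorem block_inj (b t j t' j' : ℕ) (hj : j < b) (hj' : j' < b)
    (h : b * t + j = b * t' + j') : t = t' ∧ j = j' := by
  rcases lt_trichotomy t t' with hl | he | hl
  · have h2 : b * (t + 1) ≤ b * t' := Nat.mul_le_mul_left b hl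
    have h3 : b * (t + 1) = b * t + b := by ring
    omega
  · subst he; omega
  · have h2 : b * (t' + 1) ≤ b * t := Nat.mul_le_mul_left b hl
    have h3 : b * (t' + 1) = b * t' + b := by ring
    omega

lemma sextB_lt (c t j : ℕ) (ht : t < c) (hsp : ¬ (t = c - 1 ∧ c % 2 = 1)) :
    6 * (c % 2) + 12 * (t / 2) + (if t % 2 = 0 then offA j else offB j) < 6 * c := by
  have h1 := offA_le j
  have h2 := offB_le j
  have hoff : (if t % 2 = 0 then offA j else offB j) ≤ 11 := by split_ifs <;> omega
  rcases Nat.even_or_odd c with hce | hco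
  · have := Nat.even_iff.mp hce
    omega
  · have hc1 := Nat.odd_iff.mp hco
    have : t ≠ c - 1 := fun h => hsp ⟨h, hc1⟩
    omega

lemma injB (c k t j t' j' : ℕ) (hc : 1 ≤ c) (ht : t < c) (hj : j < 4 * k + 6)
    (ht' : t' < c) (hj' : j' < 4 * k + 6) (h : fB c k t j = fB c k t' j') :
    t = t' ∧ j = j' := by
  unfold fB at h
  by_cases h6 : j < 6 <;> by_cases h6' : j' < 6
  · rw [if_pos h6, if_pos h6'] at h
    by_cases hs : t = c - 1 ∧ c % 2 = 1 <;> by_cases hs' : t' = c - 1 ∧ c % 2 = 1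
    · rw [if_pos hs, if_pos hs'] at h
      exact ⟨hs.1.trans hs'.1.symm, h⟩
    · rw [if_pos hs, if_neg hs'] at h
      have hc1 := hs.2
      omega
    · rw [if_neg hs, if_pos hs'] at h
      have hc1 := hs'.2
      omega
    · rw [if_neg hs, if_neg hs'] at h
      have i1 : (if t % 2 = 0 then offA j else offB j) ≤ 11 := by
        have := offA_le j; have := offB_le j; split_ifs <;> omega
      have i2 : (if t' % 2 = 0 then offA j' else offB j') ≤ 11 := by
        have := offA_le j'; have := offB_le j'; split_ifs <;> omega
      have hd : t / 2 = t' / 2 := by omega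
      have hoff : (if t % 2 = 0 then offA j else offB j)
          = (if t' % 2 = 0 then offA j' else offB j') := by omega
      by_cases p : t % 2 = 0 <;> by_cases p' : t' % 2 = 0
      · rw [if_pos p, if_pos p'] at hoff
        exact ⟨by omega, offA_inj j j' h6 h6' hoff⟩
      · rw [if_pos p, if_neg p'] at hoff
        exact absurd hoff (offAB j j' h6 h6')
      · rw [if_neg p, if_pos p'] at hoff
        exact absurd hoff.symm (offAB j' j h6' h6)
      · rw [if_neg p, if_neg p'] at hoff
        exact ⟨by omega, offB_inj j j' h6 h6' hoff⟩
  · rw [if_pos h6, if_neg h6'] at h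
    exfalso
    by_cases hs : t = c - 1 ∧ c % 2 = 1
    · rw [if_pos hs] at h
      omega
    · rw [if_neg hs] at h
      have := sextB_lt c t j ht hs
      omega
  · rw [if_neg h6, if_pos h6'] at h
    exfalso
    by_cases hs' : t' = c - 1 ∧ c % 2 = 1
    · rw [if_pos hs'] at h
      omega
    · rw [if_neg hs'] at h
      have := sextB_lt c t' j' ht' hs'
      omega
  · rw [if_neg h6, if_neg h6'] at h
    have hb := block_inj (4 * k) t (j - 6) t' (j' - 6) (by omega) (by omega) (by omega)
    exact ⟨hb.1, by omega⟩

lemma fB_lt (c k t j : ℕ) (hc : 1 ≤ c) (ht : t < c) (hj : j < 4 * k + 6) :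
    fB c k t j < (4 * k + 6) * c := by
  have hn6 : 6 * c ≤ (4 * k + 6) * c := Nat.mul_le_mul_right c (by omega)
  have hkc : 6 * c + 4 * k * t + 4 * k ≤ (4 * k + 6) * c := by
    have h2 : 4 * k * (t + 1) ≤ 4 * k * c := Nat.mul_le_mul_left (4 * k) ht
    have h3 : 4 * k * (t + 1) = 4 * k * t + 4 * k := by ring
    have h4 : (4 * k + 6) * c = 4 * k * c + 6 * c := by ring
    omega
  unfold fB
  split_ifs with h1 h2 h3
  · omega
  · have := sextB_lt c t j ht h2
    rw [if_pos h3] at this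
    omega
  · have := sextB_lt c t j ht h2
    rw [if_neg h3] at this
    omega
  · omega
theorem master (b c : ℕ) (hb : 2 ≤ b) (hbe : b % 2 = 0) (hc : 1 ≤ c)
    (f : ℕ → ℕ → ℕ) (ε : ℕ → ℕ → Bool)
    (hfn : ∀ t j, t < c → j < b → f t j < b * c)
    (hinj : ∀ t j t' j', t < c → j < b → t' < c → j' < b →
      f t j = f t' j' → t = t' ∧ j = j')
    (hsum : ∀ t, t < c →
      ∑ j ∈ Finset.range b, (if ε t j = true then b * c + 1 + f t j else b * c - f t j)
        = b * (b * c) + b / 2) :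
    ∃ A : Fin c → Fin 2 → Fin b → ℕ,
      (∀ x ∈ Finset.Icc 1 (2 * b * c),
        ∃! p : Fin c × Fin 2 × Fin b, A p.1 p.2.1 p.2.2 = x) ∧
      (∀ t i j, A t i j ∈ Finset.Icc 1 (2 * b * c)) ∧
      ∃ ω δ : ℕ,
        (∀ t : Fin c, ∀ i : Fin 2, (∑ j : Fin b, A t i j) = ω) ∧
        (∀ t : Fin c, ∀ j : Fin b, (∑ i : Fin 2, A t i j) = δ) := by
  have hbc : 2 * b * c = 2 * (b * c) := by ring
  set n := b * c with hn
  have hn1 : 1 ≤ n := by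
    have := Nat.mul_le_mul hb hc
    omega
  set g : ℕ → ℕ → ℕ → ℕ := fun t i j =>
    if ε t j = decide (i = 0) then n + 1 + f t j else n - f t j with hg
  have hgval : ∀ t i j, t < c → j < b → i < 2 →
      (1 ≤ g t i j ∧ g t i j ≤ 2 * n ∧
       ((g t i j ≤ n → g t i j = n - f t j) ∧ (n < g t i j → g t i j = n + 1 + f t j))) := by
    intro t i j ht hj hi
    have := hfn t j ht hj
    simp only [hg]
    split <;> omega
  have hcol2 : ∀ (t' : Fin c) j, j < b → g t'.val 0 j + g t'.val 1 j = 2 * n + 1 := by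
    intro t' j hj
    have := hfn t'.val j t'.isLt hj
    simp only [hg]
    rcases hE : ε t'.val j with _ | _ <;> simp [hE] <;> omega
  refine ⟨fun t i j => g t.val i.val j.val, ?_, ?_, ?_⟩
  · -- uniqueness part
    have hsurj : ∀ v, v < n → ∃ t j, t < c ∧ j < b ∧ f t j = v := by
      have himg : (Finset.range c ×ˢ Finset.range b).image (fun p => f p.1 p.2)
          = Finset.range n := by
        apply Finset.eq_of_subset_of_card_le
        · intro v hv
          simp only [Finset.mem_image, Finset.mem_product, Finset.mem_range] at hv
          obtain ⟨⟨t, j⟩, ⟨ht, hj⟩, hv⟩ := hv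
          simp only [Finset.mem_range]
          exact hv ▸ hfn t j ht hj
        · rw [Finset.card_range, Finset.card_image_of_injOn, Finset.card_product,
            Finset.card_range, Finset.card_range]
          · exact le_of_eq (Nat.mul_comm b c)
          · intro p hp q hq hpq
            simp only [Finset.coe_product, Set.mem_prod, Finset.mem_coe,
              Finset.mem_range] at hp hq
            have := hinj p.1 p.2 q.1 q.2 hp.1 hp.2 hq.1 hq.2 hpq
            exact Prod.ext this.1 this.2
      intro v hv
      have hvm : v ∈ Finset.range n := Finset.mem_range.mpr hv
      rw [← himg] at hvm
      simp only [Finset.mem_image, Finset.mem_product, Finset.mem_range] at hvm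
      obtain ⟨⟨t, j⟩, ⟨ht, hj⟩, hv'⟩ := hvm
      exact ⟨t, j, ht, hj, hv'⟩
    intro x hx
    simp only [Finset.mem_Icc] at hx
    -- the f-value that x corresponds to
    have hv : (if x ≤ n then n - x else x - n - 1) < n := by split <;> omega
    obtain ⟨t, j, ht, hj, hf⟩ := hsurj _ hv
    -- the row
    have hi : ∀ t' i' j', t' < c → j' < b → i' < 2 → g t' i' j' = x →
        t' = t ∧ j' = j ∧ i' = (if (ε t j = true) = (x ≤ n) then 1 else 0) := by
      intro t' i' j' ht' hj' hi' hgx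
      have hfb := hfn t' j' ht' hj'
      have hfb2 := hfn t j ht hj
      simp only [hg] at hgx
      rcases le_or_gt x n with hxn | hxn
      · rw [if_pos hxn] at hf
        have hcond : ¬ (ε t' j' = decide (i' = 0)) := by
          intro hcw
          rw [if_pos hcw] at hgx
          omega
        rw [if_neg hcond] at hgx
        have : f t' j' = f t j := by omega
        obtain ⟨h1, h2⟩ := hinj t' j' t j ht' hj' ht hj this
        refine ⟨h1, h2, ?_⟩
        subst h1; subst h2
        rcases hE : ε t' j' with _ | _ <;> simp [hE, hxn] at hcond ⊢ <;> omega
      · rw [if_neg (by omega)] at hf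
        have hcond : (ε t' j' = decide (i' = 0)) := by
          by_contra hcw
          rw [if_neg hcw] at hgx
          omega
        rw [if_pos hcond] at hgx
        have : f t' j' = f t j := by omega
        obtain ⟨h1, h2⟩ := hinj t' j' t j ht' hj' ht hj this
        refine ⟨h1, h2, ?_⟩
        subst h1; subst h2
        rcases hE : ε t' j' with _ | _ <;>
          simp [hE, show ¬ (x ≤ n) by omega] at hcond ⊢ <;> omega
    refine ⟨⟨⟨t, ht⟩, ⟨if (ε t j = true) = (x ≤ n) then 1 else 0, by split <;> omega⟩,
      ⟨j, hj⟩⟩, ?_, ?_⟩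
    · have hfb2 := hfn t j ht hj
      show g t (if (ε t j = true) = (x ≤ n) then 1 else 0) j = x
      rcases le_or_gt x n with hxn | hxn
      · rw [if_pos hxn] at hf
        by_cases hE : ε t j = true
        · rw [if_pos (by simp [hE, hxn])]
          simp only [hg]
          rw [if_neg (by simp [hE])]
          omega
        · rw [if_neg (by simp [hE, hxn])]
          simp only [hg]
          rw [if_neg (by simp [hE])]
          omega
      · rw [if_neg (by omega)] at hf
        by_cases hE : ε t j = true
        · rw [if_neg (by simp [hE, show ¬ x ≤ n by omega])]
          simp only [hg]
          rw [if_pos (by simp [hE])]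
          omega
        · rw [if_pos (by simp [hE, show ¬ x ≤ n by omega])]
          simp only [hg]
          rw [if_pos (by simp [hE])]
          omega
    · rintro ⟨t', i', j'⟩ hp
      have := hi t'.val i'.val j'.val t'.isLt j'.isLt i'.isLt hp
      obtain ⟨h1, h2, h3⟩ := this
      refine Prod.ext (Fin.ext h1) (Prod.ext (Fin.ext h3) (Fin.ext h2))
  · intro t i j
    have := hgval t.val i.val j.val t.isLt j.isLt i.isLt
    simp only [Finset.mem_Icc]
    omega
  · refine ⟨b * n + b / 2, 2 * n + 1, ?_, ?_⟩
    · intro t i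
      have hrow0 : ∀ t' : Fin c, (∑ j : Fin b, g t'.val 0 j.val) = b * n + b / 2 := by
        intro t'
        rw [Fin.sum_univ_eq_sum_range (fun j => g t'.val 0 j) b]
        rw [← hsum t'.val t'.isLt]
        apply Finset.sum_congr rfl
        intro j hj
        simp only [hg]
        norm_num
      have hrow1 : ∀ t' : Fin c, (∑ j : Fin b, g t'.val 1 j.val) = b * n + b / 2 := by
        intro t'
        have hpair : ∑ j ∈ Finset.range b, (g t'.val 0 j + g t'.val 1 j) = b * (2 * n + 1) := by
          rw [Finset.sum_congr rfl (fun j hj => hcol2 t' j (Finset.mem_range.mp hj))]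
          rw [Finset.sum_const, Finset.card_range, smul_eq_mul]
        rw [Finset.sum_add_distrib] at hpair
        have h0 := hrow0 t'
        rw [Fin.sum_univ_eq_sum_range (fun j => g t'.val 0 j) b] at h0
        rw [Fin.sum_univ_eq_sum_range (fun j => g t'.val 1 j) b]
        have hr : b * (2 * n + 1) = 2 * (b * n) + b := by ring
        omega
      rcases Fin.exists_fin_two.mp ⟨i, rfl⟩ with h | h
      · rw [h]; exact hrow0 t
      · rw [h]; exact hrow1 t
    · intro t j
      rw [Fin.sum_univ_two]
      exact hcol2 t j.val j.isLt

/-- If `b ≥ 4` is even, then there exists an `MRS(2,b;c)` for all `c ≥ 1`. -/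
theorem stmt1 (b c : ℕ) (hb : 4 ≤ b) (hbe : Even b) (hc : 1 ≤ c) :
    ∃ A : Fin c → Fin 2 → Fin b → ℕ,
      (∀ x ∈ Finset.Icc 1 (2 * b * c),
        ∃! p : Fin c × Fin 2 × Fin b, A p.1 p.2.1 p.2.2 = x) ∧
      (∀ t i j, A t i j ∈ Finset.Icc 1 (2 * b * c)) ∧
      ∃ ω δ : ℕ,
        (∀ t : Fin c, ∀ i : Fin 2, (∑ j : Fin b, A t i j) = ω) ∧
        (∀ t : Fin c, ∀ j : Fin b, (∑ i : Fin 2, A t i j) = δ) := by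
  have hbe2 : b % 2 = 0 := Nat.even_iff.mp hbe
  rcases (show b % 4 = 0 ∨ b % 4 = 2 by omega) with h4 | h4
  · -- case A : b = 4 m
    obtain ⟨m, hm⟩ : ∃ m, b = 4 * m := ⟨b / 4, by omega⟩
    subst hm
    apply master (4 * m) c (by omega) hbe2 hc (fun t j => 4 * m * t + j)
      (fun t j => decide (j % 4 = 0 ∨ j % 4 = 3))
    · intro t j ht hj
      have h2 : 4 * m * (t + 1) ≤ 4 * m * c := Nat.mul_le_mul_left (4 * m) ht
      have h3 : 4 * m * (t + 1) = 4 * m * t + 4 * m := by ring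
      omega
    · intro t j t' j' ht hj ht' hj' h
      exact block_inj (4 * m) t j t' j' hj hj' h
    · intro t ht
      have hle : 4 * m * t + 4 * m ≤ 4 * m * c := by
        have h2 : 4 * m * (t + 1) ≤ 4 * m * c := Nat.mul_le_mul_left (4 * m) ht
        have h3 : 4 * m * (t + 1) = 4 * m * t + 4 * m := by ring
        omega
      have hq := quadsum' (4 * m * c) (4 * m * t) m (by omega)
      beta_reduce
      rw [hq]
      have e1 : m * (4 * (4 * m * c) + 2) = 4 * m * (4 * m * c) + 2 * m := by ring
      omega
  · -- case B : b = 4 k + 6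
    obtain ⟨k, hk⟩ : ∃ k, b = 4 * k + 6 := ⟨(b - 6) / 4, by omega⟩
    subst hk
    apply master (4 * k + 6) c (by omega) hbe2 hc (fun t j => fB c k t j)
      (fun t j => eB c k t j)
    · intro t j ht hj
      exact fB_lt c k t j hc ht hj
    · intro t j t' j' ht hj ht' hj' h
      exact injB c k t j t' j' hc ht hj ht' hj' h
    · intro t ht
      exact sumB c k t hc ht
end

section
/- Let m,n,s,k,c be positive integers such that the product n·c is even and k is odd, and let Γ be a finite abelian group of order n·k·c having exactly one involution. Then there is no Γ-magic rectangle set MRS_Γ(m,n;s,k;c). -/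
open Finset

/-- A Γ-magic rectangle set `MRS_Γ(m,n;s,k;c)` on partially filled arrays. -/
def IsPartialMRS {Γ : Type*} [AddCommGroup Γ] (m n s k c : ℕ)
    (A : Fin c → Fin m → Fin n → Option Γ) : Prop :=
  (∀ g : Γ, ∃! p : Fin c × Fin m × Fin n, A p.1 p.2.1 p.2.2 = some g) ∧
  (∀ t : Fin c, ∀ i : Fin m,
    (Finset.univ.filter fun j : Fin n => (A t i j).isSome).card = s) ∧
  (∀ t : Fin c, ∀ j : Fin n,
    (Finset.univ.filter fun i : Fin m => (A t i j).isSome).card = k) ∧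
  ∃ ω δ : Γ,
    (∀ t : Fin c, ∀ i : Fin m, (∑ j : Fin n, (A t i j).getD 0) = ω) ∧
    (∀ t : Fin c, ∀ j : Fin n, (∑ i : Fin m, (A t i j).getD 0) = δ)

/-- The number of involutions (elements of additive order 2) of `Γ`. -/
noncomputable def numInvolutions (Γ : Type*) [AddMonoid Γ] : ℕ :=
  Nat.card {g : Γ // addOrderOf g = 2}

/-- If `n·c` is even and `k` is odd, then there is no `MRS_Γ(m,n;s,k;c)` whenever `Γ` is an
abelian group of order `n·k·c` having exactly one involution. -/
theorem stmt2 (m n s k c : ℕ) (hm : 0 < m) (hn : 0 < n) (hs : 0 < s) (hk : 0 < k)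
    (hc : 0 < c) (hnc : Even (n * c)) (hkodd : Odd k)
    (Γ : Type*) [AddCommGroup Γ] [Fintype Γ] (hcard : Fintype.card Γ = n * k * c)
    (hinv : numInvolutions Γ = 1) :
    ¬ ∃ A : Fin c → Fin m → Fin n → Option Γ, IsPartialMRS m n s k c A := by
  classical
  rintro ⟨A, hbij, hrow, hcol, ω, δ, hω, hδ⟩
  obtain ⟨⟨ι, hι2⟩, hιu⟩ := Nat.card_eq_one_iff_exists.mp hinv
  have hιuniq : ∀ g : Γ, addOrderOf g = 2 → g = ι := fun g hg =>
    congrArg Subtype.val (hιu ⟨g, hg⟩)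
  have hι0 : ι ≠ 0 := by
    intro h; rw [h, addOrderOf_zero] at hι2; omega
  have hιadd : ι + ι = 0 := by
    have h := addOrderOf_nsmul_eq_zero ι
    rwa [hι2, two_nsmul] at h
  haveI : Fact (Nat.Prime 2) := ⟨Nat.prime_two⟩
  have hchar : ∀ g : Γ, g + g = 0 ↔ g = 0 ∨ g = ι := by
    intro g
    constructor
    · intro h
      by_cases h0 : g = 0
      · exact Or.inl h0
      · exact Or.inr (hιuniq g (addOrderOf_eq_prime (by rwa [two_nsmul]) h0))
    · rintro (rfl | rfl)
      · simp
      · exact hιadd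
  -- Step 1: sum of all elements is ι
  have hS : (∑ g : Γ, g) = ι := by
    rw [← Finset.sum_filter_add_sum_filter_not Finset.univ (fun g : Γ => g + g = 0)]
    have h2 : ∑ g ∈ Finset.univ.filter (fun g : Γ => ¬(g + g = 0)), g = 0 := by
      refine Finset.sum_involution (fun a _ => -a) (fun a _ => add_neg_cancel a) ?_ ?_ ?_
      · intro a ha h heq
        apply (Finset.mem_filter.mp ha).2
        nth_rewrite 2 [← heq]
        exact add_neg_cancel a
      · intro a ha
        simp only [Finset.mem_filter, Finset.mem_univ, true_and] at ha ⊢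
        intro h
        apply ha
        have h' : -(a + a) = 0 := by rw [neg_add]; exact h
        exact neg_eq_zero.mp h'
      · intro a ha; simp
    have h3 : Finset.univ.filter (fun g : Γ => g + g = 0) = {0, ι} := by
      ext g
      simp [hchar g]
    rw [h2, h3, add_zero, Finset.sum_insert (by simpa using (Ne.symm hι0)),
      Finset.sum_singleton, zero_add]
  -- Step 2: total sum equals (c*n) • δ
  have htot : (∑ g : Γ, g) = (c * n) • δ := by
    have hb : (∑ p : Fin c × Fin m × Fin n, (A p.1 p.2.1 p.2.2).getD 0) = ∑ g : Γ, g := by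
      rw [← Finset.sum_filter_of_ne
        (p := fun p : Fin c × Fin m × Fin n => (A p.1 p.2.1 p.2.2).isSome)
        (fun p _ hne => by
          cases hA : A p.1 p.2.1 p.2.2 with
          | none => exact absurd (by rw [hA]; rfl) hne
          | some g => rfl)]
      refine Finset.sum_bij (fun p hp => (A p.1 p.2.1 p.2.2).get
        (by simpa using (Finset.mem_filter.mp hp).2)) (fun _ _ => Finset.mem_univ _) ?_ ?_ ?_
      · intro p hp q hq h
        obtain ⟨r, hr, hru⟩ := hbij ((A p.1 p.2.1 p.2.2).get
          (by simpa using (Finset.mem_filter.mp hp).2))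
        have hps : A p.1 p.2.1 p.2.2 = some ((A p.1 p.2.1 p.2.2).get
            (by simpa using (Finset.mem_filter.mp hp).2)) := (Option.some_get _).symm
        have hqs : A q.1 q.2.1 q.2.2 = some ((A p.1 p.2.1 p.2.2).get
            (by simpa using (Finset.mem_filter.mp hp).2)) := by
          rw [h]; exact (Option.some_get _).symm
        rw [hru p hps, hru q hqs]
      · intro g _
        obtain ⟨p, hp, -⟩ := hbij g
        refine ⟨p, Finset.mem_filter.mpr ⟨Finset.mem_univ _, by rw [hp]; rfl⟩, ?_⟩
        simp [hp]
      · intro p hp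
        exact (Option.get_eq_getD _).symm
    rw [← hb, Fintype.sum_prod_type]
    have key : ∀ t : Fin c, (∑ q : Fin m × Fin n, (A t q.1 q.2).getD 0) = n • δ := by
      intro t
      rw [Fintype.sum_prod_type, Finset.sum_comm]
      simp [hδ t, Finset.sum_const]
    calc (∑ t : Fin c, ∑ q : Fin m × Fin n, (A t q.1 q.2).getD 0)
        = ∑ _t : Fin c, n • δ := Finset.sum_congr rfl fun t _ => key t
      _ = (c * n) • δ := by
          rw [Finset.sum_const, Finset.card_univ, Fintype.card_fin, smul_smul]
  -- Step 3: order contradiction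
  have hιeq : ι = (c * n) • δ := hS ▸ htot
  have hcn : c * n ≠ 0 := Nat.mul_ne_zero hc.ne' hn.ne'
  have hord : addOrderOf ((c * n) • δ) = addOrderOf δ / Nat.gcd (addOrderOf δ) (c * n) :=
    addOrderOf_nsmul' δ hcn
  set d := addOrderOf δ with hd
  have hd0 : 0 < d := addOrderOf_pos δ
  have hdvd : d ∣ c * n * k := by
    have h := addOrderOf_dvd_card (x := δ)
    rw [hcard] at h
    have hcomm : n * k * c = c * n * k := by ring
    rwa [hcomm] at h
  set G := Nat.gcd d (c * n) with hG
  have hg0 : 0 < G := Nat.gcd_pos_of_pos_left _ hd0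
  have hgd : G ∣ d := Nat.gcd_dvd_left _ _
  have hgcn : G ∣ c * n := Nat.gcd_dvd_right _ _
  have hco : (d / G).Coprime ((c * n) / G) := Nat.coprime_div_gcd_div_gcd hg0
  have hek : d / G ∣ k := by
    have h1 : G * (d / G) ∣ G * ((c * n) / G * k) := by
      rw [Nat.mul_div_cancel' hgd, ← mul_assoc, Nat.mul_div_cancel' hgcn]
      exact hdvd
    have h2 : d / G ∣ (c * n) / G * k := (Nat.mul_dvd_mul_iff_left hg0).mp h1
    exact hco.dvd_of_dvd_mul_left h2
  have he2 : d / G = 2 := by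
    rw [← hord, ← hιeq, hι2]
  rw [he2] at hek
  rw [Nat.odd_iff] at hkodd
  omega
end

section
/- Let m,n,s,k,c be positive integers such that s is odd or k is odd, and let Γ be a finite abelian group of order n·k·c having exactly one involution. Then there is no Γ-magic rectangle set MRS_Γ(m,n;s,k;c). -/
open Finset

/-- In a finite abelian group, the elements of additive order > 2 cancel in pairs,
so the sum of all elements equals the sum over elements `g` with `2 • g = 0`. -/
lemma sum_univ_eq_sum_two_torsion (Γ : Type*) [AddCommGroup Γ] [Fintype Γ]
    [DecidableEq Γ] :
    (∑ g : Γ, g) = ∑ g ∈ Finset.univ.filter (fun g : Γ => 2 • g = 0), g := by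
  classical
  have h2 : (∑ g ∈ Finset.univ.filter (fun g : Γ => ¬ 2 • g = 0), g) = 0 := by
    refine Finset.sum_involution (fun g _ => -g) (fun a _ => add_neg_cancel a)
      (fun a ha hfa h => ?_) (fun a ha => ?_) (fun a ha => neg_neg a)
    · simp only [Finset.mem_filter, Finset.mem_univ, true_and] at ha
      have h' : -a = a := h
      apply ha
      rw [two_nsmul]
      nth_rewrite 1 [← h']
      exact neg_add_cancel a
    · simp only [Finset.mem_filter, Finset.mem_univ, true_and] at ha ⊢
      intro hcon
      apply ha
      have h' : (2 : ℕ) • a = -(2 • (-a)) := by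
        rw [two_nsmul, two_nsmul, neg_add, neg_neg]
      rw [h', hcon, neg_zero]
  have hsplit := Finset.sum_filter_add_sum_filter_not (Finset.univ : Finset Γ)
    (fun g : Γ => 2 • g = 0) (fun g => g)
  rw [← hsplit, h2, add_zero]

/-- The two-torsion elements of a group with exactly one involution are `0` and `ι`. -/
lemma two_torsion_eq {Γ : Type*} [AddCommGroup Γ] [Fintype Γ] [DecidableEq Γ]
    (ι : Γ) (hι : addOrderOf ι = 2) (huniq : ∀ g : Γ, addOrderOf g = 2 → g = ι) :
    Finset.univ.filter (fun g : Γ => 2 • g = 0) = {0, ι} := by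
  haveI : Fact (Nat.Prime 2) := ⟨Nat.prime_two⟩
  ext g
  simp only [Finset.mem_filter, Finset.mem_univ, true_and, Finset.mem_insert,
    Finset.mem_singleton]
  constructor
  · intro hg
    by_cases h0 : g = 0
    · exact Or.inl h0
    · exact Or.inr (huniq g (addOrderOf_eq_prime hg h0))
  · rintro (rfl | rfl)
    · simp
    · rw [← hι]
      exact addOrderOf_nsmul_eq_zero _

/-- If `s` or `k` is odd and `Γ` is an abelian group of order `n·k·c` having exactly one
involution, then there is no `MRS_Γ(m,n;s,k;c)`. -/
theorem stmt3 (m n s k c : ℕ) (hm : 0 < m) (hn : 0 < n) (hs : 0 < s) (hk : 0 < k)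
    (hc : 0 < c) (hodd : Odd s ∨ Odd k)
    (Γ : Type*) [AddCommGroup Γ] [Fintype Γ] (hcard : Fintype.card Γ = n * k * c)
    (hinv : numInvolutions Γ = 1) :
    ¬ ∃ A : Fin c → Fin m → Fin n → Option Γ, IsPartialMRS m n s k c A := by
  classical
  -- extract the unique involution ι
  rw [numInvolutions, Nat.card_eq_one_iff_unique] at hinv
  obtain ⟨hsub, ⟨⟨ι, hι2⟩⟩⟩ := hinv
  have huniqι : ∀ g : Γ, addOrderOf g = 2 → g = ι := by
    intro g hg
    have := hsub.allEq ⟨g, hg⟩ ⟨ι, hι2⟩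
    exact congrArg Subtype.val this
  have hι0 : ι ≠ 0 := by
    intro h
    rw [h, addOrderOf_zero] at hι2
    omega
  have h2ι : 2 • ι = 0 := by rw [← hι2]; exact addOrderOf_nsmul_eq_zero ι
  -- sum of all elements is ι
  have hsumι : (∑ g : Γ, g) = ι := by
    rw [sum_univ_eq_sum_two_torsion, two_torsion_eq ι hι2 huniqι,
      Finset.sum_pair (Ne.symm hι0), zero_add]
  -- odd multiples of ι equal ι
  have hodd_smul : ∀ r : ℕ, Odd r → r • ι = ι := by
    rintro r ⟨j, rfl⟩
    rw [add_smul, mul_comm, mul_smul, h2ι, smul_zero, zero_add, one_smul]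
  rintro ⟨A, huniq, hrow, hcol, ω, δ, hω, hδ⟩
  set f : Fin c × Fin m × Fin n → Γ := fun p => (A p.1 p.2.1 p.2.2).getD 0 with hf
  -- the cell containing each element
  have hex : ∀ g : Γ, ∃ p : Fin c × Fin m × Fin n, A p.1 p.2.1 p.2.2 = some g :=
    fun g => (huniq g).exists
  choose F hF using hex
  have hFinj : ∀ g₁ g₂ : Γ, F g₁ = F g₂ → g₁ = g₂ := by
    intro g₁ g₂ h
    have := hF g₁
    rw [h, hF g₂] at this
    exact (Option.some_injective Γ this).symm
  have hnone : ∀ p : Fin c × Fin m × Fin n, p ∉ Finset.univ.image F →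
      A p.1 p.2.1 p.2.2 = none := by
    intro p hp
    by_contra h
    obtain ⟨g, hg⟩ := Option.ne_none_iff_exists'.mp h
    have : p = F g := (huniq g).unique hg (hF g)
    exact hp (Finset.mem_image.mpr ⟨g, Finset.mem_univ g, this.symm⟩)
  -- the total sum of all entries equals the group sum
  have htot : (∑ p : Fin c × Fin m × Fin n, f p) = ι := by
    rw [← hsumι]
    have h1 : (∑ p ∈ Finset.univ.image F, f p) = ∑ p : Fin c × Fin m × Fin n, f p := by
      apply Finset.sum_subset (Finset.subset_univ _)
      intro p _ hp
      simp [hf, hnone p hp]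
    rw [← h1, Finset.sum_image (fun x _ y _ h => hFinj x y h)]
    apply Finset.sum_congr rfl
    intro g _
    simp [hf, hF g]
  -- row-wise total
  have hωtot : (∑ p : Fin c × Fin m × Fin n, f p) = (c * m) • ω := by
    rw [Fintype.sum_prod_type]
    have : ∀ t : Fin c, (∑ q : Fin m × Fin n, f (t, q)) = m • ω := by
      intro t
      rw [Fintype.sum_prod_type]
      have : ∀ i : Fin m, (∑ j : Fin n, f (t, i, j)) = ω := fun i => hω t i
      simp [this, Finset.sum_const, Finset.card_univ]
    simp [this, Finset.sum_const, Finset.card_univ, mul_smul]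
  -- column-wise total
  have hδtot : (∑ p : Fin c × Fin m × Fin n, f p) = (c * n) • δ := by
    rw [Fintype.sum_prod_type]
    have : ∀ t : Fin c, (∑ q : Fin m × Fin n, f (t, q)) = n • δ := by
      intro t
      rw [Fintype.sum_prod_type, Finset.sum_comm]
      have : ∀ j : Fin n, (∑ i : Fin m, f (t, i, j)) = δ := fun j => hδ t j
      simp [this, Finset.sum_const, Finset.card_univ]
    simp [this, Finset.sum_const, Finset.card_univ, mul_smul]
  -- double count filled cells: m * s = n * k
  have hms : m * s = n * k := by
    have t0 : Fin c := ⟨0, hc⟩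
    have h1 : (∑ i : Fin m, ∑ j : Fin n,
        (if (A t0 i j).isSome then 1 else 0 : ℕ)) = m * s := by
      have : ∀ i : Fin m, (∑ j : Fin n, (if (A t0 i j).isSome then 1 else 0 : ℕ)) = s := by
        intro i
        rw [← Finset.card_filter]
        exact hrow t0 i
      simp [this, Finset.sum_const, Finset.card_univ, mul_comm]
    have h2 : (∑ j : Fin n, ∑ i : Fin m,
        (if (A t0 i j).isSome then 1 else 0 : ℕ)) = n * k := by
      have : ∀ j : Fin n, (∑ i : Fin m, (if (A t0 i j).isSome then 1 else 0 : ℕ)) = k := by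
        intro j
        rw [← Finset.card_filter]
        exact hcol t0 j
      simp [this, Finset.sum_const, Finset.card_univ, mul_comm]
    rw [← h1, ← h2, Finset.sum_comm]
  -- conclude
  rcases hodd with hso | hko
  · have h1 : s • ι = (s * (c * m)) • ω := by
      rw [mul_smul, ← hωtot, htot]
    have h2 : s * (c * m) = n * k * c := by
      have : s * (c * m) = (m * s) * c := by ring
      rw [this, hms]
    rw [h2, ← hcard] at h1
    rw [hodd_smul s hso] at h1
    rw [card_nsmul_eq_zero] at h1
    exact hι0 h1
  · have h1 : k • ι = (k * (c * n)) • δ := by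
      rw [mul_smul, ← hδtot, htot]
    have h2 : k * (c * n) = n * k * c := by ring
    rw [h2, ← hcard] at h1
    rw [hodd_smul k hko] at h1
    rw [card_nsmul_eq_zero] at h1
    exact hι0 h1
end

section
/- Let m,n,s,c be positive integers with n·s odd, and let Γ be a finite abelian group of order 2·n·c. Then there is no Γ-magic rectangle set MRS_Γ(m,n;s,2;c). -/
open Finset

/-- Let `Γ` be an abelian group of order `2·n·c`. If `n·s` is odd, then there is no
`MRS_Γ(m,n;s,2;c)`. -/
theorem stmt4 (m n s c : ℕ) (hm : 0 < m) (hn : 0 < n) (hs : 0 < s) (hc : 0 < c)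
    (hodd : Odd (n * s))
    (Γ : Type*) [AddCommGroup Γ] [Fintype Γ] (hcard : Fintype.card Γ = 2 * n * c) :
    ¬ ∃ A : Fin c → Fin m → Fin n → Option Γ, IsPartialMRS m n s 2 c A := by
  rintro ⟨A, huniq, hrow, hcol, ω, δ, hrω, hcδ⟩
  obtain ⟨hnodd, hsodd⟩ := (Nat.odd_mul).mp hodd
  set t0 : Fin c := ⟨0, hc⟩ with ht0
  -- counting cells in array t0 two ways
  have hcount : m * s = n * 2 := by
    have h1 : ∑ i : Fin m, (univ.filter fun j : Fin n => (A t0 i j).isSome).card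
        = ∑ j : Fin n, (univ.filter fun i : Fin m => (A t0 i j).isSome).card := by
      simp only [Finset.card_filter]
      rw [Finset.sum_comm]
    simpa only [hrow t0, hcol t0, Finset.sum_const, Finset.card_univ, Fintype.card_fin,
      smul_eq_mul] using h1
  have hmeven : Even m := by
    have h2 : Even (m * s) := by rw [hcount]; exact ⟨n, by ring⟩
    rcases Nat.even_mul.mp h2 with h | h
    · exact h
    · exact (Nat.not_even_iff_odd.mpr hsodd h).elim
  -- summing array t0 two ways
  have hsum : m • ω = n • δ := by
    have h1 : ∑ i : Fin m, ∑ j : Fin n, (A t0 i j).getD 0 = m • ω := by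
      rw [Finset.sum_congr rfl fun i _ => hrω t0 i]; simp
    have h2 : ∑ j : Fin n, ∑ i : Fin m, (A t0 i j).getD 0 = n • δ := by
      rw [Finset.sum_congr rfl fun j _ => hcδ t0 j]; simp
    rw [← h1, ← h2, Finset.sum_comm]
  obtain ⟨q, hq⟩ := hmeven
  obtain ⟨r, hr⟩ := hnodd
  have hδ : δ = (q • ω - r • δ) + (q • ω - r • δ) := by
    rw [hq, hr, add_smul, add_smul, one_smul, two_mul, add_smul] at hsum
    rw [sub_add_sub_comm, hsum]
    abel
  set x : Γ := q • ω - r • δ with hx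
  obtain ⟨⟨t, i0, j⟩, hp, hpu⟩ := huniq x
  simp only at hp
  obtain ⟨a, b, hab, hF⟩ := Finset.card_eq_two.mp (hcol t j)
  have hi0 : i0 ∈ (univ.filter fun i : Fin m => (A t i j).isSome) := by
    simp [Finset.mem_filter, hp]
  rw [hF, Finset.mem_insert, Finset.mem_singleton] at hi0
  have ha : (A t a j).isSome := by
    have : a ∈ (univ.filter fun i : Fin m => (A t i j).isSome) := by rw [hF]; simp
    exact (Finset.mem_filter.mp this).2
  have hb : (A t b j).isSome := by
    have : b ∈ (univ.filter fun i : Fin m => (A t i j).isSome) := by rw [hF]; simp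
    exact (Finset.mem_filter.mp this).2
  have hsumcol : (A t a j).getD 0 + (A t b j).getD 0 = δ := by
    have h := hcδ t j
    have heq : ∑ i : Fin m, (A t i j).getD 0
        = ∑ i ∈ (univ.filter fun i : Fin m => (A t i j).isSome), (A t i j).getD 0 := by
      refine (Finset.sum_filter_of_ne fun i _ hne => ?_).symm
      cases h' : A t i j with
      | none => rw [h'] at hne; simp at hne
      | some v => simp [h']
    rw [heq, hF, Finset.sum_pair hab] at h
    exact h
  rcases hi0 with h0 | h0
  · -- i0 = a : the entry at a is x, so the entry at b is also x
    have hax : A t a j = some x := h0 ▸ hp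
    have hbx : A t b j = some x := by
      obtain ⟨y, hy⟩ := Option.isSome_iff_exists.mp hb
      rw [hax, hy] at hsumcol
      simp only [Option.getD_some] at hsumcol
      rw [hδ] at hsumcol
      rw [hy, add_left_cancel hsumcol]
    have := hpu (t, b, j) hbx
    rw [Prod.ext_iff, Prod.ext_iff] at this
    exact hab ((this.2.1.trans h0).symm)
  · -- i0 = b : symmetric
    have hbx : A t b j = some x := h0 ▸ hp
    have hax : A t a j = some x := by
      obtain ⟨y, hy⟩ := Option.isSome_iff_exists.mp ha
      rw [hbx, hy] at hsumcol
      simp only [Option.getD_some] at hsumcol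
      rw [add_comm] at hsumcol
      rw [hδ] at hsumcol
      rw [hy, add_left_cancel hsumcol]
    have := hpu (t, a, j) hax
    rw [Prod.ext_iff, Prod.ext_iff] at this
    exact hab (this.2.1.trans h0)
end

section
/- Let a ≥ 1 be an integer and let Ω be a subset of Z_{2a} such that every g ∈ Ω has order greater than 2 and −g ∈ Ω whenever g ∈ Ω. Let Ψ be a finite abelian group of order 2^α with α ≥ 2. Then there exists a collection of |Ω|/2 arrays of size 2 × 2^α with entries in Z_{2a} ⊕ Ψ such that in every array the sum of the entries of each row and of each column equals 0, and the entries of all the arrays taken together are, each exactly once, precisely the elements of the set {(x,y) : x ∈ Ω, y ∈ Ψ} ⊆ Z_{2a} ⊕ Ψ. -/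
open Finset

lemma pairing {X : Type*} [DecidableEq X] (f : X → X) :
    ∀ n : ℕ, ∀ s : Finset X, s.card = n →
    (∀ x ∈ s, f x ∈ s) → (∀ x ∈ s, f x ≠ x) → (∀ x ∈ s, f (f x) = x) →
    ∃ P : Fin (s.card / 2) × Bool → X,
      (∀ q, P q ∈ s) ∧ (∀ t, P (t, true) = f (P (t, false))) ∧
      Function.Injective P ∧ (∀ x ∈ s, ∃ q, P q = x) := by
  intro n
  induction n using Nat.strong_induction_on with
  | _ n ih =>
    intro s hcard h1 h2 h3
    rcases s.eq_empty_or_nonempty with rfl | ⟨x₀, hx₀⟩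
    · refine ⟨fun q => (by simpa using q.1.isLt : False).elim, ?_, ?_, ?_, ?_⟩
      · intro q; exact (by simpa using q.1.isLt : False).elim
      · intro t; exact (by simpa using t.isLt : False).elim
      · intro q; exact (by simpa using q.1.isLt : False).elim
      · intro x hx; simp at hx
    · have hfx₀s : f x₀ ∈ s := h1 x₀ hx₀
      have hfx₀ne : f x₀ ≠ x₀ := h2 x₀ hx₀
      set s' : Finset X := (s.erase x₀).erase (f x₀) with hs'
      have hmem' : ∀ x, x ∈ s' ↔ x ∈ s ∧ x ≠ x₀ ∧ x ≠ f x₀ := by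
        intro x; simp [hs', Finset.mem_erase]; tauto
      have hcard' : s'.card + 2 = s.card := by
        have h1' : (s.erase x₀).card + 1 = s.card := Finset.card_erase_add_one hx₀
        have h2' : s'.card + 1 = (s.erase x₀).card :=
          Finset.card_erase_add_one (Finset.mem_erase.mpr ⟨hfx₀ne, hfx₀s⟩)
        omega
      have hlt : s'.card < n := by omega
      set k := s'.card / 2 with hkdef
      obtain ⟨P', hP'mem, hP'pair, hP'inj, hP'surj⟩ :=
        ih s'.card hlt s' rfl
          (fun x hx => by
            rw [hmem'] at hx ⊢
            refine ⟨h1 x hx.1, ?_, ?_⟩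
            · intro h; apply hx.2.2; rw [← h, h3 x hx.1]
            · intro h; apply hx.2.1
              have := congrArg f h
              rwa [h3 x hx.1, h3 x₀ hx₀] at this)
          (fun x hx => h2 x ((hmem' x).mp hx).1)
          (fun x hx => h3 x ((hmem' x).mp hx).1)
      have hk : s.card / 2 = k + 1 := by omega
      have hcast : ∀ q : Fin (s.card / 2) × Bool, (q.1 : ℕ) < k + 1 := by
        intro q; have := q.1.isLt; omega
      refine ⟨fun q => if h : (q.1 : ℕ) < k then P' (⟨q.1, h⟩, q.2)
          else (if q.2 then f x₀ else x₀), ?_, ?_, ?_, ?_⟩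
      · intro q
        by_cases h : (q.1 : ℕ) < k
        · simp only [dif_pos h]
          exact ((hmem' _).mp (hP'mem _)).1
        · simp only [dif_neg h]
          by_cases hb : q.2 <;> simp [hb, hx₀, hfx₀s]
      · intro t
        by_cases h : (t : ℕ) < k
        · simp only [dif_pos h]; exact hP'pair _
        · simp only [dif_neg h, if_pos, if_neg]; simp
      · intro q q' he
        by_cases h : (q.1 : ℕ) < k <;> by_cases h' : (q'.1 : ℕ) < k
        · simp only [dif_pos h, dif_pos h'] at he
          have := hP'inj he
          have h1 : (q.1 : ℕ) = q'.1 := by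
            have := congrArg (fun p => ((p.1 : Fin k) : ℕ)) this; simpa using this
          have h2 : q.2 = q'.2 := (Prod.ext_iff.mp this).2
          exact Prod.ext (Fin.ext h1) h2
        · exfalso
          simp only [dif_pos h, dif_neg h'] at he
          have hm := (hmem' _).mp (hP'mem (⟨q.1, h⟩, q.2))
          by_cases hb : q'.2 <;> simp [hb] at he <;> [exact hm.2.2 he; exact hm.2.1 he]
        · exfalso
          simp only [dif_neg h, dif_pos h'] at he
          have hm := (hmem' _).mp (hP'mem (⟨q'.1, h'⟩, q'.2))
          by_cases hb : q.2 <;> simp [hb] at he <;> [exact hm.2.2 he.symm; exact hm.2.1 he.symm]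
        · have hq1 : (q.1 : ℕ) = q'.1 := by
            have := hcast q; have := hcast q'; omega
          simp only [dif_neg h, dif_neg h'] at he
          have hq2 : q.2 = q'.2 := by
            by_cases hb : q.2 <;> by_cases hb' : q'.2 <;> simp [hb, hb'] at he ⊢
            · exact hfx₀ne he
            · exact hfx₀ne he.symm
          exact Prod.ext (Fin.ext hq1) hq2
      · intro x hx
        by_cases hx1 : x = x₀
        · refine ⟨(⟨k, by omega⟩, false), ?_⟩
          simp [hx1]
        · by_cases hx2 : x = f x₀
          · refine ⟨(⟨k, by omega⟩, true), ?_⟩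
            simp [hx2]
          · obtain ⟨⟨t, b⟩, hq⟩ := hP'surj x ((hmem' x).mpr ⟨hx, hx1, hx2⟩)
            refine ⟨(⟨(t : ℕ), by omega⟩, b), ?_⟩
            have ht : ((t : ℕ)) < k := t.isLt
            simp only [dif_pos ht]
            simpa using hq

/-- Let `Ω ⊆ Z_{2a}` be such that every `g ∈ Ω` has order `> 2` and `-g ∈ Ω` whenever
`g ∈ Ω`. Let `Ψ` be an abelian group of order `2^α` with `α ≥ 2`. Then there exists a set of
`|Ω|/2` zero-sum blocks of size `2 × 2^α` whose entries are exactly the elements of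
`{(x,y) : x ∈ Ω, y ∈ Ψ} ⊆ Z_{2a} ⊕ Ψ`, each appearing once and in a unique block. -/
theorem stmt6 (a : ℕ) (ha : 1 ≤ a) (Ω : Finset (ZMod (2 * a)))
    (hΩ : ∀ g ∈ Ω, 2 < addOrderOf g ∧ -g ∈ Ω)
    (α : ℕ) (hα : 2 ≤ α) (Ψ : Type*) [AddCommGroup Ψ] [Fintype Ψ]
    (hΨ : Fintype.card Ψ = 2 ^ α) :
    ∃ T : Fin (Ω.card / 2) → Fin 2 → Fin (2 ^ α) → ZMod (2 * a) × Ψ,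
      (∀ t : Fin (Ω.card / 2), ∀ i : Fin 2, (∑ j : Fin (2 ^ α), T t i j) = 0) ∧
      (∀ t : Fin (Ω.card / 2), ∀ j : Fin (2 ^ α), (∑ i : Fin 2, T t i j) = 0) ∧
      (∀ t i j, (T t i j).1 ∈ Ω) ∧
      (∀ p : ZMod (2 * a) × Ψ, p.1 ∈ Ω →
        ∃! q : Fin (Ω.card / 2) × Fin 2 × Fin (2 ^ α), T q.1 q.2.1 q.2.2 = p) := by
  classical
  have h01 : ¬((0 : Fin 2) = 1) := by decide
  -- pairing of Ω under negation
  obtain ⟨P, hPmem, hPpair, hPinj, hPsurj⟩ :=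
    pairing (fun x : ZMod (2 * a) => -x) Ω.card Ω rfl
      (fun x hx => (hΩ x hx).2)
      (fun x hx => by
        intro h
        have h' : -x = x := h
        have hxx : x + x = 0 := by
          nth_rewrite 1 [← h']
          exact neg_add_cancel x
        have h2 : (2 : ℕ) • x = 0 := by rw [two_nsmul]; exact hxx
        have := Nat.le_of_dvd (by norm_num) (addOrderOf_dvd_of_nsmul_eq_zero h2)
        have := (hΩ x hx).1
        omega)
      (fun x _ => neg_neg x)
  -- an element of order 2 in Ψ
  haveI : Fact (Nat.Prime 2) := ⟨Nat.prime_two⟩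
  obtain ⟨z, hz⟩ := exists_prime_addOrderOf_dvd_card (G := Ψ) 2
    (by rw [hΨ]; exact dvd_pow_self 2 (by omega))
  have hz2 : z + z = 0 := by
    have := addOrderOf_nsmul_eq_zero z
    rw [hz, two_nsmul] at this
    exact this
  have hzne : z ≠ 0 := by
    intro h
    rw [h, addOrderOf_zero] at hz
    omega
  set H := AddSubgroup.zmultiples z with hH
  have memH : ∀ w : Ψ, w ∈ H → w = 0 ∨ w = z := by
    intro w hw
    obtain ⟨n, hn⟩ := AddSubgroup.mem_zmultiples_iff.mp hw
    rcases Int.even_or_odd n with ⟨m, hm⟩ | ⟨m, hm⟩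
    · left
      rw [← hn, hm, add_zsmul, ← zsmul_add, hz2, smul_zero]
    · right
      have h2m : (2 * m) • z = 0 := by
        rw [two_mul, add_zsmul, ← zsmul_add, hz2, smul_zero]
      rw [← hn, hm, add_zsmul, h2m, one_zsmul, zero_add]
  have hzH : z ∈ H := AddSubgroup.mem_zmultiples z
  -- the transversal A
  set A : Finset Ψ := Finset.univ.image (fun q : Ψ ⧸ H => q.out) with hAdef
  have houtA : ∀ q : Ψ ⧸ H, q.out ∈ A := fun q => Finset.mem_image_of_mem _ (Finset.mem_univ q)
  have hA : ∀ y : Ψ, y ∈ A ↔ ((y : Ψ ⧸ H)).out = y := by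
    intro y
    constructor
    · intro hy
      obtain ⟨q, _, hq⟩ := Finset.mem_image.mp hy
      rw [← hq]
      congr 1
      exact QuotientAddGroup.out_eq' q
    · intro h
      rw [← h]; exact houtA _
  have key1 : ∀ y ∈ A, y + z ∉ A := by
    intro y hy hyz
    have h1 : ((y : Ψ ⧸ H)).out = y := (hA y).mp hy
    have h2 : (((y + z : Ψ) : Ψ ⧸ H)).out = y + z := (hA _).mp hyz
    have hmk : ((y + z : Ψ) : Ψ ⧸ H) = (y : Ψ ⧸ H) := by
      rw [QuotientAddGroup.eq]
      have : -(y + z) + y = -z := by abel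
      rw [this]
      exact neg_mem hzH
    rw [hmk, h1] at h2
    exact hzne (by linear_combination (norm := abel) h2.symm)
  have key2 : ∀ y : Ψ, y ∉ A → ∃ x ∈ A, y = x + z := by
    intro y hy
    refine ⟨((y : Ψ ⧸ H)).out, houtA _, ?_⟩
    have hmem : -((y : Ψ ⧸ H)).out + y ∈ H := by
      rw [← QuotientAddGroup.eq]
      exact QuotientAddGroup.out_eq' _
    rcases memH _ hmem with h0 | hzz
    · exfalso
      apply hy
      rw [hA]
      have : ((y : Ψ ⧸ H)).out = y := by
        have := congrArg (fun w => ((y : Ψ ⧸ H)).out + w) h0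
        simpa using this.symm
      exact this
    · have := congrArg (fun w => ((y : Ψ ⧸ H)).out + w) hzz
      simpa using this
  have hcompl : Aᶜ = A.image (· + z) := by
    ext y
    simp only [Finset.mem_compl, Finset.mem_image]
    constructor
    · intro hy
      obtain ⟨x, hx, hxy⟩ := key2 y hy
      exact ⟨x, hx, hxy.symm⟩
    · rintro ⟨x, hx, rfl⟩
      exact key1 x hx
  have hinj : Function.Injective (· + z : Ψ → Ψ) := fun u v h => by
    simpa using congrArg (fun w => w + -z) h
  have hcardc : Aᶜ.card = A.card := by
    rw [hcompl, Finset.card_image_of_injective _ hinj]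
  have hcards : A.card + Aᶜ.card = 2 ^ α := by
    rw [Finset.card_add_card_compl, hΨ]
  have hpow : (2:ℕ) ^ α = 2 ^ (α - 1) * 2 := by
    rw [← pow_succ]
    congr 1
    omega
  have hcardA : A.card = 2 ^ (α - 1) := by omega
  have hcardAc : Aᶜ.card = 2 ^ (α - 1) := by omega
  have hsmulz : (2 ^ (α - 1)) • z = 0 := by
    have h2z : (2:ℕ) • z = 0 := by rw [two_nsmul]; exact hz2
    rw [← Nat.sub_add_cancel (show 1 ≤ α - 1 by omega), pow_succ, mul_smul, h2z, smul_zero]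
  have hsumA : ∑ y ∈ Aᶜ, (y : Ψ) = ∑ y ∈ A, y := by
    rw [hcompl, Finset.sum_image (fun u _ v _ h => hinj h)]
    rw [Finset.sum_add_distrib, Finset.sum_const, hcardA, hsmulz, add_zero]
  -- the column-index equivalence
  set e : Fin (2 ^ α) ≃ Ψ := (Fintype.equivFinOfCardEq hΨ).symm with he
  have hf1 : Finset.univ.filter (fun y : Ψ => y ∈ A) = A := by ext y; simp
  have hf2 : Finset.univ.filter (fun y : Ψ => ¬ y ∈ A) = Aᶜ := by ext y; simp
  have hrow : ∀ u v : ZMod (2 * a), u + v = 0 →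
      ∑ y : Ψ, (if y ∈ A then ((u, y) : ZMod (2 * a) × Ψ) else (v, -y)) = 0 := by
    intro u v huv
    rw [Finset.sum_ite, hf1, hf2]
    refine Prod.ext ?_ ?_
    · simp only [Prod.fst_add, Prod.fst_sum, Prod.fst_zero]
      rw [Finset.sum_const, Finset.sum_const, hcardA, hcardAc, ← smul_add, huv, smul_zero]
    · simp only [Prod.snd_add, Prod.snd_sum, Prod.snd_zero]
      rw [Finset.sum_neg_distrib, hsumA, add_neg_cancel]
  have hrow' : ∀ u v : ZMod (2 * a), u + v = 0 →
      ∑ y : Ψ, (if y ∈ A then ((u, -y) : ZMod (2 * a) × Ψ) else (v, y)) = 0 := by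
    intro u v huv
    rw [Finset.sum_ite, hf1, hf2]
    refine Prod.ext ?_ ?_
    · simp only [Prod.fst_add, Prod.fst_sum, Prod.fst_zero]
      rw [Finset.sum_const, Finset.sum_const, hcardA, hcardAc, ← smul_add, huv, smul_zero]
    · simp only [Prod.snd_add, Prod.snd_sum, Prod.snd_zero]
      rw [Finset.sum_neg_distrib, hsumA, neg_add_cancel]
  have hfin2 : ∀ i : Fin 2, i = 0 ∨ i = 1 := by decide
  refine ⟨fun t i j => if ((i : Fin 2) = 1 ↔ e j ∈ A)
      then (P (t, true), -(e j)) else (P (t, false), e j), ?_, ?_, ?_, ?_⟩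
  · -- row sums
    intro t i
    rcases hfin2 i with rfl | rfl
    · have hstep : ∀ j : Fin (2 ^ α),
          (if ((0 : Fin 2) = 1 ↔ e j ∈ A) then ((P (t, true), -(e j)) : ZMod (2 * a) × Ψ)
            else (P (t, false), e j))
          = (fun y : Ψ => if y ∈ A then ((P (t, false), y) : ZMod (2 * a) × Ψ)
            else (P (t, true), -y)) (e j) := by
        intro j
        by_cases hy : e j ∈ A <;> simp [hy, h01]
      exact (Finset.sum_congr rfl (fun j _ => hstep j)).trans
        ((Equiv.sum_comp e _).trans
          (hrow _ _ (by rw [hPpair]; exact add_neg_cancel _)))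
    · have hstep : ∀ j : Fin (2 ^ α),
          (if ((1 : Fin 2) = 1 ↔ e j ∈ A) then ((P (t, true), -(e j)) : ZMod (2 * a) × Ψ)
            else (P (t, false), e j))
          = (fun y : Ψ => if y ∈ A then ((P (t, true), -y) : ZMod (2 * a) × Ψ)
            else (P (t, false), y)) (e j) := by
        intro j
        by_cases hy : e j ∈ A <;> simp [hy]
      exact (Finset.sum_congr rfl (fun j _ => hstep j)).trans
        ((Equiv.sum_comp e _).trans
          (hrow' _ _ (by rw [hPpair]; exact neg_add_cancel _)))
  · -- column sums
    intro t j
    rw [Fin.sum_univ_two]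
    by_cases hy : e j ∈ A
    · simp [hy, h01, hPpair, Prod.ext_iff]
    · simp [hy, h01, hPpair, Prod.ext_iff]
  · -- membership
    intro t i j
    dsimp only
    split_ifs
    · exact hPmem _
    · exact hPmem _
  · -- bijectivity
    rintro ⟨x, w⟩ hp
    obtain ⟨⟨t₀, b₀⟩, hP0⟩ := hPsurj x hp
    cases b₀ with
    | false =>
      refine ⟨(t₀, if w ∈ A then 0 else 1, e.symm w), ?_, ?_⟩
      · dsimp only
        rw [Equiv.apply_symm_apply]
        by_cases hyA : w ∈ A
        · rw [if_pos hyA, if_neg (fun h => h01 (h.mpr hyA)), hP0]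
        · rw [if_neg hyA, if_neg (fun h => hyA (h.mp rfl)), hP0]
      · rintro ⟨t, i, j⟩ hq
        dsimp only at hq
        by_cases hc : ((i : Fin 2) = 1 ↔ e j ∈ A)
        · exfalso
          rw [if_pos hc] at hq
          have hq1 : P (t, true) = x := congrArg Prod.fst hq
          have := hPinj (hq1.trans hP0.symm)
          simpa using congrArg Prod.snd this
        · rw [if_neg hc] at hq
          have hq1 : P (t, false) = x := congrArg Prod.fst hq
          have hq2 : e j = w := congrArg Prod.snd hq
          have hpair := hPinj (hq1.trans hP0.symm)
          have ht : t = t₀ := congrArg Prod.fst hpair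
          have hj : j = e.symm w := by rw [← hq2, Equiv.symm_apply_apply]
          have hi : i = if w ∈ A then 0 else 1 := by
            by_cases hyA : w ∈ A
            · rw [if_pos hyA]
              rcases hfin2 i with rfl | rfl
              · rfl
              · exact absurd (Iff.intro (fun _ => hq2 ▸ hyA) (fun _ => rfl)) hc
            · rw [if_neg hyA]
              rcases hfin2 i with rfl | rfl
              · exact absurd (Iff.intro (fun h => absurd h h01)
                  (fun h => absurd (hq2 ▸ h) hyA)) hc
              · rfl
          rw [ht, hi, hj]
    | true =>
      refine ⟨(t₀, if (-w) ∈ A then 1 else 0, e.symm (-w)), ?_, ?_⟩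
      · dsimp only
        rw [Equiv.apply_symm_apply]
        by_cases hyA : (-w) ∈ A
        · rw [if_pos hyA, if_pos (Iff.intro (fun _ => hyA) (fun _ => rfl)), hP0, neg_neg]
        · rw [if_neg hyA,
            if_pos (Iff.intro (fun h => absurd h h01) (fun h => absurd h hyA)), hP0, neg_neg]
      · rintro ⟨t, i, j⟩ hq
        dsimp only at hq
        by_cases hc : ((i : Fin 2) = 1 ↔ e j ∈ A)
        · rw [if_pos hc] at hq
          have hq1 : P (t, true) = x := congrArg Prod.fst hq
          have hq2 : -(e j) = w := congrArg Prod.snd hq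
          have hq2' : e j = -w := by rw [← hq2, neg_neg]
          have hpair := hPinj (hq1.trans hP0.symm)
          have ht : t = t₀ := congrArg Prod.fst hpair
          have hj : j = e.symm (-w) := by rw [← hq2', Equiv.symm_apply_apply]
          have hi : i = if (-w) ∈ A then 1 else 0 := by
            by_cases hyA : (-w) ∈ A
            · rw [if_pos hyA]
              exact hc.mpr (hq2' ▸ hyA)
            · rw [if_neg hyA]
              rcases hfin2 i with rfl | rfl
              · rfl
              · exact absurd (hq2' ▸ hc.mp rfl) hyA
          rw [ht, hi, hj]
        · exfalso
          rw [if_neg hc] at hq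
          have hq1 : P (t, false) = x := congrArg Prod.fst hq
          have := hPinj (hq1.trans hP0.symm)
          simpa using congrArg Prod.snd this
end

section
/- Let r ≥ 3 be an odd integer and let Γ = Z_{4r} ⊕ Z_4. Then there exists a zero-sum Γ-magic rectangle set MRS_Γ(r,8;2). -/
open Finset

/-- A zero-sum Γ-magic rectangle set `MRS_Γ(a,b;c)`. -/
def IsZeroSumFullMRS {Γ : Type*} [AddCommGroup Γ] (a b c : ℕ)
    (A : Fin c → Fin a → Fin b → Γ) : Prop :=
  (Function.Bijective fun p : Fin c × Fin a × Fin b => A p.1 p.2.1 p.2.2) ∧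
  (∀ t : Fin c, ∀ i : Fin a, (∑ j : Fin b, A t i j) = 0) ∧
  (∀ t : Fin c, ∀ j : Fin b, (∑ i : Fin a, A t i j) = 0)

abbrev G4 : Type := ZMod 4 × ZMod 4

def patQ : Fin 2 → Fin 8 → G4 := ![![((0 : ZMod 4), (0 : ZMod 4)), ((0 : ZMod 4), (1 : ZMod 4)), ((0 : ZMod 4), (2 : ZMod 4)), ((1 : ZMod 4), (0 : ZMod 4)), ((0 : ZMod 4), (3 : ZMod 4)), ((2 : ZMod 4), (1 : ZMod 4)), ((2 : ZMod 4), (2 : ZMod 4)), ((3 : ZMod 4), (3 : ZMod 4))],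
  ![((1 : ZMod 4), (1 : ZMod 4)), ((1 : ZMod 4), (2 : ZMod 4)), ((1 : ZMod 4), (3 : ZMod 4)), ((2 : ZMod 4), (0 : ZMod 4)), ((2 : ZMod 4), (3 : ZMod 4)), ((3 : ZMod 4), (0 : ZMod 4)), ((3 : ZMod 4), (1 : ZMod 4)), ((3 : ZMod 4), (2 : ZMod 4))]]

def pat2 : Fin 2 → Fin 8 → G4 := ![![((0 : ZMod 4), (1 : ZMod 4)), ((1 : ZMod 4), (0 : ZMod 4)), ((0 : ZMod 4), (0 : ZMod 4)), ((3 : ZMod 4), (0 : ZMod 4)), ((3 : ZMod 4), (2 : ZMod 4)), ((3 : ZMod 4), (3 : ZMod 4)), ((0 : ZMod 4), (3 : ZMod 4)), ((2 : ZMod 4), (3 : ZMod 4))],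
  ![((2 : ZMod 4), (1 : ZMod 4)), ((1 : ZMod 4), (2 : ZMod 4)), ((2 : ZMod 4), (0 : ZMod 4)), ((0 : ZMod 4), (2 : ZMod 4)), ((1 : ZMod 4), (1 : ZMod 4)), ((1 : ZMod 4), (3 : ZMod 4)), ((2 : ZMod 4), (2 : ZMod 4)), ((3 : ZMod 4), (1 : ZMod 4))]]

def pat03 : Fin 2 → Fin 8 → G4 := ![![((0 : ZMod 4), (3 : ZMod 4)), ((3 : ZMod 4), (3 : ZMod 4)), ((0 : ZMod 4), (2 : ZMod 4)), ((0 : ZMod 4), (0 : ZMod 4)), ((1 : ZMod 4), (3 : ZMod 4)), ((3 : ZMod 4), (0 : ZMod 4)), ((2 : ZMod 4), (3 : ZMod 4)), ((3 : ZMod 4), (2 : ZMod 4))],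
  ![((1 : ZMod 4), (2 : ZMod 4)), ((2 : ZMod 4), (0 : ZMod 4)), ((1 : ZMod 4), (1 : ZMod 4)), ((2 : ZMod 4), (2 : ZMod 4)), ((1 : ZMod 4), (0 : ZMod 4)), ((0 : ZMod 4), (1 : ZMod 4)), ((3 : ZMod 4), (1 : ZMod 4)), ((2 : ZMod 4), (1 : ZMod 4))]]

def pat01 : Fin 2 → Fin 8 → G4 := ![![((0 : ZMod 4), (3 : ZMod 4)), ((3 : ZMod 4), (1 : ZMod 4)), ((0 : ZMod 4), (2 : ZMod 4)), ((2 : ZMod 4), (0 : ZMod 4)), ((1 : ZMod 4), (1 : ZMod 4)), ((3 : ZMod 4), (2 : ZMod 4)), ((2 : ZMod 4), (3 : ZMod 4)), ((1 : ZMod 4), (0 : ZMod 4))],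
  ![((3 : ZMod 4), (0 : ZMod 4)), ((0 : ZMod 4), (0 : ZMod 4)), ((3 : ZMod 4), (3 : ZMod 4)), ((2 : ZMod 4), (2 : ZMod 4)), ((1 : ZMod 4), (2 : ZMod 4)), ((2 : ZMod 4), (1 : ZMod 4)), ((1 : ZMod 4), (3 : ZMod 4)), ((0 : ZMod 4), (1 : ZMod 4))]]

def epsZ : Fin 2 → Fin 8 → ℤ := ![![1, 1, 1, 1, -1, -1, -1, -1], ![-1, 1, 1, 1, -1, 1, -1, -1]]

def TS : Finset G4 := {((0 : ZMod 4), (0 : ZMod 4)), ((0 : ZMod 4), (1 : ZMod 4)), ((0 : ZMod 4), (2 : ZMod 4)), ((1 : ZMod 4), (0 : ZMod 4)), ((1 : ZMod 4), (2 : ZMod 4)), ((1 : ZMod 4), (3 : ZMod 4)), ((2 : ZMod 4), (0 : ZMod 4)), ((3 : ZMod 4), (0 : ZMod 4))}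

def sgn (g : G4) : ℤ := if g ∈ TS then 1 else -1

def pat0 (c : ℕ) : Fin 2 → Fin 8 → G4 := if c = 3 then pat03 else pat01

def hpart (c n : ℕ) (t : Fin 2) (j : Fin 8) : G4 :=
  if n = 0 then pat0 c t j else if n = 2 then pat2 t j else patQ t j

lemma injQ : Function.Injective (fun s : Fin 2 × Fin 8 => patQ s.1 s.2) := by decide
lemma inj2 : Function.Injective (fun s : Fin 2 × Fin 8 => pat2 s.1 s.2) := by decide
lemma inj03 : Function.Injective (fun s : Fin 2 × Fin 8 => pat03 s.1 s.2) := by decide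
lemma inj01 : Function.Injective (fun s : Fin 2 × Fin 8 => pat01 s.1 s.2) := by decide
lemma sgnQ : ∀ t j, sgn (patQ t j) = epsZ t j := by decide
lemma sgn2 : ∀ t j, sgn (pat2 t j) = epsZ t j := by decide
lemma eps_pm : ∀ t j, epsZ t j = 1 ∨ epsZ t j = -1 := by decide
lemma rowQ : ∀ t, ∑ j : Fin 8, patQ t j = 0 := by decide
lemma row2 : ∀ t, ∑ j : Fin 8, pat2 t j = 0 := by decide
lemma row03 : ∀ t, ∑ j : Fin 8, pat03 t j = 0 := by decide
lemma row01 : ∀ t, ∑ j : Fin 8, pat01 t j = 0 := by decide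
lemma rowEps : ∀ t, ∑ j : Fin 8, epsZ t j = 0 := by decide
lemma col3 : ∀ t j, pat03 t j + patQ t j + pat2 t j = 0 := by decide
lemma col1 : ∀ t j, pat01 t j + patQ t j + pat2 t j + (patQ t j + patQ t j) = 0 := by decide
lemma four_add : ∀ g : G4, g + g + g + g = 0 := by decide

lemma four_nsmul : ∀ g : G4, (4 : ℕ) • g = 0 := by decide

lemma sum_prodmk {ι M N : Type*} [AddCommMonoid M] [AddCommMonoid N] (s : Finset ι)
    (f : ι → M) (g : ι → N) :
    ∑ i ∈ s, (f i, g i) = (∑ i ∈ s, f i, ∑ i ∈ s, g i) := by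
  classical
  refine Prod.ext_iff.mpr ⟨?_, ?_⟩
  · rw [Prod.fst_sum]
  · rw [Prod.snd_sum]

/-- Let `r ≥ 3` be an odd integer and let `Γ = Z_{4r} ⊕ Z_4`. Then there exists a zero-sum
`MRS_Γ(r,8;2)`. -/
theorem stmt7 (r : ℕ) (hr : 3 ≤ r) (hodd : Odd r) :
    ∃ A : Fin 2 → Fin r → Fin 8 → ZMod (4 * r) × ZMod 4,
      IsZeroSumFullMRS r 8 2 A := by
  haveI : NeZero r := ⟨by omega⟩
  haveI : NeZero (4 * r) := ⟨by omega⟩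
  have cop : Nat.Coprime 4 r := by
    have h2 : Nat.Coprime 2 r := (Nat.Prime.coprime_iff_not_dvd Nat.prime_two).mpr
      (by have := Nat.odd_iff.mp hodd; omega)
    have h4 := Nat.Coprime.pow_left 2 h2
    norm_num at h4
    exact h4
  set E := ZMod.chineseRemainder cop with hE
  have hrc : r % 4 = 1 ∨ r % 4 = 3 := by
    have := Nat.odd_iff.mp hodd
    omega
  have valeq : ∀ a b : Fin r, ((a.1 : ℕ) : ZMod r) = ((b.1 : ℕ) : ZMod r) → a = b := by
    intro a b h
    have := congrArg ZMod.val h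
    rw [ZMod.val_cast_of_lt a.isLt, ZMod.val_cast_of_lt b.isLt] at this
    exact Fin.ext this
  have valz : ∀ a : Fin r, ((a.1 : ℕ) : ZMod r) = 0 → a.1 = 0 := by
    intro a h
    have := congrArg ZMod.val h
    rw [ZMod.val_cast_of_lt a.isLt, ZMod.val_zero] at this
    exact this
  refine ⟨fun t i j =>
    (E.symm ((hpart (r % 4) i.1 t j).1, epsZ t j • ((i.1 : ℕ) : ZMod r)),
      (hpart (r % 4) i.1 t j).2),
    ?_, ?_, ?_⟩
  · -- bijectivity
    rw [Fintype.bijective_iff_injective_and_card]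
    constructor
    · rintro ⟨t, i, j⟩ ⟨t', i', j'⟩ hpq
      simp only [Prod.mk.injEq] at hpq ⊢
      obtain ⟨h1', h2'⟩ := hpq
      have h1 : ((hpart (r % 4) i.1 t j).1, epsZ t j • ((i.1 : ℕ) : ZMod r))
          = ((hpart (r % 4) i'.1 t' j').1, epsZ t' j' • ((i'.1 : ℕ) : ZMod r)) :=
        E.symm.injective h1'
      rw [Prod.mk.injEq] at h1
      obtain ⟨h1f, hu⟩ := h1
      have hh : hpart (r % 4) i.1 t j = hpart (r % 4) i'.1 t' j' :=
        Prod.ext_iff.mpr ⟨h1f, h2'⟩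
      have hueq : epsZ t j = epsZ t' j' → i = i' := by
        intro he
        rw [← he] at hu
        apply valeq
        rcases eps_pm t j with h | h <;> rw [h] at hu
        · simpa [one_smul] using hu
        · have h2 : -((i.1 : ℕ) : ZMod r) = -((i'.1 : ℕ) : ZMod r) := by
            simpa [neg_smul, one_smul] using hu
          exact neg_inj.mp h2
      by_cases hi0 : i.1 = 0 <;> by_cases hi0' : i'.1 = 0
      · -- both row 0
        have hieq : i = i' := Fin.ext (hi0.trans hi0'.symm)
        subst hieq
        have hh0 : pat0 (r % 4) t j = pat0 (r % 4) t' j' := by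
          simpa [hpart, hi0] using hh
        have hst : ((t, j) : Fin 2 × Fin 8) = (t', j') := by
          rcases hrc with h | h <;> rw [h] at hh0
          · simp only [pat0, show (1 : ℕ) ≠ 3 from by omega, if_neg, if_false] at hh0
            exact @inj01 (t,j) (t',j') hh0
          · simp only [pat0, if_pos rfl] at hh0
            exact @inj03 (t,j) (t',j') hh0
        injection hst with ht hj
        exact ⟨ht, rfl, hj⟩
      · exfalso
        rw [hi0] at hu
        simp only [Nat.cast_zero, smul_zero] at hu
        have hz : ((i'.1 : ℕ) : ZMod r) = 0 := by
          rcases eps_pm t' j' with h | h <;> rw [h] at hu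
          · simpa [one_smul] using hu.symm
          · have h2 := hu.symm
            simp only [neg_smul, one_smul] at h2
            simpa using (neg_eq_zero.mp h2)
        exact hi0' (valz _ hz)
      · exfalso
        rw [hi0'] at hu
        simp only [Nat.cast_zero, smul_zero] at hu
        have hz : ((i.1 : ℕ) : ZMod r) = 0 := by
          rcases eps_pm t j with h | h <;> rw [h] at hu
          · simpa [one_smul] using hu
          · simp only [neg_smul, one_smul] at hu
            simpa using (neg_eq_zero.mp hu)
        exact hi0 (valz _ hz)
      · by_cases hi2 : i.1 = 2 <;> by_cases hi2' : i'.1 = 2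
        · have hieq : i = i' := Fin.ext (hi2.trans hi2'.symm)
          subst hieq
          simp only [hpart, if_neg hi0, if_pos hi2] at hh
          have hst := @inj2 (t,j) (t',j') hh
          injection hst with ht hj
          exact ⟨ht, rfl, hj⟩
        · exfalso
          simp only [hpart, if_neg hi0, if_neg hi0', if_pos hi2, if_neg hi2'] at hh
          have he : epsZ t j = epsZ t' j' := by
            rw [← sgn2 t j, hh, sgnQ t' j']
          have hieq := hueq he
          rw [hieq] at hi2
          exact hi2' hi2
        · exfalso
          simp only [hpart, if_neg hi0, if_neg hi0', if_pos hi2', if_neg hi2] at hh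
          have he : epsZ t j = epsZ t' j' := by
            rw [← sgnQ t j, hh, sgn2 t' j']
          have hieq := hueq he
          rw [hieq] at hi2
          exact hi2 hi2'
        · simp only [hpart, if_neg hi0, if_neg hi0', if_neg hi2, if_neg hi2'] at hh
          have hst := @injQ (t,j) (t',j') hh
          injection hst with ht hj
          subst ht; subst hj
          exact ⟨rfl, hueq rfl, rfl⟩
    · simp only [Fintype.card_prod, Fintype.card_fin, ZMod.card]
      ring
  · -- row sums
    intro t i
    simp only []
    rw [sum_prodmk, Prod.mk_eq_zero]
    have hH : ∑ j : Fin 8, hpart (r % 4) i.1 t j = 0 := by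
      by_cases h0 : i.1 = 0
      · rcases hrc with h | h
        · rw [Finset.sum_congr rfl (fun j _ => show hpart (r % 4) i.1 t j = pat01 t j by
            simp [hpart, h0, pat0, h])]
          exact row01 t
        · rw [Finset.sum_congr rfl (fun j _ => show hpart (r % 4) i.1 t j = pat03 t j by
            simp [hpart, h0, pat0, h])]
          exact row03 t
      · by_cases h2 : i.1 = 2
        · rw [Finset.sum_congr rfl (fun j _ => show hpart (r % 4) i.1 t j = pat2 t j by
            simp [hpart, h0, h2])]
          exact row2 t
        · rw [Finset.sum_congr rfl (fun j _ => show hpart (r % 4) i.1 t j = patQ t j by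
            simp [hpart, h0, h2])]
          exact rowQ t
    constructor
    · rw [← map_sum, sum_prodmk]
      have hfst : ∑ j : Fin 8, (hpart (r % 4) i.1 t j).1 = 0 := by
        rw [← Prod.fst_sum, hH, Prod.fst_zero]
      have hsnd : ∑ j : Fin 8, epsZ t j • ((i.1 : ℕ) : ZMod r) = 0 := by
        rw [← Finset.sum_smul, rowEps t, zero_smul]
      rw [hfst, hsnd]
      exact map_zero E.symm
    · rw [← Prod.snd_sum, hH, Prod.snd_zero]
  · -- column sums
    intro t j
    simp only []
    rw [sum_prodmk, Prod.mk_eq_zero]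
    have hH : ∑ i : Fin r, hpart (r % 4) i.1 t j = 0 := by
      rw [Fin.sum_univ_eq_sum_range (fun n => hpart (r % 4) n t j) r]
      rw [← Finset.sum_range_add_sum_Ico _ (show 3 ≤ r from hr)]
      have hfront : ∑ i ∈ Finset.range 3, hpart (r % 4) i t j
          = pat0 (r % 4) t j + patQ t j + pat2 t j := by
        rw [Finset.sum_range_succ, Finset.sum_range_succ, Finset.sum_range_one]
        norm_num [hpart]
      have htail : ∑ i ∈ Finset.Ico 3 r, hpart (r % 4) i t j = (r - 3) • patQ t j := by
        rw [Finset.sum_congr rfl (fun x hx => ?_), Finset.sum_const, Nat.card_Ico]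
        have hx3 : 3 ≤ x := (Finset.mem_Ico.mp hx).1
        simp only [hpart, if_neg (by omega : ¬ x = 0), if_neg (by omega : ¬ x = 2)]
      rw [hfront, htail]
      have hmod : r - 3 = 4 * ((r - 3) / 4) + (r - 3) % 4 := (Nat.div_add_mod _ 4).symm
      rw [hmod, add_nsmul, mul_comm 4 ((r - 3) / 4), mul_nsmul, four_nsmul _, zero_add]
      rcases hrc with h1 | h3
      · have hm2 : (r - 3) % 4 = 2 := by omega
        rw [hm2, two_nsmul, h1]
        have hc1 : pat0 1 t j = pat01 t j := by
          simp [pat0]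
        rw [hc1]
        exact col1 t j
      · have hm0 : (r - 3) % 4 = 0 := by omega
        rw [hm0, zero_nsmul, add_zero, h3]
        have hc3 : pat0 3 t j = pat03 t j := by
          simp [pat0]
        rw [hc3]
        exact col3 t j
    have hg : ∑ i : Fin r, ((i.1 : ℕ) : ZMod r) = 0 := by
      have h1 : ∑ i : Fin r, ((i.1 : ℕ) : ZMod r)
          = ((∑ i ∈ Finset.range r, i : ℕ) : ZMod r) := by
        rw [Fin.sum_univ_eq_sum_range (fun n : ℕ => (n : ZMod r)) r, Nat.cast_sum]
      obtain ⟨m, hm⟩ := hodd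
      have h2 : ∑ i ∈ Finset.range r, i = r * m := by
        have h3 := Finset.sum_range_id_mul_two r
        have h4 : r * (r - 1) = (r * m) * 2 := by
          rw [show r - 1 = 2 * m from by omega]; ring
        exact Nat.eq_of_mul_eq_mul_right (by norm_num) (h3.trans h4)
      rw [h1, h2, Nat.cast_mul, ZMod.natCast_self, zero_mul]
    constructor
    · rw [← map_sum, sum_prodmk]
      have hfst : ∑ i : Fin r, (hpart (r % 4) i.1 t j).1 = 0 := by
        rw [← Prod.fst_sum, hH, Prod.fst_zero]
      have hsnd : ∑ i : Fin r, epsZ t j • ((i.1 : ℕ) : ZMod r) = 0 := by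
        rw [← Finset.smul_sum, hg, smul_zero]
      rw [hfst, hsnd]
      exact map_zero E.symm
    · rw [← Prod.snd_sum, hH, Prod.snd_zero]
end

section
/- Let r ≥ 3 be an odd integer and let Γ = Z_{2r} ⊕ Z_8. Then there exists a zero-sum Γ-magic rectangle set MRS_Γ(r,8;2). -/
open Finset

/- ### Auxiliary constructions -/

abbrev Hh := ZMod 2 × ZMod 8

def Atab : Fin 2 → Fin 8 → Hh :=
  ![![(0,4), (0,2), (0,7), (0,5), (0,0), (0,1), (1,7), (1,6)],
    ![(1,2), (0,3), (0,6), (1,0), (1,5), (1,4), (1,1), (1,3)]]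

def s2t1 : Fin 2 → Fin 8 → Hh :=
  ![![(1,7), (1,3), (1,2), (0,5), (0,1), (0,0), (1,4), (0,3)],
    ![(1,1), (0,6), (1,0), (0,4), (0,7), (1,5), (0,2), (1,6)]]
def s3t1 : Fin 2 → Fin 8 → Hh :=
  ![![(1,1), (1,6), (1,0), (0,6), (0,3), (0,5), (1,2), (0,4)],
    ![(0,7), (1,3), (0,2), (1,7), (1,5), (0,0), (1,4), (0,1)]]
def s2t3 : Fin 2 → Fin 8 → Hh :=
  ![![(1,4), (1,0), (0,0), (0,4), (0,2), (1,7), (0,3), (1,3)],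
    ![(1,5), (0,6), (1,2), (1,1), (0,5), (1,6), (0,1), (0,7)]]
def s3t3 : Fin 2 → Fin 8 → Hh :=
  ![![(1,4), (1,3), (0,6), (0,5), (0,2), (1,0), (0,7), (1,2)],
    ![(0,3), (1,5), (0,4), (0,0), (1,7), (0,1), (1,1), (1,6)]]
def s2t5 : Fin 2 → Fin 8 → Hh :=
  ![![(1,1), (1,7), (1,0), (0,4), (0,5), (0,7), (0,2), (1,3)],
    ![(1,2), (0,1), (1,5), (1,6), (1,4), (0,0), (0,3), (0,6)]]
def s3t5 : Fin 2 → Fin 8 → Hh :=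
  ![![(1,7), (1,6), (1,2), (0,3), (0,7), (0,2), (0,4), (1,0)],
    ![(0,6), (1,4), (0,5), (0,1), (0,0), (1,1), (1,3), (1,5)]]
def s2t7 : Fin 2 → Fin 8 → Hh :=
  ![![(1,4), (1,0), (0,2), (1,3), (0,7), (0,5), (0,0), (1,1)],
    ![(1,5), (1,6), (1,7), (0,4), (0,1), (0,6), (1,2), (0,3)]]
def s3t7 : Fin 2 → Fin 8 → Hh :=
  ![![(1,4), (1,7), (0,4), (1,2), (0,5), (0,6), (0,2), (1,0)],
    ![(0,3), (0,1), (0,7), (1,1), (1,3), (1,5), (0,0), (1,6)]]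

def s2v1 : Hh → Hh := fun h => s2t1 h.1 h.2
def s3v1 : Hh → Hh := fun h => s3t1 h.1 h.2
def s2v3 : Hh → Hh := fun h => s2t3 h.1 h.2
def s3v3 : Hh → Hh := fun h => s3t3 h.1 h.2
def s2v5 : Hh → Hh := fun h => s2t5 h.1 h.2
def s3v5 : Hh → Hh := fun h => s3t5 h.1 h.2
def s2v7 : Hh → Hh := fun h => s2t7 h.1 h.2
def s3v7 : Hh → Hh := fun h => s3t7 h.1 h.2

lemma h8smul : ∀ h : Hh, (8:ℕ) • h = 0 := by decide

lemma smul_mod8 (n : ℕ) (h : Hh) : n • h = (n % 8) • h := by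
  conv_lhs => rw [← Nat.div_add_mod n 8]
  rw [add_nsmul, mul_comm, ← smul_smul, h8smul, smul_zero, zero_add]

lemma gauss (r : ℕ) (hodd : Odd r) [NeZero r] :
    (∑ i : Fin r, ((i.val : ℕ) : ZMod r)) = 0 := by
  have h1 : (∑ i : Fin r, ((i.val : ℕ) : ZMod r)) = ((∑ i ∈ Finset.range r, i : ℕ) : ZMod r) := by
    rw [Nat.cast_sum, Fin.sum_univ_eq_sum_range]
  have h2 : r ∣ ∑ i ∈ Finset.range r, i := by
    have hmul := Finset.sum_range_id_mul_two r
    exact (hodd.coprime_two_right).dvd_of_dvd_mul_right ⟨r - 1, by omega⟩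
  rw [h1]
  exact (ZMod.natCast_eq_zero_iff _ _).mpr h2

lemma sum_fin_split (r : ℕ) (hr : 3 ≤ r) {M : Type*} [AddCommMonoid M] (u v w : M) :
    (∑ i : Fin r, if i.val = 0 then u else if i.val = 1 then v else w) = u + v + (r-2) • w := by
  obtain ⟨s, rfl⟩ : ∃ s, r = s + 2 := ⟨r - 2, by omega⟩
  rw [Fin.sum_univ_eq_sum_range (fun n => if n = 0 then u else if n = 1 then v else w)]
  rw [Finset.sum_range_succ', Finset.sum_range_succ']
  simp [add_comm, add_assoc, add_left_comm]

lemma pair_sum {γ α β : Type*} [AddCommMonoid α] [AddCommMonoid β]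
    (s : Finset γ) (f : γ → α) (g : γ → β) :
    (∑ x ∈ s, (f x, g x)) = (∑ x ∈ s, f x, ∑ x ∈ s, g x) := by
  apply Prod.ext <;> simp [Prod.fst_sum, Prod.snd_sum]

/-- the main construction lemma -/
lemma build (r : ℕ) (hr : 3 ≤ r) (hodd : Odd r)
    (cc : ℕ) (hcc : (cc + (r - 2)) % 8 = 0)
    (s2 s3 : Hh → Hh)
    (hsum : ∀ h, s2 h + s3 h = cc • h)
    (hA : ∀ t j t' j', Atab t j = Atab t' j' → t = t' ∧ j = j')
    (h2inj : ∀ t j t' j', s2 (Atab t j) = s2 (Atab t' j') → t = t' ∧ j = j')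
    (h3inj : ∀ t j t' j', s3 (Atab t j) = s3 (Atab t' j') → t = t' ∧ j = j')
    (hrow0 : ∀ t, ∑ j : Fin 8, Atab t j = 0)
    (hrow2 : ∀ t, ∑ j : Fin 8, s2 (Atab t j) = 0)
    (hrow3 : ∀ t, ∑ j : Fin 8, s3 (Atab t j) = 0)
    (hmix : ∀ t j t' j', Atab t j = s3 (Atab t' j') → (j.val < 4 ↔ j'.val < 4)) :
    ∃ A : Fin 2 → Fin r → Fin 8 → ZMod (2 * r) × ZMod 8,
      IsZeroSumFullMRS r 8 2 A := by
  haveI : NeZero r := ⟨by omega⟩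
  haveI : Fact (1 < r) := ⟨by omega⟩
  have hcop : Nat.Coprime 2 r := hodd.coprime_two_left
  set e := ZMod.chineseRemainder hcop with he
  -- the H-part
  set Q : Fin 2 → Fin r → Fin 8 → Hh := fun t i j =>
    if i.val = 0 then s2 (Atab t j) else if i.val = 1 then s3 (Atab t j) else Atab t j with hQdef
  -- the sign
  set sg : Fin 8 → ZMod r := fun j => if j.val < 4 then (1 : ZMod r) else -1 with hsg
  -- the ZMod r part
  set p : Fin r → Fin 8 → ZMod r := fun i j => sg j * ((i.val : ℕ) : ZMod r) with hp
  have hsne : ∀ j : Fin 8, sg j ≠ 0 := by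
    intro j
    rw [hsg]
    dsimp only
    split_ifs
    · exact one_ne_zero
    · exact neg_ne_zero.mpr one_ne_zero
  have hsor : ∀ j : Fin 8, sg j = 1 ∨ sg j = -1 := by
    intro j
    rw [hsg]
    dsimp only
    split_ifs
    · exact Or.inl rfl
    · exact Or.inr rfl
  have hszero : ∀ (j : Fin 8) (a : ZMod r), sg j * a = 0 → a = 0 := by
    intro j a ha
    rcases hsor j with h | h <;> rw [h] at ha
    · simpa using ha
    · simpa using ha
  have hscancel : ∀ (j : Fin 8) (a b : ZMod r), sg j * a = sg j * b → a = b := by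
    intro j a b hab
    rcases hsor j with h | h <;> rw [h] at hab
    · simpa using hab
    · simpa using hab
  have hval : ∀ a : ℕ, a < r → ∀ b : ℕ, b < r → ((a : ZMod r) = (b : ZMod r)) → a = b := by
    intro a ha b hb hab
    have := congrArg ZMod.val hab
    rwa [ZMod.val_cast_of_lt ha, ZMod.val_cast_of_lt hb] at this
  -- row sums
  have hQrow : ∀ t i, (∑ j : Fin 8, Q t i j) = 0 := by
    intro t i
    by_cases h0 : i.val = 0
    · simp only [hQdef, h0, if_true, if_pos]
      exact hrow2 t
    · by_cases h1 : i.val = 1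
      · simp only [hQdef, h0, h1, if_false, if_true]
        exact hrow3 t
      · simp only [hQdef, h0, h1, if_false]
        exact hrow0 t
  have hprow : ∀ i, (∑ j : Fin 8, p i j) = 0 := by
    intro i
    rw [hp]
    dsimp only
    rw [Fin.sum_univ_eight]
    rw [hsg]
    norm_num [show ((0:Fin 8)).val = 0 from rfl, show ((1:Fin 8)).val = 1 from rfl,
      show ((2:Fin 8)).val = 2 from rfl, show ((3:Fin 8)).val = 3 from rfl,
      show ((4:Fin 8)).val = 4 from rfl, show ((5:Fin 8)).val = 5 from rfl,
      show ((6:Fin 8)).val = 6 from rfl, show ((7:Fin 8)).val = 7 from rfl]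
  -- column sums
  have hQcol : ∀ t j, (∑ i : Fin r, Q t i j) = 0 := by
    intro t j
    rw [hQdef]
    dsimp only
    rw [sum_fin_split r hr]
    rw [hsum (Atab t j), ← add_nsmul, smul_mod8, hcc, zero_smul]
  have hpcol : ∀ j, (∑ i : Fin r, p i j) = 0 := by
    intro j
    rw [hp]
    dsimp only
    rw [← Finset.mul_sum, gauss r hodd, mul_zero]
  -- injectivity of the core map
  have hGinj : Function.Injective
      (fun q : Fin 2 × Fin r × Fin 8 => (Q q.1 q.2.1 q.2.2, p q.2.1 q.2.2)) := by
    rintro ⟨t, i, j⟩ ⟨t', i', j'⟩ hq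
    obtain ⟨hQe, hpe⟩ := Prod.ext_iff.mp hq
    simp only at hQe hpe
    rw [hp] at hpe
    dsimp only at hpe
    have hsf_eq : (j.val < 4 ↔ j'.val < 4) → sg j = sg j' := by
      intro hiff
      rw [hsg]
      dsimp only
      by_cases hj : j.val < 4
      · rw [if_pos hj, if_pos (hiff.mp hj)]
      · rw [if_neg hj, if_neg (fun hc => hj (hiff.mpr hc))]
    by_cases h0 : i.val = 0 <;> by_cases h0' : i'.val = 0
    · -- both class 2
      rw [hQdef] at hQe
      simp only [h0, h0', if_true, if_pos] at hQe
      obtain ⟨rfl, rfl⟩ := h2inj _ _ _ _ hQe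
      have : i = i' := Fin.ext (h0.trans h0'.symm)
      rw [this]
    · -- i class 2, i' not
      exfalso
      rw [h0] at hpe
      simp only [Nat.cast_zero, mul_zero] at hpe
      have hz : ((i'.val : ℕ) : ZMod r) = ((0 : ℕ) : ZMod r) := by
        have := hszero j' _ hpe.symm
        simpa using this
      exact h0' (hval _ i'.isLt _ (by omega) hz)
    · -- i' class 2, i not
      exfalso
      rw [h0'] at hpe
      simp only [Nat.cast_zero, mul_zero] at hpe
      have hz : ((i.val : ℕ) : ZMod r) = ((0 : ℕ) : ZMod r) := by
        have := hszero j _ hpe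
        simpa using this
      exact h0 (hval _ i.isLt _ (by omega) hz)
    · by_cases h1 : i.val = 1 <;> by_cases h1' : i'.val = 1
      · -- both class 3
        rw [hQdef] at hQe
        simp only [h0, h0', h1, h1', if_false, if_true] at hQe
        obtain ⟨rfl, rfl⟩ := h3inj _ _ _ _ hQe
        have : i = i' := Fin.ext (h1.trans h1'.symm)
        rw [this]
      · -- i class 3, i' class 1
        exfalso
        rw [hQdef] at hQe
        simp only [h0, h0', h1, h1', if_false, if_true] at hQe
        have hiff := hmix t' j' t j hQe.symm
        have hseq : sg j = sg j' := hsf_eq hiff.symm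
        rw [← hseq] at hpe
        have hcast : ((i.val : ℕ) : ZMod r) = ((i'.val : ℕ) : ZMod r) :=
          hscancel j _ _ hpe
        exact h1' ((hval _ i.isLt _ i'.isLt hcast) ▸ h1)
      · -- i class 1, i' class 3
        exfalso
        rw [hQdef] at hQe
        simp only [h0, h0', h1, h1', if_false, if_true] at hQe
        have hiff := hmix t j t' j' hQe
        have hseq : sg j = sg j' := hsf_eq hiff
        rw [← hseq] at hpe
        have hcast : ((i.val : ℕ) : ZMod r) = ((i'.val : ℕ) : ZMod r) :=
          hscancel j _ _ hpe
        exact h1 ((hval _ i.isLt _ i'.isLt hcast) ▸ h1')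
      · -- both class 1
        rw [hQdef] at hQe
        simp only [h0, h0', h1, h1', if_false] at hQe
        obtain ⟨rfl, rfl⟩ := hA _ _ _ _ hQe
        have hcast : ((i.val : ℕ) : ZMod r) = ((i'.val : ℕ) : ZMod r) :=
          hscancel j _ _ hpe
        have : i = i' := Fin.ext (hval _ i.isLt _ i'.isLt hcast)
        rw [this]
  have hcard : Fintype.card (Fin 2 × Fin r × Fin 8) = Fintype.card (Hh × ZMod r) := by
    simp [ZMod.card]
    ring
  have hGbij : Function.Bijective
      (fun q : Fin 2 × Fin r × Fin 8 => (Q q.1 q.2.1 q.2.2, p q.2.1 q.2.2)) :=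
    (Fintype.bijective_iff_injective_and_card _).mpr ⟨hGinj, hcard⟩
  -- the final reshuffling map
  set Ψ : Hh × ZMod r → ZMod (2 * r) × ZMod 8 :=
    fun z => ((e.symm (z.1.1, z.2) : ZMod (2 * r)), z.1.2) with hΨdef
  have hΨbij : Function.Bijective Ψ := by
    constructor
    · intro a b hab
      obtain ⟨h1, h2⟩ := Prod.ext_iff.mp hab
      have h3 := e.symm.injective h1
      obtain ⟨h4, h5⟩ := Prod.ext_iff.mp h3
      exact Prod.ext (Prod.ext h4 h2) h5
    · intro w
      refine ⟨(((e w.1).1, w.2), (e w.1).2), ?_⟩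
      rw [hΨdef]
      simp
  refine ⟨fun t i j => Ψ (Q t i j, p i j), ?_, ?_, ?_⟩
  · exact hΨbij.comp hGbij
  · intro t i
    rw [hΨdef]
    dsimp only
    apply Prod.ext
    · rw [Prod.fst_sum]
      dsimp only
      rw [← map_sum, pair_sum]
      have h1 : (∑ j : Fin 8, (Q t i j).1) = 0 := by
        rw [← Prod.fst_sum, hQrow t i]
        rfl
      rw [h1, hprow i]
      exact map_zero _
    · rw [Prod.snd_sum]
      dsimp only
      rw [← Prod.snd_sum, hQrow t i]
      rfl
  · intro t j
    rw [hΨdef]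
    dsimp only
    apply Prod.ext
    · rw [Prod.fst_sum]
      dsimp only
      rw [← map_sum, pair_sum]
      have h1 : (∑ i : Fin r, (Q t i j).1) = 0 := by
        rw [← Prod.fst_sum, hQcol t j]
        rfl
      rw [h1, hpcol j]
      exact map_zero _
    · rw [Prod.snd_sum]
      dsimp only
      rw [← Prod.snd_sum, hQcol t j]
      rfl

/-- Let `r ≥ 3` be an odd integer and let `Γ = Z_{2r} ⊕ Z_8`. Then there exists a zero-sum
`MRS_Γ(r,8;2)`. -/
theorem stmt8 (r : ℕ) (hr : 3 ≤ r) (hodd : Odd r) :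
    ∃ A : Fin 2 → Fin r → Fin 8 → ZMod (2 * r) × ZMod 8,
      IsZeroSumFullMRS r 8 2 A := by
  have hv8 : r % 8 = 1 ∨ r % 8 = 3 ∨ r % 8 = 5 ∨ r % 8 = 7 := by
    rcases hodd with ⟨k, hk⟩
    omega
  rcases hv8 with hv | hv | hv | hv
  · exact build r hr hodd 1 (by omega) s2v1 s3v1 (by decide) (by decide) (by decide) (by decide)
      (by decide) (by decide) (by decide) (by decide)
  · exact build r hr hodd 7 (by omega) s2v7 s3v7 (by decide) (by decide) (by decide) (by decide)
      (by decide) (by decide) (by decide) (by decide)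
  · exact build r hr hodd 5 (by omega) s2v5 s3v5 (by decide) (by decide) (by decide) (by decide)
      (by decide) (by decide) (by decide) (by decide)
  · exact build r hr hodd 3 (by omega) s2v3 s3v3 (by decide) (by decide) (by decide) (by decide)
      (by decide) (by decide) (by decide) (by decide)
end

section
/- Let r ≥ 3 be an odd integer and let Γ = Z_{2r} ⊕ Z_2 ⊕ Z_4. Then there exists a zero-sum Γ-magic rectangle set MRS_Γ(r,8;2). -/
open Finset

/- ### Auxiliary construction -/

abbrev Hg : Type := ZMod 2 × ZMod 2 × ZMod 4

def tD1 : Fin 2 → Fin 8 → Hg :=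
  ![![(1,1,1),(1,0,3),(0,1,1),(1,0,2),(1,1,3),(1,0,1),(0,0,1),(1,1,0)],
    ![(0,1,2),(0,1,0),(0,1,3),(1,1,2),(0,0,2),(0,0,3),(1,0,0),(0,0,0)]]
def tD2 : Fin 2 → Fin 8 → Hg :=
  ![![(0,1,1),(1,1,0),(1,1,3),(1,0,2),(0,1,0),(1,0,1),(0,0,2),(0,0,3)],
    ![(1,0,3),(1,0,0),(1,1,2),(0,0,0),(0,1,2),(0,1,3),(1,1,1),(0,0,1)]]
def tD3 : Fin 2 → Fin 8 → Hg :=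
  ![![(1,0,2),(0,1,1),(1,0,0),(0,0,0),(1,0,1),(0,0,2),(0,0,1),(1,1,1)],
    ![(1,1,3),(1,1,0),(1,0,3),(1,1,2),(0,1,0),(0,1,2),(0,1,3),(0,0,3)]]
def tL : Fin 2 → Fin 8 → Hg :=
  ![![(0,0,0),(0,1,0),(1,1,2),(0,1,2),(1,0,3),(0,1,1),(0,0,1),(0,0,3)],
    ![(1,1,0),(1,0,2),(1,0,0),(0,0,2),(1,0,1),(0,1,3),(1,1,1),(1,1,3)]]

def tbl : Fin 5 → Fin 2 → Fin 8 → Hg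
  | 0 => tD1
  | 1 => tD2
  | 2 => tD3
  | 3 => tL
  | 4 => fun t j => - tL t j

def sg : Fin 2 → Fin 8 → Bool :=
  ![![true,true,true,true,false,false,false,false],
    ![true,true,true,true,false,false,false,false]]

lemma f_inj : ∀ (c : Fin 5) (k k' : Fin 2 × Fin 8),
    tbl c k.1 k.2 = tbl c k'.1 k'.2 → k = k' := by decide

lemma f_rowsum : ∀ (c : Fin 5) (t : Fin 2), (∑ j : Fin 8, tbl c t j) = 0 := by decide

lemma f_triple : ∀ (t : Fin 2) (j : Fin 8), tbl 0 t j + tbl 1 t j + tbl 2 t j = 0 := by decide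

lemma f_pair : ∀ (t : Fin 2) (j : Fin 8), tbl 3 t j + tbl 4 t j = 0 := by decide

lemma tbl4_eq : ∀ (t : Fin 2) (j : Fin 8), tbl 4 t j = - tL t j := by decide

lemma tbl3_eq : ∀ (t : Fin 2) (j : Fin 8), tbl 3 t j = tL t j := by decide

lemma f_D : ∀ (k k' : Fin 2 × Fin 8), tbl 1 k.1 k.2 = tbl 2 k'.1 k'.2 →
    sg k.1 k.2 = sg k'.1 k'.2 := by decide

lemma f_E : ∀ (k k' : Fin 2 × Fin 8), tL k.1 k.2 = - tL k'.1 k'.2 →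
    sg k.1 k.2 = sg k'.1 k'.2 := by decide

lemma f_sgbal : ∀ t : Fin 2, (∑ j : Fin 8, (if sg t j then (1:ℤ) else -1)) = 0 := by decide

/- ### Row-class assignment -/

def clr (r i : ℕ) : Fin 5 :=
  if i = 0 then 0 else if i = 1 then 1 else if i = r - 1 then 2
  else if i ≤ (r - 1) / 2 then 3 else 4

lemma clr_zero (r : ℕ) : clr r 0 = 0 := by simp [clr]
lemma clr_one (r : ℕ) : clr r 1 = 1 := by simp [clr]
lemma clr_last (r : ℕ) (hr : 3 ≤ r) : clr r (r-1) = 2 := by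
  unfold clr
  rw [if_neg (by omega), if_neg (by omega), if_pos rfl]
lemma clr_lo (r a : ℕ) (h2 : 2 ≤ a) (hm : a ≤ (r-1)/2) (_hr : 3 ≤ r) : clr r a = 3 := by
  unfold clr
  rw [if_neg (by omega), if_neg (by omega), if_neg (by omega), if_pos hm]
lemma clr_hi (r a : ℕ) (h2 : 2 ≤ a) (hm : (r-1)/2 < a) (ha : a ≤ r - 2) : clr r a = 4 := by
  unfold clr
  rw [if_neg (by omega), if_neg (by omega), if_neg (by omega), if_neg (by omega)]

lemma col_class_sum {M : Type*} [AddCommGroup M] (g : Fin 5 → M)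
    (h012 : g 0 + g 1 + g 2 = 0) (h34 : g 3 + g 4 = 0)
    (r : ℕ) (hr : 3 ≤ r) (hodd : Odd r) :
    ∑ i ∈ range r, g (clr r i) = 0 := by
  obtain ⟨m, hm⟩ := hodd
  have hm1 : 1 ≤ m := by omega
  rw [range_eq_Ico,
      ← Finset.sum_Ico_consecutive _ (show (0:ℕ) ≤ 2 by omega) (show 2 ≤ r by omega),
      ← Finset.sum_Ico_consecutive _ (show (2:ℕ) ≤ m+1 by omega) (show m+1 ≤ r by omega),
      ← Finset.sum_Ico_consecutive _ (show (m+1:ℕ) ≤ r-1 by omega) (show r-1 ≤ r by omega)]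
  have e1 : ∑ i ∈ Ico 0 2, g (clr r i) = g 0 + g 1 := by
    rw [show Ico 0 2 = ({0, 1} : Finset ℕ) by rfl]
    rw [Finset.sum_insert (by simp), Finset.sum_singleton, clr_zero, clr_one]
  have e2 : ∑ i ∈ Ico 2 (m+1), g (clr r i) = (m-1) • g 3 := by
    rw [Finset.sum_congr rfl (fun i hi => ?_), Finset.sum_const, Nat.card_Ico]
    · congr 1
    · simp only [Finset.mem_Ico] at hi
      rw [clr_lo r i hi.1 (by omega) hr]
  have e3 : ∑ i ∈ Ico (m+1) (r-1), g (clr r i) = (m-1) • g 4 := by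
    rw [Finset.sum_congr rfl (fun i hi => ?_), Finset.sum_const, Nat.card_Ico]
    · congr 1
      omega
    · simp only [Finset.mem_Ico] at hi
      rw [clr_hi r i (by omega) (by omega) (by omega)]
  have e4 : ∑ i ∈ Ico (r-1) r, g (clr r i) = g 2 := by
    rw [show Ico (r-1) r = ({r-1} : Finset ℕ) by ext x; simp [Finset.mem_Ico]; omega]
    rw [Finset.sum_singleton, clr_last r hr]
  rw [e1, e2, e3, e4]
  have hz : (m-1) • g 3 + (m-1) • g 4 = 0 := by rw [← smul_add, h34, smul_zero]
  calc g 0 + g 1 + ((m-1) • g 3 + ((m-1) • g 4 + g 2))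
      = (g 0 + g 1 + g 2) + ((m-1) • g 3 + (m-1) • g 4) := by abel
    _ = 0 := by rw [h012, hz, add_zero]

lemma sum_cast_zero (r : ℕ) (hr : 3 ≤ r) (hodd : Odd r) :
    ∑ i : Fin r, ((i : ℕ) : ZMod r) = 0 := by
  obtain ⟨m, hm⟩ := hodd
  have h1 : ∑ i : Fin r, ((i : ℕ) : ZMod r) = ((∑ i ∈ range r, i : ℕ) : ZMod r) := by
    rw [Nat.cast_sum]
    exact Fin.sum_univ_eq_sum_range (fun i => ((i : ℕ) : ZMod r)) r
  have hsum : (∑ i ∈ range r, i) = r * m := by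
    have h2 := Finset.sum_range_id_mul_two r
    have h3 : r - 1 = 2 * m := by omega
    rw [h3] at h2
    have h4 : (∑ i ∈ range r, i) * 2 = (r * m) * 2 := by rw [h2]; ring
    exact Nat.eq_of_mul_eq_mul_right (by norm_num) h4
  rw [h1, hsum, Nat.cast_mul, ZMod.natCast_self, zero_mul]

lemma fincast_inj (r : ℕ) [NeZero r] {a b : Fin r}
    (h : ((a : ℕ) : ZMod r) = ((b : ℕ) : ZMod r)) : a = b := by
  apply Fin.ext
  have h2 := congrArg ZMod.val h
  rwa [ZMod.val_natCast_of_lt a.isLt, ZMod.val_natCast_of_lt b.isLt] at h2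

lemma fincast_neg (r : ℕ) [NeZero r] {a b : Fin r}
    (h : ((a : ℕ) : ZMod r) = -((b : ℕ) : ZMod r)) :
    (a : ℕ) + (b : ℕ) = r ∨ ((a : ℕ) = 0 ∧ (b : ℕ) = 0) := by
  have h0 : (((a : ℕ) + (b : ℕ) : ℕ) : ZMod r) = 0 := by push_cast; rw [h]; ring
  have hd := (ZMod.natCast_eq_zero_iff _ _).mp h0
  obtain ⟨k, hk⟩ := hd
  have ha := a.isLt; have hb := b.isLt
  match k, hk with
  | 0, hk => right; omega
  | 1, hk => left; omega
  | (k+2), hk =>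
    exfalso
    have h5 : r * 2 ≤ r * (k + 2) := Nat.mul_le_mul_left _ (by omega)
    omega

/- ### The sign function and the main map -/

def evr (r : ℕ) (t : Fin 2) (j : Fin 8) : ZMod r := if sg t j then 1 else -1

lemma evr_of_true {r : ℕ} {t : Fin 2} {j : Fin 8} (h : sg t j = true) : evr r t j = 1 := by
  simp [evr, h]
lemma evr_of_false {r : ℕ} {t : Fin 2} {j : Fin 8} (h : sg t j = false) : evr r t j = -1 := by
  simp [evr, h]

lemma ev_row (r : ℕ) (t : Fin 2) : ∑ j : Fin 8, evr r t j = 0 := by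
  have h : ((∑ j : Fin 8, (if sg t j then (1:ℤ) else -1) : ℤ) : ZMod r) = 0 := by
    rw [f_sgbal t]; simp
  rw [← h, Int.cast_sum]
  apply Finset.sum_congr rfl
  intro j _
  unfold evr
  cases sg t j <;> simp

lemma mixed (r : ℕ) (hr : 3 ≤ r) (hodd : Odd r) (a b : Fin r) (ka kb : Fin 2 × Fin 8)
    (hH : tbl (clr r a) ka.1 ka.2 = tbl (clr r b) kb.1 kb.2)
    (hs : sg ka.1 ka.2 ≠ sg kb.1 kb.2)
    (hab : (a:ℕ) + (b:ℕ) = r ∨ ((a:ℕ) = 0 ∧ (b:ℕ) = 0)) : False := by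
  obtain ⟨m, hm⟩ := hodd
  rcases hab with hab | ⟨ha0, hb0⟩
  · have ha1 : 1 ≤ (a:ℕ) := by
      rcases Nat.eq_zero_or_pos (a:ℕ) with h | h
      · exfalso; have := b.isLt; omega
      · exact h
    have hb1 : 1 ≤ (b:ℕ) := by have := a.isLt; omega
    by_cases hA1 : (a:ℕ) = 1
    · rw [show clr r (a:ℕ) = 1 from by rw [hA1]; exact clr_one r,
          show clr r (b:ℕ) = 2 from by rw [show (b:ℕ) = r-1 by omega]; exact clr_last r hr]
        at hH
      exact hs (f_D ka kb hH)
    · by_cases hA2 : (a:ℕ) = r-1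
      · rw [show clr r (a:ℕ) = 2 from by rw [hA2]; exact clr_last r hr,
            show clr r (b:ℕ) = 1 from by rw [show (b:ℕ) = 1 by omega]; exact clr_one r] at hH
        exact hs ((f_D kb ka hH.symm).symm)
      · have h2a : 2 ≤ (a:ℕ) := by omega
        have h2b : 2 ≤ (b:ℕ) := by omega
        have hbr : (b:ℕ) ≤ r - 2 := by omega
        have har : (a:ℕ) ≤ r - 2 := by omega
        by_cases hle : (a:ℕ) ≤ (r-1)/2
        · have hbl : (r-1)/2 < (b:ℕ) := by omega
          rw [clr_lo r _ h2a hle hr, clr_hi r _ h2b hbl hbr, tbl3_eq, tbl4_eq] at hH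
          exact hs (f_E ka kb hH)
        · have hbl : (b:ℕ) ≤ (r-1)/2 := by omega
          rw [clr_hi r _ h2a (by omega) har, clr_lo r _ h2b hbl hr, tbl4_eq, tbl3_eq] at hH
          exact hs ((f_E kb ka hH.symm).symm)
  · rw [show clr r (a:ℕ) = 0 from by rw [ha0]; exact clr_zero r,
        show clr r (b:ℕ) = 0 from by rw [hb0]; exact clr_zero r] at hH
    have hk := f_inj 0 ka kb hH
    rw [hk] at hs; exact hs rfl

def Bf (r : ℕ) (p : Fin 2 × Fin r × Fin 8) : Hg × ZMod r :=
  (tbl (clr r p.2.1) p.1 p.2.2, evr r p.1 p.2.2 * ((p.2.1 : ℕ) : ZMod r))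

lemma Bf_inj (r : ℕ) (hr : 3 ≤ r) (hodd : Odd r) : Function.Injective (Bf r) := by
  haveI : NeZero r := ⟨by omega⟩
  rintro ⟨t, i, j⟩ ⟨t', i', j'⟩ h
  have hH : tbl (clr r i) t j = tbl (clr r i') t' j' :=
    congrArg (fun z : Hg × ZMod r => z.1) h
  have hx : evr r t j * ((i:ℕ) : ZMod r) = evr r t' j' * ((i':ℕ) : ZMod r) :=
    congrArg (fun z : Hg × ZMod r => z.2) h
  by_cases hs : sg t j = sg t' j'
  · have hι : ((i:ℕ):ZMod r) = ((i':ℕ):ZMod r) := by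
      unfold evr at hx
      rw [hs] at hx
      cases hsv : sg t' j' <;> rw [hsv] at hx <;> simp at hx <;> exact hx
    have hii : i = i' := fincast_inj r hι
    subst hii
    have hk := f_inj (clr r i) (t, j) (t', j') hH
    obtain ⟨h1, h2⟩ := Prod.mk.inj hk
    rw [h1, h2]
  · exfalso
    have hι : ((i:ℕ):ZMod r) = -((i':ℕ):ZMod r) := by
      unfold evr at hx
      cases hsv : sg t j <;> cases hsv' : sg t' j' <;> rw [hsv, hsv'] at hx <;> simp at hx
      · exact absurd (hsv.trans hsv'.symm) hs
      · exact neg_eq_iff_eq_neg.mp hx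
      · exact hx
      · exact absurd (hsv.trans hsv'.symm) hs
    exact mixed r hr hodd i i' (t, j) (t', j') hH hs (fincast_neg r hι)

lemma Bf_bij (r : ℕ) (hr : 3 ≤ r) (hodd : Odd r) : Function.Bijective (Bf r) := by
  haveI : NeZero r := ⟨by omega⟩
  rw [Fintype.bijective_iff_injective_and_card]
  refine ⟨Bf_inj r hr hodd, ?_⟩
  simp [ZMod.card]
  ring

def emb (r : ℕ) (h : Nat.Coprime 2 r) :
    (Hg × ZMod r) →+ (ZMod (2*r) × ZMod 2 × ZMod 4) :=
  AddMonoidHom.mk'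
    (fun p => ((ZMod.chineseRemainder h).symm (p.1.1, p.2), p.1.2.1, p.1.2.2))
    (by
      intro a b
      show ((ZMod.chineseRemainder h).symm (a.1.1 + b.1.1, a.2 + b.2), _, _) = _
      rw [show ((a.1.1 + b.1.1 : ZMod 2), (a.2 + b.2 : ZMod r)) = (a.1.1, a.2) + (b.1.1, b.2)
        from rfl, map_add]
      rfl)

lemma emb_bij (r : ℕ) (h : Nat.Coprime 2 r) : Function.Bijective (emb r h) := by
  constructor
  · intro a b hab
    have h1 : (ZMod.chineseRemainder h).symm (a.1.1, a.2)
        = (ZMod.chineseRemainder h).symm (b.1.1, b.2) := congrArg Prod.fst hab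
    have h2 := (ZMod.chineseRemainder h).symm.injective h1
    have h3 : a.1.1 = b.1.1 := congrArg (fun z : ZMod 2 × ZMod r => z.1) h2
    have h4 : a.2 = b.2 := congrArg (fun z : ZMod 2 × ZMod r => z.2) h2
    have h5 : a.1.2.1 = b.1.2.1 := congrArg (fun z => z.2.1) hab
    have h6 : a.1.2.2 = b.1.2.2 := congrArg (fun z => z.2.2) hab
    exact Prod.ext (Prod.ext h3 (Prod.ext h5 h6)) h4
  · intro z
    refine ⟨((((ZMod.chineseRemainder h) z.1).1, z.2.1, z.2.2),
      ((ZMod.chineseRemainder h) z.1).2), ?_⟩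
    show ((ZMod.chineseRemainder h).symm (((ZMod.chineseRemainder h) z.1).1,
      ((ZMod.chineseRemainder h) z.1).2), z.2.1, z.2.2) = z
    rw [show ((((ZMod.chineseRemainder h) z.1).1 : ZMod 2),
        (((ZMod.chineseRemainder h) z.1).2 : ZMod r)) = (ZMod.chineseRemainder h) z.1
        from rfl]
    rw [RingEquiv.symm_apply_apply]

/-- Let `r ≥ 3` be an odd integer and let `Γ = Z_{2r} ⊕ Z_2 ⊕ Z_4`. Then there exists a zero-sum
`MRS_Γ(r,8;2)`. -/
theorem stmt9 (r : ℕ) (hr : 3 ≤ r) (hodd : Odd r) :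
    ∃ A : Fin 2 → Fin r → Fin 8 → ZMod (2 * r) × ZMod 2 × ZMod 4,
      IsZeroSumFullMRS r 8 2 A := by
  haveI : NeZero r := ⟨by omega⟩
  have h2 : r % 2 = 1 := Nat.odd_iff.mp hodd
  have hco : Nat.Coprime 2 r := (Nat.prime_two.coprime_iff_not_dvd).mpr (by omega)
  refine ⟨fun t i j => emb r hco (Bf r (t, i, j)), ?_, ?_, ?_⟩
  · exact (emb_bij r hco).comp (Bf_bij r hr hodd)
  · intro t i
    rw [← map_sum]
    have hz : (∑ j : Fin 8, Bf r (t, i, j)) = 0 := by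
      refine Prod.ext ?_ ?_
      · rw [Prod.fst_sum]
        exact f_rowsum (clr r i) t
      · rw [Prod.snd_sum]
        show (∑ j : Fin 8, evr r t j * ((i:ℕ):ZMod r)) = 0
        rw [← Finset.sum_mul, ev_row r t, zero_mul]
    rw [hz, map_zero]
  · intro t j
    rw [← map_sum]
    have hz : (∑ i : Fin r, Bf r (t, i, j)) = 0 := by
      refine Prod.ext ?_ ?_
      · rw [Prod.fst_sum]
        show (∑ i : Fin r, tbl (clr r (i:ℕ)) t j) = 0
        rw [Fin.sum_univ_eq_sum_range (fun n => tbl (clr r n) t j) r]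
        exact col_class_sum (fun c => tbl c t j) (f_triple t j) (f_pair t j) r hr hodd
      · rw [Prod.snd_sum]
        show (∑ i : Fin r, evr r t j * ((i:ℕ):ZMod r)) = 0
        rw [← Finset.mul_sum, sum_cast_zero r hr hodd, mul_zero]
    rw [hz, map_zero]
end

section
/- Let r ≥ 3 be an odd integer and let Γ = Z_{2r} ⊕ Z_2 ⊕ Z_2 ⊕ Z_2. Then there exists a zero-sum Γ-magic rectangle set MRS_Γ(r,8;2). -/
open Finset

/- Auxiliary: `K4` is `(Z₂)⁴`, viewed as the field `F₁₆` with `g⁴ = g + 1`;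
`Lg` is multiplication by `g`, `Lg'` multiplication by `1 + g`. -/
abbrev K4 : Type := ZMod 2 × ZMod 2 × ZMod 2 × ZMod 2

def Lg : K4 → K4 := fun c => (c.2.2.2, c.1 + c.2.2.2, c.2.1, c.2.2.1)

def Lg' : K4 → K4 := fun c => (c.1 + c.2.2.2, c.2.1 + c.1 + c.2.2.2, c.2.2.1 + c.2.1, c.2.2.2 + c.2.2.1)

def uu : Fin 2 → Fin 8 → K4 := fun t j =>
  (((t : ℕ) : ZMod 2), if (j : ℕ) < 4 then 0 else 1,
    (((j : ℕ) / 2 % 2 : ℕ) : ZMod 2), (((j : ℕ) % 2 : ℕ) : ZMod 2))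

lemma Lg_inj : Function.Injective Lg := by decide

lemma Lg'_inj : Function.Injective Lg' := by decide

lemma Lg_add_Lg' : ∀ c : K4, Lg c + Lg' c = c := by decide

lemma K4_two : ∀ c : K4, c + c = 0 := by decide

lemma uu_inj : ∀ t t' : Fin 2, ∀ j j' : Fin 8, uu t j = uu t' j' → t = t' ∧ j = j' := by decide

lemma uu_row : ∀ t : Fin 2, ∑ j : Fin 8, uu t j = 0 := by decide

lemma row_one : ∀ t : Fin 2,
    ∑ j : Fin 8, (if (j : ℕ) < 4 then Lg (uu t j) else Lg' (uu t j)) = 0 := by decide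

lemma row_negone : ∀ t : Fin 2,
    ∑ j : Fin 8, (if (j : ℕ) < 4 then Lg' (uu t j) else Lg (uu t j)) = 0 := by decide

/- the `Z_r` data -/
def aaF (r : ℕ) : Fin 8 → ZMod r := fun j => if (j : ℕ) < 4 then 1 else -1

def FFf (r : ℕ) : Fin r → Fin 8 → ZMod r := fun i j => aaF r j * ((i : ℕ) : ZMod r)

def GGf (r : ℕ) : Fin 2 → Fin r → Fin 8 → K4 := fun t i j =>
  if ((i : ℕ) : ZMod r) = aaF r j then Lg (uu t j)
  else if ((i : ℕ) : ZMod r) = -aaF r j then Lg' (uu t j)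
  else uu t j

lemma one_ne_negone {r : ℕ} (hr : 3 ≤ r) : (1 : ZMod r) ≠ -1 := by
  intro h
  have h2 : ((2 : ℕ) : ZMod r) = 0 := by
    push_cast
    linear_combination h
  have hdvd := (ZMod.natCast_eq_zero_iff 2 r).mp h2
  have := Nat.le_of_dvd (by norm_num) hdvd
  omega

lemma aa_sq (r : ℕ) (j : Fin 8) : aaF r j * aaF r j = 1 := by
  unfold aaF; split_ifs <;> ring

lemma aa_ne_neg {r : ℕ} (hr : 3 ≤ r) (j : Fin 8) : aaF r j ≠ -aaF r j := by
  unfold aaF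
  split_ifs with h
  · exact one_ne_negone hr
  · intro h'
    rw [neg_neg] at h'
    exact one_ne_negone hr h'.symm

lemma cast_inj_fin {r : ℕ} (hr : 3 ≤ r) {i i' : Fin r}
    (h : ((i : ℕ) : ZMod r) = ((i' : ℕ) : ZMod r)) : i = i' := by
  haveI : NeZero r := ⟨by omega⟩
  have := congrArg ZMod.val h
  rw [ZMod.val_cast_of_lt i.isLt, ZMod.val_cast_of_lt i'.isLt] at this
  exact Fin.ext this

lemma cast_bij {r : ℕ} (hr : 3 ≤ r) :
    Function.Bijective (fun i : Fin r => ((i : ℕ) : ZMod r)) := by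
  haveI : NeZero r := ⟨by omega⟩
  rw [Fintype.bijective_iff_injective_and_card]
  refine ⟨fun i i' h => cast_inj_fin hr h, ?_⟩
  rw [Fintype.card_fin, ZMod.card]

lemma sum_cast_fin {r : ℕ} (hodd : Odd r) : ∑ i : Fin r, ((i : ℕ) : ZMod r) = 0 := by
  obtain ⟨m, hm⟩ := hodd
  have h1 : ∑ i : Fin r, ((i : ℕ) : ZMod r) = ((∑ i ∈ Finset.range r, i : ℕ) : ZMod r) := by
    rw [Nat.cast_sum]
    exact Fin.sum_univ_eq_sum_range (fun i => ((i : ℕ) : ZMod r)) r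
  have h2 : ∑ i ∈ Finset.range r, i = m * r := by
    subst hm
    apply Nat.eq_of_mul_eq_mul_right (show 0 < 2 by norm_num)
    rw [Finset.sum_range_id_mul_two, Nat.add_sub_cancel]
    ring
  rw [h1, h2]
  push_cast
  rw [ZMod.natCast_self]
  ring

/-- row sums of the `Z_r` part -/
lemma FF_row (r : ℕ) (i : Fin r) : ∑ j : Fin 8, FFf r i j = 0 := by
  unfold FFf
  rw [← Finset.sum_mul]
  have : ∑ j : Fin 8, aaF r j = 0 := by
    rw [Fin.sum_univ_eight]
    show (1 : ZMod r) + 1 + 1 + 1 + (-1) + (-1) + (-1) + (-1) = 0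
    ring
  rw [this, zero_mul]

/-- column sums of the `Z_r` part -/
lemma FF_col {r : ℕ} (hodd : Odd r) (j : Fin 8) : ∑ i : Fin r, FFf r i j = 0 := by
  unfold FFf
  rw [← Finset.mul_sum, sum_cast_fin hodd, mul_zero]

/-- row sums of the `K4` part -/
lemma GG_row {r : ℕ} (hr : 3 ≤ r) (t : Fin 2) (i : Fin r) : ∑ j : Fin 8, GGf r t i j = 0 := by
  have hne := one_ne_negone hr
  have hne2 : (-1 : ZMod r) ≠ 1 := Ne.symm hne
  by_cases h1 : ((i : ℕ) : ZMod r) = 1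
  · have key : ∀ j : Fin 8, GGf r t i j = if (j : ℕ) < 4 then Lg (uu t j) else Lg' (uu t j) := by
      intro j
      by_cases hj : (j : ℕ) < 4
      · have ha : aaF r j = 1 := if_pos hj
        simp [GGf, ha, h1, hj]
      · have ha : aaF r j = -1 := if_neg hj
        simp [GGf, ha, h1, hj, hne]
    rw [Finset.sum_congr rfl (fun j _ => key j)]
    exact row_one t
  · by_cases h2 : ((i : ℕ) : ZMod r) = -1
    · have key : ∀ j : Fin 8, GGf r t i j = if (j : ℕ) < 4 then Lg' (uu t j) else Lg (uu t j) := by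
        intro j
        by_cases hj : (j : ℕ) < 4
        · have ha : aaF r j = 1 := if_pos hj
          simp [GGf, ha, h2, hj, hne2]
        · have ha : aaF r j = -1 := if_neg hj
          simp [GGf, ha, h2, hj]
      rw [Finset.sum_congr rfl (fun j _ => key j)]
      exact row_negone t
    · have key : ∀ j : Fin 8, GGf r t i j = uu t j := by
        intro j
        by_cases hj : (j : ℕ) < 4
        · have ha : aaF r j = 1 := if_pos hj
          simp [GGf, ha, h1, h2]
        · have ha : aaF r j = -1 := if_neg hj
          simp [GGf, ha, h1, h2]
      rw [Finset.sum_congr rfl (fun j _ => key j)]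
      exact uu_row t

/-- column sums of the `K4` part -/
lemma GG_col {r : ℕ} (hr : 3 ≤ r) (hodd : Odd r) (t : Fin 2) (j : Fin 8) :
    ∑ i : Fin r, GGf r t i j = 0 := by
  haveI : NeZero r := ⟨by omega⟩
  obtain ⟨m, hm⟩ := hodd
  have hre : ∑ i : Fin r, GGf r t i j
      = ∑ z : ZMod r, (if z = aaF r j then Lg (uu t j) else
          if z = -aaF r j then Lg' (uu t j) else uu t j) :=
    Fintype.sum_bijective _ (cast_bij hr) _ _ (fun i => rfl)
  rw [hre]
  have hane := aa_ne_neg hr (r := r) j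
  have hsplit : (Finset.univ : Finset (ZMod r))
      = insert (aaF r j) (insert (-aaF r j) (Finset.univ \ {aaF r j, -aaF r j})) := by
    ext z
    simp only [Finset.mem_insert, Finset.mem_sdiff, Finset.mem_univ, Finset.mem_singleton,
      true_iff, iff_true, true_and]
    tauto
  rw [hsplit]
  rw [Finset.sum_insert (by simp [hane])]
  rw [Finset.sum_insert (by simp)]
  rw [if_pos rfl, if_neg (Ne.symm hane), if_pos rfl]
  have hconst : ∀ z ∈ Finset.univ \ ({aaF r j, -aaF r j} : Finset (ZMod r)),
      (if z = aaF r j then Lg (uu t j) else if z = -aaF r j then Lg' (uu t j) else uu t j)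
        = uu t j := by
    intro z hz
    simp only [Finset.mem_sdiff, Finset.mem_insert, Finset.mem_singleton] at hz
    push_neg at hz
    rw [if_neg hz.2.1, if_neg hz.2.2]
  rw [Finset.sum_congr rfl hconst, Finset.sum_const]
  have hcard : (Finset.univ \ ({aaF r j, -aaF r j} : Finset (ZMod r))).card = r - 2 := by
    rw [Finset.card_sdiff_of_subset (Finset.subset_univ _)]
    rw [Finset.card_univ, ZMod.card]
    congr 1
    rw [Finset.card_insert_of_notMem (by simpa using hane), Finset.card_singleton]
  rw [hcard]
  rw [← add_assoc, Lg_add_Lg']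
  have h3 : uu t j + (r - 2) • uu t j = (r - 1) • uu t j := by
    rw [show r - 1 = (r - 2) + 1 by omega, add_nsmul, one_nsmul, add_comm]
  rw [h3, show r - 1 = m * 2 by omega, mul_nsmul, two_nsmul, K4_two]

/-- injectivity of the combined map -/
lemma B_inj {r : ℕ} (hr : 3 ≤ r) : Function.Injective
    (fun p : Fin 2 × Fin r × Fin 8 => (FFf r p.2.1 p.2.2, GGf r p.1 p.2.1 p.2.2)) := by
  rintro ⟨t, i, j⟩ ⟨t', i', j'⟩ h
  simp only [Prod.mk.injEq] at h
  obtain ⟨hFF, hGG⟩ := h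
  unfold FFf at hFF
  have hane := fun (j : Fin 8) => aa_ne_neg hr (r := r) j
  by_cases c1 : ((i : ℕ) : ZMod r) = aaF r j
  · have hz : aaF r j' * ((i' : ℕ) : ZMod r) = 1 := by rw [← hFF, c1, aa_sq]
    have c1' : ((i' : ℕ) : ZMod r) = aaF r j' := by
      have h4 : aaF r j' * (aaF r j' * ((i' : ℕ) : ZMod r)) = aaF r j' * 1 := by rw [hz]
      rwa [← mul_assoc, aa_sq, one_mul, mul_one] at h4
    unfold GGf at hGG
    rw [if_pos c1, if_pos c1'] at hGG
    obtain ⟨ht, hj⟩ := uu_inj _ _ _ _ (Lg_inj hGG)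
    subst ht hj
    have : i = i' := cast_inj_fin hr (by rw [c1, c1'])
    subst this; rfl
  · by_cases c2 : ((i : ℕ) : ZMod r) = -aaF r j
    · have hz : aaF r j' * ((i' : ℕ) : ZMod r) = -1 := by
        rw [← hFF, c2, mul_neg, aa_sq]
      have c2' : ((i' : ℕ) : ZMod r) = -aaF r j' := by
        have h4 : aaF r j' * (aaF r j' * ((i' : ℕ) : ZMod r)) = aaF r j' * (-1) := by rw [hz]
        rwa [← mul_assoc, aa_sq, one_mul, mul_neg_one] at h4
      have c1' : ¬ ((i' : ℕ) : ZMod r) = aaF r j' := by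
        rw [c2']; intro h; exact hane j' h.symm
      unfold GGf at hGG
      rw [if_neg c1, if_pos c2, if_neg c1', if_pos c2'] at hGG
      obtain ⟨ht, hj⟩ := uu_inj _ _ _ _ (Lg'_inj hGG)
      subst ht hj
      have : i = i' := cast_inj_fin hr (by rw [c2, c2'])
      subst this; rfl
    · have c1' : ¬ ((i' : ℕ) : ZMod r) = aaF r j' := by
        intro h
        apply c1
        have h3 : aaF r j * ((i : ℕ) : ZMod r) = 1 := by rw [hFF, h, aa_sq]
        have h4 : aaF r j * (aaF r j * ((i : ℕ) : ZMod r)) = aaF r j * 1 := by rw [h3]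
        rwa [← mul_assoc, aa_sq, one_mul, mul_one] at h4
      have c2' : ¬ ((i' : ℕ) : ZMod r) = -aaF r j' := by
        intro h
        apply c2
        have h3 : aaF r j * ((i : ℕ) : ZMod r) = -1 := by rw [hFF, h, mul_neg, aa_sq]
        have h4 : aaF r j * (aaF r j * ((i : ℕ) : ZMod r)) = aaF r j * (-1) := by rw [h3]
        rwa [← mul_assoc, aa_sq, one_mul, mul_neg_one] at h4
      unfold GGf at hGG
      rw [if_neg c1, if_neg c2, if_neg c1', if_neg c2'] at hGG
      obtain ⟨ht, hj⟩ := uu_inj _ _ _ _ hGG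
      subst ht hj
      have h5 : ((i : ℕ) : ZMod r) = ((i' : ℕ) : ZMod r) := by
        have h4 : aaF r j * (aaF r j * ((i : ℕ) : ZMod r))
            = aaF r j * (aaF r j * ((i' : ℕ) : ZMod r)) := by rw [hFF]
        rwa [← mul_assoc, ← mul_assoc, aa_sq, one_mul, one_mul] at h4
      have : i = i' := cast_inj_fin hr h5
      subst this; rfl

/-- Let `r ≥ 3` be an odd integer and let `Γ = Z_{2r} ⊕ Z_2 ⊕ Z_2 ⊕ Z_2`. Then there exists a zero-sum
`MRS_Γ(r,8;2)`. -/
theorem stmt10 (r : ℕ) (hr : 3 ≤ r) (hodd : Odd r) :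
    ∃ A : Fin 2 → Fin r → Fin 8 → ZMod (2 * r) × ZMod 2 × ZMod 2 × ZMod 2,
      IsZeroSumFullMRS r 8 2 A := by
  haveI : NeZero r := ⟨by omega⟩
  haveI : NeZero (2 * r) := ⟨by omega⟩
  have hcop : Nat.Coprime 2 r := Nat.coprime_two_left.mpr hodd
  let crt := ZMod.chineseRemainder hcop
  refine ⟨fun t i j => (crt.symm ((GGf r t i j).1, FFf r i j), (GGf r t i j).2), ?_, ?_, ?_⟩
  · rw [Fintype.bijective_iff_injective_and_card]
    constructor
    · rintro ⟨t, i, j⟩ ⟨t', i', j'⟩ h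
      simp only [Prod.mk.injEq] at h
      obtain ⟨h1, h2⟩ := h
      have h1' := crt.symm.injective h1
      simp only [Prod.mk.injEq] at h1'
      exact B_inj hr (a₁ := (t, i, j)) (a₂ := (t', i', j'))
        (by
          simp only [Prod.mk.injEq]
          exact ⟨h1'.2, Prod.ext h1'.1 h2⟩)
    · simp only [Fintype.card_prod, Fintype.card_fin, ZMod.card]
      ring
  · intro t i
    have hG := GG_row hr t i
    have hF := FF_row r i
    have hsnd : ∑ j : Fin 8, (GGf r t i j).2 = 0 := by
      rw [← Prod.snd_sum, hG]; rfl
    have hhead : ∑ j : Fin 8, crt.symm ((GGf r t i j).1, FFf r i j) = 0 := by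
      rw [← map_sum]
      have hpair : ∑ j : Fin 8, ((GGf r t i j).1, FFf r i j)
          = (∑ j : Fin 8, (GGf r t i j).1, ∑ j : Fin 8, FFf r i j) :=
        Prod.ext Prod.fst_sum Prod.snd_sum
      rw [hpair]
      have hfst : ∑ j : Fin 8, (GGf r t i j).1 = 0 := by
        rw [← Prod.fst_sum, hG]; rfl
      rw [hfst, hF]
      exact map_zero _
    have hpair2 : ∑ j : Fin 8, (crt.symm ((GGf r t i j).1, FFf r i j), (GGf r t i j).2)
        = (∑ j : Fin 8, crt.symm ((GGf r t i j).1, FFf r i j), ∑ j : Fin 8, (GGf r t i j).2) :=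
      Prod.ext Prod.fst_sum Prod.snd_sum
    rw [hpair2, hhead, hsnd]
    rfl
  · intro t j
    have hG := GG_col hr hodd t j
    have hF := FF_col hodd j
    have hsnd : ∑ i : Fin r, (GGf r t i j).2 = 0 := by
      rw [← Prod.snd_sum, hG]; rfl
    have hhead : ∑ i : Fin r, crt.symm ((GGf r t i j).1, FFf r i j) = 0 := by
      rw [← map_sum]
      have hpair : ∑ i : Fin r, ((GGf r t i j).1, FFf r i j)
          = (∑ i : Fin r, (GGf r t i j).1, ∑ i : Fin r, FFf r i j) :=
        Prod.ext Prod.fst_sum Prod.snd_sum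
      rw [hpair]
      have hfst : ∑ i : Fin r, (GGf r t i j).1 = 0 := by
        rw [← Prod.fst_sum, hG]; rfl
      rw [hfst, hF]
      exact map_zero _
    have hpair2 : ∑ i : Fin r, (crt.symm ((GGf r t i j).1, FFf r i j), (GGf r t i j).2)
        = (∑ i : Fin r, crt.symm ((GGf r t i j).1, FFf r i j), ∑ i : Fin r, (GGf r t i j).2) :=
      Prod.ext Prod.fst_sum Prod.snd_sum
    rw [hpair2, hhead, hsnd]
    rfl
end

section
/- Let n ≥ 2 and c ≥ 1 be integers and let Γ be a finite abelian group of order 2·n·c. Then a diagonal Γ-magic rectangle set MRS_Γ(n;2;c) exists if and only if Γ contains an element of order n. -/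
open Finset

/-- A diagonal Γ-magic rectangle set `MRS_Γ(n;k;c)`: the filled cells of each array are
exactly those of `k` consecutive diagonals (indices mod `n`). -/
def IsDiagonalMRS {Γ : Type*} [AddCommGroup Γ] (n k c : ℕ)
    (A : Fin c → Fin n → Fin n → Option Γ) : Prop :=
  IsPartialMRS n n k k c A ∧
  ∀ t : Fin c, ∃ ℓ : ZMod n, ∀ i j : Fin n,
    (A t i j).isSome = true ↔
      ∃ u : ℕ, u < k ∧ ((j : ℕ) : ZMod n) - ((i : ℕ) : ZMod n) = ℓ + (u : ZMod n)

section Helpers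
variable {n : ℕ} [NeZero n]

def zToFin (x : ZMod n) : Fin n := ⟨x.val, x.val_lt⟩

lemma zToFin_cast (x : ZMod n) : (((zToFin x : Fin n) : ℕ) : ZMod n) = x := by
  simpa [zToFin] using ZMod.natCast_rightInverse x

lemma zToFin_inj : Function.Injective (zToFin (n := n)) := by
  intro a b h
  have := congrArg (fun f : Fin n => ((f : ℕ) : ZMod n)) h
  simpa [zToFin_cast] using this

omit [NeZero n] in
lemma finCast_inj {i j : Fin n} (h : ((i : ℕ) : ZMod n) = ((j : ℕ) : ZMod n)) : i = j := by
  have h1 : (((i:ℕ) : ZMod n)).val = (((j:ℕ) : ZMod n)).val := by rw [h]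
  rwa [ZMod.val_cast_of_lt i.isLt, ZMod.val_cast_of_lt j.isLt, ← Fin.ext_iff] at h1

lemma zToFin_finCast (i : Fin n) : zToFin ((i : ℕ) : ZMod n) = i :=
  finCast_inj (by rw [zToFin_cast])

omit [NeZero n] in
lemma one_ne_zero_zmod (hn : 2 ≤ n) : (1 : ZMod n) ≠ 0 := by
  intro he
  have h1 : ((1:ℕ) : ZMod n) = 0 := by push_cast; exact he
  rw [ZMod.natCast_eq_zero_iff] at h1
  exact absurd (Nat.le_of_dvd one_pos h1) (by omega)

omit [NeZero n] in
lemma sum_two_support {M : Type*} [AddCommMonoid M] (F : Fin n → M) (j1 j2 : Fin n)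
    (hne : j1 ≠ j2) (hz : ∀ j, j ≠ j1 → j ≠ j2 → F j = 0) :
    ∑ j, F j = F j1 + F j2 := by
  classical
  rw [← Finset.sum_pair hne]
  symm
  apply Finset.sum_subset (Finset.subset_univ _)
  intro j _ hj
  simp only [Finset.mem_insert, Finset.mem_singleton, not_or] at hj
  exact hz j hj.1 hj.2

lemma filter_two_card (z1 z2 : ZMod n) (hne : z1 ≠ z2) (P : Fin n → Prop) [DecidablePred P]
    (hP : ∀ j, P j ↔ (((j:ℕ) : ZMod n) = z1 ∨ ((j:ℕ) : ZMod n) = z2)) :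
    (Finset.univ.filter P).card = 2 := by
  classical
  have : Finset.univ.filter P = {zToFin z1, zToFin z2} := by
    ext j
    simp only [Finset.mem_filter, Finset.mem_univ, true_and, Finset.mem_insert,
      Finset.mem_singleton, hP]
    constructor
    · rintro (h | h)
      · left; rw [← h, zToFin_finCast]
      · right; rw [← h, zToFin_finCast]
    · rintro (h | h)
      · left; rw [h, zToFin_cast]
      · right; rw [h, zToFin_cast]
  rw [this, Finset.card_pair (fun he => hne (zToFin_inj he))]

end Helpers

lemma exists_transversal {α : Type*} [DecidableEq α] (σ : α → α)
    (hinv : ∀ x, σ (σ x) = x) :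
    ∀ S : Finset α, (∀ x ∈ S, σ x ∈ S) → (∀ x ∈ S, σ x ≠ x) →
      ∃ R : Finset α, R ⊆ S ∧ ∀ x ∈ S, (x ∈ R ↔ σ x ∉ R) := by
  intro S
  induction S using Finset.strongInduction with
  | _ S ih =>
    intro hclosed hfpf
    rcases S.eq_empty_or_nonempty with rfl | ⟨y, hy⟩
    · exact ⟨∅, by simp⟩
    · have hσinj : Function.Injective σ := fun a b h => by rw [← hinv a, h, hinv]
      set S' : Finset α := S \ {y, σ y} with hS'
      have hyS' : y ∉ S' := by simp [hS']
      have hσyS' : σ y ∉ S' := by simp [hS']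
      have hsub : S' ⊂ S := Finset.ssubset_iff_of_subset (Finset.sdiff_subset) |>.2 ⟨y, hy, hyS'⟩
      have hclosed' : ∀ x ∈ S', σ x ∈ S' := by
        intro x hx
        simp only [hS', Finset.mem_sdiff, Finset.mem_insert, Finset.mem_singleton, not_or] at hx ⊢
        refine ⟨hclosed x hx.1, ?_, ?_⟩
        · intro h
          exact hx.2.2 (by rw [← hinv x, h])
        · intro h
          exact hx.2.1 (hσinj h)
      obtain ⟨R', hR'sub, hR'⟩ := ih S' hsub hclosed'
        (fun x hx => hfpf x (Finset.mem_sdiff.1 hx).1)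
      refine ⟨insert y R', ?_, ?_⟩
      · intro x hx
        rcases Finset.mem_insert.1 hx with rfl | hx
        · exact hy
        · exact (Finset.sdiff_subset) (hR'sub hx)
      · intro x hx
        by_cases hxy : x = y
        · subst hxy
          simp only [Finset.mem_insert, true_or, true_iff]
          rintro (h | h)
          · exact absurd h (hfpf x hx)
          · exact hσyS' (hR'sub h)
        · by_cases hxσy : x = σ y
          · subst hxσy
            have h1 : σ (σ y) ∈ insert y R' := by rw [hinv]; exact Finset.mem_insert_self y R'
            simp only [Finset.mem_insert, not_or]
            constructor
            · rintro (h | h)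
              · exact absurd h hxy
              · exact absurd (hR'sub h) hσyS'
            · intro h
              exact absurd h1 (by simp_all)
          · have hxS' : x ∈ S' := by
              simp only [hS', Finset.mem_sdiff, Finset.mem_insert, Finset.mem_singleton, not_or]
              exact ⟨hx, hxy, hxσy⟩
            have hσxy : σ x ≠ y := by
              intro h
              exact hxσy (by rw [← hinv x, h])
            rw [Finset.mem_insert, Finset.mem_insert]
            simp only [hxy, false_or]
            rw [hR' x hxS']
            simp [hσxy]

lemma backward_dir (n c : ℕ) (hn : 2 ≤ n) (hc : 1 ≤ c)
    (Γ : Type*) [AddCommGroup Γ] [Fintype Γ] (hcard : Fintype.card Γ = 2 * n * c)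
    (g : Γ) (hg : addOrderOf g = n) :
    ∃ A : Fin c → Fin n → Fin n → Option Γ, IsDiagonalMRS n 2 c A := by
  classical
  haveI : NeZero n := ⟨by omega⟩
  have hone : (1 : ZMod n) ≠ 0 := one_ne_zero_zmod hn
  have hng : n • g = 0 := by rw [← hg]; exact addOrderOf_nsmul_eq_zero g
  have hfz : zmultiplesHom Γ g (n : ℤ) = 0 := by simpa using hng
  set φ : ZMod n →+ Γ := ZMod.lift n ⟨zmultiplesHom Γ g, hfz⟩ with hφdef
  have hφnat : ∀ m : ℕ, φ ((m : ℕ) : ZMod n) = m • g := by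
    intro m
    have h1 : ((m : ℤ) : ZMod n) = ((m : ℕ) : ZMod n) := by push_cast; ring
    rw [hφdef, ← h1, ZMod.lift_coe]
    simp
  have hφone : φ 1 = g := by
    have := hφnat 1
    simpa using this
  have hφinj : Function.Injective φ := by
    intro z z' h
    have h0 : φ (z - z') = 0 := by rw [map_sub, h, sub_self]
    have hz : z - z' = ((z - z').val : ZMod n) := (ZMod.natCast_rightInverse _).symm
    rw [hz, hφnat] at h0
    have hdvd : addOrderOf g ∣ (z - z').val := addOrderOf_dvd_iff_nsmul_eq_zero.2 h0
    rw [hg] at hdvd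
    have hlt : (z - z').val < n := ZMod.val_lt _
    have hv0 : (z - z').val = 0 := Nat.eq_zero_of_dvd_of_lt hdvd hlt
    have hzz : z - z' = 0 := by rw [hz, hv0]; simp
    exact sub_eq_zero.1 hzz
  -- the subgroup generated by g and the quotient
  set H : AddSubgroup Γ := AddSubgroup.zmultiples g with hHdef
  have hφH : ∀ z, φ z ∈ H := by
    intro z
    have hz : z = ((z.val : ℕ) : ZMod n) := (ZMod.natCast_rightInverse _).symm
    rw [hz, hφnat]
    exact AddSubgroup.nsmul_mem H (AddSubgroup.mem_zmultiples g) _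
  have hgH : g ∈ H := AddSubgroup.mem_zmultiples g
  set Q := Γ ⧸ H with hQdef
  haveI : Fintype Q := Fintype.ofFinite Q
  have hHcard : Nat.card H = n := by rw [hHdef, Nat.card_zmultiples, hg]
  have hQcard : Fintype.card Q = 2 * c := by
    have h1 : Nat.card Γ = Nat.card Q * Nat.card H :=
      AddSubgroup.card_eq_card_quotient_mul_card_addSubgroup H
    rw [hHcard, Nat.card_eq_fintype_card, Nat.card_eq_fintype_card, hcard] at h1
    have hn0 : 0 < n := by omega
    nlinarith [h1]
  -- an element s outside the image of doubling
  haveI : Fact (Nat.Prime 2) := ⟨Nat.prime_two⟩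
  obtain ⟨q2, hq2⟩ := exists_prime_addOrderOf_dvd_card (G := Q) 2
    (by rw [hQcard]; exact dvd_mul_right 2 c)
  have hq2ne : q2 ≠ 0 := by
    intro h
    rw [h] at hq2
    simp at hq2
  have hq20 : q2 + q2 = 0 := by
    have := addOrderOf_nsmul_eq_zero q2
    rw [hq2] at this
    rw [← two_nsmul]
    exact this
  have hnsurj : ¬ Function.Surjective (fun y : Q => y + y) := by
    intro hs
    have hinj : Function.Injective (fun y : Q => y + y) :=
      Finite.injective_iff_surjective.2 hs
    have : q2 = 0 := hinj (by simpa using hq20)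
    exact hq2ne this
  obtain ⟨s, hs⟩ : ∃ s : Q, ∀ y : Q, y + y ≠ s := by
    rw [Function.Surjective] at hnsurj
    push_neg at hnsurj
    obtain ⟨s, hs⟩ := hnsurj
    exact ⟨s, fun y h => hs y h⟩
  -- transversal for the involution y ↦ s - y
  set σ : Q → Q := fun y => s - y with hσdef
  have hσinv : ∀ y, σ (σ y) = y := by intro y; simp [hσdef]
  have hσfpf : ∀ y : Q, σ y ≠ y := by
    intro y h
    rw [hσdef] at h
    simp only at h
    rw [sub_eq_iff_eq_add] at h
    exact hs y h.symm
  obtain ⟨R, -, hR⟩ := exists_transversal σ hσinv Finset.univ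
    (fun x _ => Finset.mem_univ _) (fun x _ => hσfpf x)
  have hRmem : ∀ x : Q, x ∈ R ↔ σ x ∉ R := fun x => hR x (Finset.mem_univ x)
  have hRcard : R.card = c := by
    have himg : R.image σ = Finset.univ \ R := by
      ext x
      simp only [Finset.mem_image, Finset.mem_sdiff, Finset.mem_univ, true_and]
      constructor
      · rintro ⟨y, hyR, rfl⟩
        exact (hRmem y).1 hyR
      · intro hx
        refine ⟨σ x, ?_, hσinv x⟩
        by_contra hσx
        exact hx (((hRmem x).2 hσx))
    have hinjσ : Function.Injective σ := fun a b h => by rw [← hσinv a, h, hσinv]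
    have h1 : (R.image σ).card = R.card := Finset.card_image_of_injective R hinjσ
    have h2 : (Finset.univ \ R).card = Fintype.card Q - R.card := by
      rw [Finset.card_sdiff_of_subset (Finset.subset_univ R), Finset.card_univ]
    have h3 : R.card ≤ Fintype.card Q := by
      rw [← Finset.card_univ]; exact Finset.card_le_card (Finset.subset_univ R)
    rw [himg, h2, hQcard] at h1
    rw [hQcard] at h3
    omega
  -- representatives
  set eR : Fin c ≃ {x // x ∈ R} := ((R.equivFin).trans (finCongr hRcard)).symm with heRdef
  set y : Fin c → Q := fun t => (eR t : Q) with hydef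
  have hyR : ∀ t, y t ∈ R := fun t => (eR t).2
  have hyinj : Function.Injective y := by
    intro t t' h
    exact eR.injective (Subtype.ext h)
  set x : Fin c → Γ := fun t => (y t).out with hxdef
  have hxy : ∀ t, (QuotientAddGroup.mk (x t) : Q) = y t := fun t => QuotientAddGroup.out_eq' _
  set ω : Γ := s.out with hωdef
  have hωs : (QuotientAddGroup.mk ω : Q) = s := QuotientAddGroup.out_eq' _
  set mkh : Γ →+ Q := QuotientAddGroup.mk' H with hmkdef
  have hmkx : ∀ t, mkh (x t) = y t := by
    intro t; rw [hmkdef, QuotientAddGroup.mk'_apply]; exact hxy t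
  have hmkω : mkh ω = s := by rw [hmkdef, QuotientAddGroup.mk'_apply]; exact hωs
  have hmkφ : ∀ z, mkh (φ z) = 0 := by
    intro z; rw [hmkdef, QuotientAddGroup.mk'_apply]
    exact (QuotientAddGroup.eq_zero_iff _).2 (hφH z)
  -- the global bijection
  set Ψ : Fin c × Bool × ZMod n → Γ := fun p =>
    if p.2.1 then ω - x p.1 - φ p.2.2 else x p.1 + φ p.2.2 with hΨdef
  have hΨf : ∀ t i, Ψ (t, false, i) = x t + φ i := by intro t i; simp [hΨdef]
  have hΨt : ∀ t i, Ψ (t, true, i) = ω - x t - φ i := by intro t i; simp [hΨdef]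
  have hmkΨf : ∀ t i, mkh (x t + φ i) = y t := by
    intro t i; rw [map_add, hmkφ, add_zero, hmkx]
  have hmkΨt : ∀ t i, mkh (ω - x t - φ i) = s - y t := by
    intro t i; rw [map_sub, map_sub, hmkφ, sub_zero, hmkω, hmkx]
  have hnotpair : ∀ t t' (i i' : ZMod n), x t + φ i ≠ ω - x t' - φ i' := by
    intro t t' i i' h
    have hmk := congrArg mkh h
    rw [hmkΨf, hmkΨt] at hmk
    have h1 : σ (y t') ∈ R := by
      show s - y t' ∈ R
      rw [← hmk]; exact hyR t
    exact ((hRmem (y t')).1 (hyR t')) h1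
  have hΨinj : Function.Injective Ψ := by
    rintro ⟨t, ε, i⟩ ⟨t', ε', i'⟩ h
    match ε, ε' with
    | false, false =>
      rw [hΨf, hΨf] at h
      have hmk := congrArg mkh h
      rw [hmkΨf, hmkΨf] at hmk
      have ht : t = t' := hyinj hmk
      subst ht
      have hi : i = i' := hφinj (add_left_cancel h)
      subst hi; rfl
    | false, true =>
      rw [hΨf, hΨt] at h
      exact absurd h (hnotpair t t' i i')
    | true, false =>
      rw [hΨt, hΨf] at h
      exact absurd h.symm (hnotpair t' t i' i)
    | true, true =>
      rw [hΨt, hΨt] at h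
      have hmk := congrArg mkh h
      rw [hmkΨt, hmkΨt] at hmk
      have ht : t = t' := hyinj (sub_right_injective hmk)
      subst ht
      have hi : i = i' := hφinj (sub_right_injective h)
      subst hi; rfl
  have hΨbij : Function.Bijective Ψ :=
    (Fintype.bijective_iff_injective_and_card Ψ).2 ⟨hΨinj, by
      simp only [Fintype.card_prod, Fintype.card_fin, Fintype.card_bool, ZMod.card, hcard]
      ring⟩
  -- the arrays
  set A : Fin c → Fin n → Fin n → Option Γ := fun t i j =>
    if ((j:ℕ):ZMod n) = ((i:ℕ):ZMod n) then some (x t + φ ((i:ℕ):ZMod n))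
    else if ((j:ℕ):ZMod n) = ((i:ℕ):ZMod n) + 1 then some (ω - x t - φ ((i:ℕ):ZMod n))
    else none with hAdef
  have hself : ∀ z : ZMod n, z ≠ z + 1 := fun z h => hone (left_eq_add.mp h)
  have hA1 : ∀ t (z : ZMod n), A t (zToFin z) (zToFin z) = some (x t + φ z) := by
    intro t z
    simp only [hAdef, zToFin_cast, if_pos rfl]
  have hA2 : ∀ t (z : ZMod n), A t (zToFin z) (zToFin (z+1)) = some (ω - x t - φ z) := by
    intro t z
    simp only [hAdef, zToFin_cast]
    rw [if_neg (fun h => hself z h.symm)]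
    simp
  have hAnone : ∀ t (i j : Fin n), ((j:ℕ):ZMod n) ≠ ((i:ℕ):ZMod n) →
      ((j:ℕ):ZMod n) ≠ ((i:ℕ):ZMod n) + 1 → A t i j = none := by
    intro t i j h1 h2
    simp only [hAdef, if_neg h1, if_neg h2]
  have hAsome : ∀ t (i j : Fin n), (A t i j).isSome = true ↔
      (((j:ℕ):ZMod n) = ((i:ℕ):ZMod n) ∨ ((j:ℕ):ZMod n) = ((i:ℕ):ZMod n) + 1) := by
    intro t i j
    simp only [hAdef]
    split_ifs with h1 h2
    · simp [h1]
    · simp [h1, h2]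
    · simp [h1, h2]
  -- reading a cell
  have hval : ∀ (t' : Fin c) (i' j' : Fin n) (v : Γ), A t' i' j' = some v →
      ∃ (ε : Bool) (z : ZMod n), Ψ (t', ε, z) = v ∧ i' = zToFin z ∧
        j' = zToFin (if ε then z + 1 else z) := by
    intro t' i' j' v hv
    simp only [hAdef] at hv
    by_cases h1 : ((j':ℕ):ZMod n) = ((i':ℕ):ZMod n)
    · rw [if_pos h1] at hv
      refine ⟨false, ((i':ℕ):ZMod n), ?_, (zToFin_finCast i').symm, ?_⟩
      · rw [hΨf]; exact Option.some_inj.1 hv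
      · simp only [Bool.false_eq_true, if_false]
        rw [← h1, zToFin_finCast]
    · rw [if_neg h1] at hv
      by_cases h2 : ((j':ℕ):ZMod n) = ((i':ℕ):ZMod n) + 1
      · rw [if_pos h2] at hv
        refine ⟨true, ((i':ℕ):ZMod n), ?_, (zToFin_finCast i').symm, ?_⟩
        · rw [hΨt]; exact Option.some_inj.1 hv
        · simp only [if_true]
          rw [← h2, zToFin_finCast]
      · rw [if_neg h2] at hv
        exact absurd hv (by simp)
  -- uniqueness of cells
  have huniq : ∀ v : Γ, ∃! p : Fin c × Fin n × Fin n, A p.1 p.2.1 p.2.2 = some v := by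
    intro v
    obtain ⟨⟨t, ε, i⟩, hp⟩ := hΨbij.surjective v
    refine ⟨(t, zToFin i, zToFin (if ε then i + 1 else i)), ?_, ?_⟩
    · cases ε
      · show A t (zToFin i) (zToFin i) = some v
        rw [hA1]
        exact congrArg some ((hΨf t i).symm.trans hp)
      · show A t (zToFin i) (zToFin (i + 1)) = some v
        rw [hA2]
        exact congrArg some ((hΨt t i).symm.trans hp)
    · rintro ⟨t', i', j'⟩ hq
      obtain ⟨ε', z', hΨv, hi', hj'⟩ := hval t' i' j' v hq
      have htrip : (t', ε', z') = (t, ε, i) := hΨinj (hΨv.trans hp.symm)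
      simp only [Prod.mk.injEq] at htrip
      obtain ⟨ht, hε, hz⟩ := htrip
      subst ht; subst hε; subst hz
      simp only [Prod.mk.injEq]
      exact ⟨trivial, hi', hj'⟩
  -- row counts
  have hrowcard : ∀ (t : Fin c) (i : Fin n),
      (Finset.univ.filter fun j : Fin n => (A t i j).isSome).card = 2 := by
    intro t i
    exact filter_two_card ((i:ℕ):ZMod n) (((i:ℕ):ZMod n)+1) (hself _) _ (hAsome t i)
  have hAsome' : ∀ t (i j : Fin n), (A t i j).isSome = true ↔
      (((i:ℕ):ZMod n) = ((j:ℕ):ZMod n) ∨ ((i:ℕ):ZMod n) = ((j:ℕ):ZMod n) - 1) := by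
    intro t i j
    rw [hAsome]
    constructor
    · rintro (h | h)
      · exact Or.inl h.symm
      · right; rw [h]; ring
    · rintro (h | h)
      · exact Or.inl h.symm
      · right; rw [h]; ring
  have hcolcard : ∀ (t : Fin c) (j : Fin n),
      (Finset.univ.filter fun i : Fin n => (A t i j).isSome).card = 2 := by
    intro t j
    exact filter_two_card ((j:ℕ):ZMod n) (((j:ℕ):ZMod n) - 1)
      (fun h => hone (sub_eq_self.1 h.symm)) _ (fun i => hAsome' t i j)
  -- row sums
  have hrsum : ∀ (t : Fin c) (i : Fin n), (∑ j, (A t i j).getD 0) = ω := by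
    intro t i
    have hiz : i = zToFin ((i:ℕ):ZMod n) := (zToFin_finCast i).symm
    rw [hiz]
    generalize ((i:ℕ):ZMod n) = z
    rw [sum_two_support (fun j => (A t (zToFin z) j).getD 0) (zToFin z) (zToFin (z+1))
        (fun h => hself _ (zToFin_inj h))
        (fun j hj1 hj2 => by
          show (A t (zToFin z) j).getD 0 = 0
          rw [hAnone t (zToFin z) j]
          · rfl
          · rw [zToFin_cast]; intro h; exact hj1 (by rw [← zToFin_finCast j, h])
          · rw [zToFin_cast]; intro h; exact hj2 (by rw [← zToFin_finCast j, h]))]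
    rw [hA1 t z, hA2 t z]
    show (x t + φ z) + (ω - x t - φ z) = ω
    abel
  -- column sums
  have hcsum : ∀ (t : Fin c) (j : Fin n), (∑ i, (A t i j).getD 0) = ω + g := by
    intro t j
    have hjw : j = zToFin ((j:ℕ):ZMod n) := (zToFin_finCast j).symm
    rw [hjw]
    generalize ((j:ℕ):ZMod n) = w
    rw [sum_two_support (fun i => (A t i (zToFin w)).getD 0) (zToFin w) (zToFin (w-1))
        (fun h => hone (sub_eq_self.1 (zToFin_inj h).symm))
        (fun i' h1 h2 => by
          show (A t i' (zToFin w)).getD 0 = 0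
          rw [hAnone t i' (zToFin w)]
          · rfl
          · rw [zToFin_cast]; intro h; exact h1 (by rw [← zToFin_finCast i', ← h])
          · rw [zToFin_cast]; intro h
            exact h2 (by rw [← zToFin_finCast i']; congr 1; rw [h]; ring))]
    rw [hA1 t w]
    have hw1 : zToFin w = zToFin ((w-1)+1) := by congr 1; ring
    rw [hw1, hA2 t (w-1)]
    show (x t + φ w) + (ω - x t - φ (w-1)) = ω + g
    have hφw : φ w = φ (w-1) + g := by
      rw [← hφone, ← map_add]
      congr 1
      ring
    rw [hφw]
    abel
  -- the diagonal condition
  have hdiag : ∀ t : Fin c, ∃ ℓ : ZMod n, ∀ i j : Fin n,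
      (A t i j).isSome = true ↔
        ∃ u : ℕ, u < 2 ∧ ((j:ℕ):ZMod n) - ((i:ℕ):ZMod n) = ℓ + (u:ZMod n) := by
    intro t
    refine ⟨0, fun i j => ?_⟩
    rw [hAsome]
    constructor
    · rintro (h | h)
      · exact ⟨0, by omega, by rw [h]; simp⟩
      · exact ⟨1, by omega, by rw [h]; push_cast; ring⟩
    · rintro ⟨u, hu, hequ⟩
      interval_cases u
      · left
        have h0 : ((j:ℕ):ZMod n) - ((i:ℕ):ZMod n) = 0 := by simpa using hequ
        exact sub_eq_zero.1 h0
      · right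
        have h1 : ((j:ℕ):ZMod n) - ((i:ℕ):ZMod n) = 1 := by simpa using hequ
        rw [← h1]; ring
  exact ⟨A, ⟨huniq, hrowcard, hcolcard, ω, ω + g, hrsum, hcsum⟩, hdiag⟩

lemma forward_dir (n c : ℕ) (hn : 2 ≤ n) (hc : 1 ≤ c)
    (Γ : Type*) [AddCommGroup Γ] (A : Fin c → Fin n → Fin n → Option Γ)
    (hA : IsDiagonalMRS n 2 c A) : ∃ g : Γ, addOrderOf g = n := by
  classical
  haveI : NeZero n := ⟨by omega⟩
  have hone : (1 : ZMod n) ≠ 0 := one_ne_zero_zmod hn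
  obtain ⟨⟨huniq, hrow, hcol, ω, δ, hrs, hcs⟩, hdiag⟩ := hA
  set t0 : Fin c := ⟨0, hc⟩ with ht0
  obtain ⟨ℓ, hℓ⟩ := hdiag t0
  -- characterization of filled cells
  have hsome : ∀ i j : Fin n, (A t0 i j).isSome = true ↔
      (((j:ℕ):ZMod n) = ((i:ℕ):ZMod n) + ℓ ∨ ((j:ℕ):ZMod n) = ((i:ℕ):ZMod n) + ℓ + 1) := by
    intro i j
    rw [hℓ i j]
    constructor
    · rintro ⟨u, hu, hequ⟩
      interval_cases u
      · left
        have h0 : ((j:ℕ):ZMod n) - ((i:ℕ):ZMod n) = ℓ := by simpa using hequ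
        rw [sub_eq_iff_eq_add] at h0
        rw [h0]; ring
      · right
        have h1 : ((j:ℕ):ZMod n) - ((i:ℕ):ZMod n) = ℓ + 1 := by simpa using hequ
        rw [sub_eq_iff_eq_add] at h1
        rw [h1]; ring
    · rintro (h | h)
      · exact ⟨0, by omega, by rw [h]; push_cast; ring⟩
      · exact ⟨1, by omega, by rw [h]; push_cast; ring⟩
  have hnone : ∀ i j : Fin n, ((j:ℕ):ZMod n) ≠ ((i:ℕ):ZMod n) + ℓ →
      ((j:ℕ):ZMod n) ≠ ((i:ℕ):ZMod n) + ℓ + 1 → A t0 i j = none := by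
    intro i j h1 h2
    rw [← Option.not_isSome_iff_eq_none]
    intro h
    rcases (hsome i j).1 h with h' | h'
    · exact h1 h'
    · exact h2 h'
  have hFsome : ∀ z : ZMod n, (A t0 (zToFin z) (zToFin (z + ℓ))).isSome = true := by
    intro z
    rw [hsome]
    left
    rw [zToFin_cast, zToFin_cast]
  have hFbsome : ∀ z : ZMod n, (A t0 (zToFin z) (zToFin (z + ℓ + 1))).isSome = true := by
    intro z
    rw [hsome]
    right
    rw [zToFin_cast, zToFin_cast]
  set F : ZMod n → Γ := fun z => (A t0 (zToFin z) (zToFin (z + ℓ))).getD 0 with hFdef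
  set Fb : ZMod n → Γ := fun z => (A t0 (zToFin z) (zToFin (z + ℓ + 1))).getD 0 with hFbdef
  -- row sums
  have hrow' : ∀ z : ZMod n, F z + Fb z = ω := by
    intro z
    have := hrs t0 (zToFin z)
    rw [sum_two_support (fun j => (A t0 (zToFin z) j).getD 0) (zToFin (z + ℓ))
        (zToFin (z + ℓ + 1))
        (fun h => hone (left_eq_add.mp (zToFin_inj h)))
        (fun j hj1 hj2 => by
          show (A t0 (zToFin z) j).getD 0 = 0
          rw [hnone (zToFin z) j ?_ ?_]
          · rfl
          · rw [zToFin_cast]; intro h; exact hj1 (by rw [← zToFin_finCast j, h])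
          · rw [zToFin_cast]; intro h; exact hj2 (by rw [← zToFin_finCast j, h]))] at this
    exact this
  -- column sums
  have hcol' : ∀ z : ZMod n, Fb z + F (z + 1) = δ := by
    intro z
    have hz1 : zToFin (z + ℓ + 1) = zToFin ((z + 1) + ℓ) := by congr 1; ring
    have hsum := hcs t0 (zToFin (z + ℓ + 1))
    rw [sum_two_support (fun i => (A t0 i (zToFin (z + ℓ + 1))).getD 0) (zToFin z)
        (zToFin (z + 1))
        (fun h => hone (left_eq_add.mp (zToFin_inj h)))
        (fun i' h1 h2 => by
          show (A t0 i' (zToFin (z + ℓ + 1))).getD 0 = 0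
          rw [hnone i' (zToFin (z + ℓ + 1)) ?_ ?_]
          · rfl
          · rw [zToFin_cast]; intro h
            exact h2 (by rw [← zToFin_finCast i']; congr 1; linear_combination -h)
          · rw [zToFin_cast]; intro h
            exact h1 (by rw [← zToFin_finCast i']; congr 1; linear_combination -h))] at hsum
    simp only [hFdef, hFbdef]
    rw [← hz1]
    exact hsum
  set g := δ - ω with hgdef
  have hrec : ∀ z : ZMod n, F (z + 1) = F z + g := by
    intro z
    have h1 := hrow' z
    have h2 := hcol' z
    have hFb : Fb z = ω - F z := by rw [← h1]; abel
    rw [hFb] at h2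
    rw [hgdef, ← h2]
    abel
  have hiter : ∀ m : ℕ, F ((m : ℕ) : ZMod n) = F 0 + m • g := by
    intro m
    induction m with
    | zero => simp
    | succ k ih =>
      have hc1 : (((k + 1 : ℕ)) : ZMod n) = ((k : ℕ) : ZMod n) + 1 := by push_cast; ring
      rw [hc1, hrec, ih, succ_nsmul]
      abel
  have hng : n • g = 0 := by
    have hh := hiter n
    rw [ZMod.natCast_self] at hh
    exact (left_eq_add.mp hh)
  have hml : ∀ m, m < n → 0 < m → m • g ≠ 0 := by
    intro m hmn hm0 hmg
    have hFm : F ((m : ℕ) : ZMod n) = F 0 := by rw [hiter, hmg, add_zero]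
    obtain ⟨v, hv⟩ := Option.isSome_iff_exists.1 (hFsome ((m : ℕ) : ZMod n))
    obtain ⟨v0, hv0⟩ := Option.isSome_iff_exists.1 (hFsome 0)
    have hvv : v = v0 := by
      have e1 : F ((m : ℕ) : ZMod n) = v := by simp only [hFdef]; rw [hv]; rfl
      have e2 : F 0 = v0 := by simp only [hFdef]; rw [hv0]; rfl
      rw [← e1, ← e2, hFm]
    obtain ⟨p, hp, hpu⟩ := huniq v
    have hp1 := hpu (t0, zToFin ((m : ℕ) : ZMod n), zToFin (((m : ℕ) : ZMod n) + ℓ)) hv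
    have hp2 := hpu (t0, zToFin 0, zToFin (0 + ℓ)) (by rw [hvv]; exact hv0)
    have heq := hp1.trans hp2.symm
    simp only [Prod.mk.injEq] at heq
    have hz : ((m : ℕ) : ZMod n) = 0 := zToFin_inj heq.2.1
    rw [ZMod.natCast_eq_zero_iff] at hz
    exact absurd (Nat.le_of_dvd hm0 hz) (by omega)
  exact ⟨g, (addOrderOf_eq_iff (by omega)).2 ⟨hng, hml⟩⟩

/-- Let `n ≥ 2`, `c ≥ 1`. A diagonal `MRS_Γ(n;2;c)` exists if and only if the abelian group
`Γ` of order `2·n·c` contains an element of order `n`. -/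
theorem stmt11 (n c : ℕ) (hn : 2 ≤ n) (hc : 1 ≤ c)
    (Γ : Type*) [AddCommGroup Γ] [Fintype Γ] (hcard : Fintype.card Γ = 2 * n * c) :
    (∃ A : Fin c → Fin n → Fin n → Option Γ, IsDiagonalMRS n 2 c A) ↔
      ∃ g : Γ, addOrderOf g = n := by
  constructor
  · rintro ⟨A, hA⟩
    exact forward_dir n c hn hc Γ A hA
  · rintro ⟨g, hg⟩
    exact backward_dir n c hn hc Γ hcard g hg
end

section
/- Let b, n, c be positive integers such that 2 ≤ 2b ≤ n, and let Γ be a finite abelian group of order 2·n·b·c. If Γ contains an element of order n, then there exists a diagonal Γ-magic rectangle set MRS_Γ(n;2b;c). -/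
open Finset

private def entAux {Γ : Type*} [AddCommGroup Γ] (g w : Γ) (rep : ℕ → ℕ → Γ)
    (t a m : ℕ) : Γ :=
  if m % 2 = 0 then rep (m / 2) t + a • g else w - rep (m / 2) t - a • g

private def phiAux (n : ℕ) [NeZero n] (d : ZMod n) : Fin n := ⟨d.val, ZMod.val_lt d⟩

private def dgAux (n : ℕ) (i j : Fin n) : ℕ :=
  (((j : ℕ) : ZMod n) - ((i : ℕ) : ZMod n)).val

private def arrAux {Γ : Type*} [AddCommGroup Γ] (b n c : ℕ) (g w : Γ) (rep : ℕ → ℕ → Γ)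
    (t : Fin c) (i j : Fin n) : Option Γ :=
  if dgAux n i j < 2 * b then some (entAux g w rep t i (dgAux n i j)) else none


private lemma sum_range_two_mul' {M : Type*} [AddCommMonoid M] (f : ℕ → M) (b : ℕ) :
    ∑ u ∈ Finset.range (2 * b), f u = ∑ r ∈ Finset.range b, (f (2 * r) + f (2 * r + 1)) := by
  induction b with
  | zero => simp
  | succ b ih =>
      rw [show 2 * (b + 1) = (2 * b + 1) + 1 by ring, Finset.sum_range_succ,
        Finset.sum_range_succ, Finset.sum_range_succ, ih, add_assoc]

private lemma exists_pairing {α : Type*} [Fintype α] [DecidableEq α] (σ : α → α)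
    (hinv : ∀ x, σ (σ x) = x) (hfix : ∀ x, σ x ≠ x) :
    ∃ T : Finset α, ∀ x, x ∈ T ↔ σ x ∉ T := by
  have hinj : Function.Injective σ := Function.LeftInverse.injective hinv
  suffices h : ∀ (N : ℕ) (S : Finset α), S.card ≤ N → (∀ x, x ∈ S ↔ σ x ∈ S) →
      ∃ T, T ⊆ S ∧ ∀ x ∈ S, (x ∈ T ↔ σ x ∉ T) by
    obtain ⟨T, _, hT⟩ := h Finset.univ.card Finset.univ le_rfl (by simp)
    exact ⟨T, fun x => hT x (Finset.mem_univ x)⟩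
  intro N
  induction N with
  | zero =>
      intro S hS _
      refine ⟨∅, Finset.empty_subset _, fun x hx => ?_⟩
      simp only [Nat.le_zero, Finset.card_eq_zero] at hS
      simp [hS] at hx
  | succ N ih =>
      intro S hS hcl
      rcases S.eq_empty_or_nonempty with rfl | ⟨x, hx⟩
      · exact ⟨∅, by simp, by simp⟩
      · have hσx : σ x ∈ S := (hcl x).mp hx
        have hclosed' : ∀ y, y ∈ S \ {x, σ x} ↔ σ y ∈ S \ {x, σ x} := by
          intro y
          simp only [Finset.mem_sdiff, Finset.mem_insert, Finset.mem_singleton]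
          constructor
          · rintro ⟨hyS, hy⟩
            push_neg at hy
            exact ⟨(hcl y).mp hyS, by
              push_neg
              exact ⟨fun h => hy.2 (by rw [← hinv y, h]), fun h => hy.1 (hinj h)⟩⟩
          · rintro ⟨hyS, hy⟩
            push_neg at hy
            refine ⟨by have := (hcl (σ y)).mp hyS; rwa [hinv] at this, ?_⟩
            push_neg
            exact ⟨fun h => hy.2 (by rw [h]), fun h => hy.1 (by rw [h, hinv])⟩
        have hcard' : (S \ {x, σ x}).card ≤ N := by
          have hss : S \ {x, σ x} ⊂ S := by
            refine Finset.ssubset_iff_of_subset (Finset.sdiff_subset) |>.mpr ?_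
            exact ⟨x, hx, by simp⟩
          have := Finset.card_lt_card hss
          omega
        obtain ⟨T', hT'sub, hT'⟩ := ih (S \ {x, σ x}) hcard' hclosed'
        have hxT' : x ∉ T' := fun h => by have := hT'sub h; simp at this
        have hσxT' : σ x ∉ T' := fun h => by have := hT'sub h; simp at this
        refine ⟨insert x T', ?_, ?_⟩
        · intro y hy
          rcases Finset.mem_insert.mp hy with rfl | h
          · exact hx
          · exact Finset.sdiff_subset (hT'sub h)
        · intro y hyS
          by_cases h1 : y = x
          · subst h1
            simp [Finset.mem_insert, hfix y, hσxT', Ne.symm (hfix y)]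
          · by_cases h2 : y = σ x
            · subst h2
              have h3 : σ x ≠ x := hfix x
              simp [Finset.mem_insert, h3, hσxT', hinv x, hxT']
            · have hyS' : y ∈ S \ {x, σ x} := by simp [hyS, h1, h2]
              have hy1 : σ y ≠ x := fun h => h2 (by rw [← hinv y, h])
              rw [Finset.mem_insert, Finset.mem_insert]
              simp only [h1, false_or, hy1]
              exact hT' y hyS'

private lemma groupIdent1 {Γ : Type*} [AddCommGroup Γ] (a b w : Γ) :
    a + b + (w - a - b) = w := by abel

private lemma groupIdent2 {Γ : Type*} [AddCommGroup Γ] (a b w g : Γ) :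
    a + (b + g) + (w - a - b) = w + g := by abel

private lemma construction {Γ : Type*} [AddCommGroup Γ] [Fintype Γ]
    (b n c : ℕ) (hb : 0 < b) (hn : 2 * b ≤ n) (hc : 0 < c) [NeZero n]
    (hcard : Fintype.card Γ = 2 * n * b * c)
    (g w : Γ) (rep : ℕ → ℕ → Γ) (hng : n • g = 0)
    (hinj : ∀ (t t' : Fin c) (i i' : Fin n) (m m' : ℕ), m < 2 * b → m' < 2 * b →
      entAux g w rep t i m = entAux g w rep t' i' m' →
      t = t' ∧ i = i' ∧ m = m') :
    ∃ A : Fin c → Fin n → Fin n → Option Γ, IsDiagonalMRS n (2 * b) c A := by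
  classical
  have hn0 : 0 < n := by omega
  -- basic smul facts
  have hsmul_mod : ∀ a : ℕ, a • g = (a % n) • g := by
    intro a
    conv_lhs => rw [← Nat.div_add_mod a n, add_nsmul, mul_nsmul, hng, smul_zero]
    rw [zero_add]
  have hval_smul : ∀ a : ℕ, ((a : ZMod n)).val • g = a • g := by
    intro a
    rw [ZMod.val_natCast, ← hsmul_mod]
  have hcast_val : ∀ d : ZMod n, ((d.val : ℕ) : ZMod n) = d := fun d =>
    ZMod.natCast_rightInverse d
  have hval_succ_smul : ∀ d : ZMod n, (d + 1).val • g = d.val • g + g := by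
    intro d
    have h1 : ((d.val + 1 : ℕ) : ZMod n) = d + 1 := by
      push_cast [hcast_val d]
      rfl
    rw [← h1, hval_smul, succ_nsmul]
  have hψϕ : ∀ d : ZMod n, (((phiAux n d : Fin n) : ℕ) : ZMod n) = d := fun d =>
    hcast_val d
  have hϕψ : ∀ j : Fin n, phiAux n (((j : ℕ) : ZMod n)) = j := fun j =>
    Fin.ext (ZMod.val_natCast_of_lt j.isLt)
  have hdgcast : ∀ i j : Fin n,
      ((dgAux n i j : ℕ) : ZMod n) = ((j : ℕ) : ZMod n) - ((i : ℕ) : ZMod n) := fun i j =>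
    hcast_val _
  have hnatinj : ∀ u v : ℕ, u < n → v < n → ((u : ZMod n) = (v : ZMod n)) → u = v := by
    intro u v hu hv h
    have := congrArg ZMod.val h
    rwa [ZMod.val_natCast_of_lt hu, ZMod.val_natCast_of_lt hv] at this
  set A : Fin c → Fin n → Fin n → Option Γ := arrAux b n c g w rep with hA
  have hA_eq : ∀ t i j, A t i j =
      if dgAux n i j < 2 * b then some (entAux g w rep t i (dgAux n i j)) else none := by
    intro t i j; rfl
  have hisSome : ∀ t i j, (A t i j).isSome = true ↔ dgAux n i j < 2 * b := by
    intro t i j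
    rw [hA_eq]
    by_cases h : dgAux n i j < 2 * b <;> simp [h]
  have hdg_row : ∀ (i : Fin n) (u : ℕ), u < 2 * b →
      dgAux n i (phiAux n (((i : ℕ) : ZMod n) + (u : ℕ))) = u := by
    intro i u hu
    have h1 : (((phiAux n (((i : ℕ) : ZMod n) + (u : ℕ)) : Fin n) : ℕ) : ZMod n)
        - ((i : ℕ) : ZMod n) = (u : ZMod n) := by rw [hψϕ]; ring
    rw [dgAux, h1]
    exact ZMod.val_natCast_of_lt (lt_of_lt_of_le hu hn)
  have hdg_col : ∀ (j : Fin n) (u : ℕ), u < 2 * b →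
      dgAux n (phiAux n (((j : ℕ) : ZMod n) - (u : ℕ))) j = u := by
    intro j u hu
    have h1 : ((j : ℕ) : ZMod n)
        - (((phiAux n (((j : ℕ) : ZMod n) - (u : ℕ)) : Fin n) : ℕ) : ZMod n)
        = (u : ZMod n) := by rw [hψϕ]; ring
    rw [dgAux, h1]
    exact ZMod.val_natCast_of_lt (lt_of_lt_of_le hu hn)
  have hrowset : ∀ (t : Fin c) (i : Fin n),
      Finset.univ.filter (fun j => (A t i j).isSome) =
        (Finset.range (2 * b)).image (fun u => phiAux n (((i : ℕ) : ZMod n) + (u : ℕ))) := by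
    intro t i
    ext j
    simp only [Finset.mem_filter, Finset.mem_univ, true_and, Finset.mem_image,
      Finset.mem_range, hisSome]
    constructor
    · intro h
      refine ⟨dgAux n i j, h, ?_⟩
      have h2 : ((i : ℕ) : ZMod n) + ((dgAux n i j : ℕ) : ZMod n) = ((j : ℕ) : ZMod n) := by
        rw [hdgcast]; ring
      rw [h2, hϕψ]
    · rintro ⟨u, hu, rfl⟩
      rw [hdg_row i u hu]; exact hu
  have hcolset : ∀ (t : Fin c) (j : Fin n),
      Finset.univ.filter (fun i => (A t i j).isSome) =
        (Finset.range (2 * b)).image (fun u => phiAux n (((j : ℕ) : ZMod n) - (u : ℕ))) := by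
    intro t j
    ext i
    simp only [Finset.mem_filter, Finset.mem_univ, true_and, Finset.mem_image,
      Finset.mem_range, hisSome]
    constructor
    · intro h
      refine ⟨dgAux n i j, h, ?_⟩
      have h2 : ((j : ℕ) : ZMod n) - ((dgAux n i j : ℕ) : ZMod n) = ((i : ℕ) : ZMod n) := by
        rw [hdgcast]; ring
      rw [h2, hϕψ]
    · rintro ⟨u, hu, rfl⟩
      rw [hdg_col j u hu]; exact hu
  have hrow_inj : ∀ i : Fin n, ∀ u ∈ Finset.range (2 * b), ∀ v ∈ Finset.range (2 * b),
      phiAux n (((i : ℕ) : ZMod n) + (u : ℕ)) = phiAux n (((i : ℕ) : ZMod n) + (v : ℕ)) →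
      u = v := by
    intro i u hu v hv h
    rw [Finset.mem_range] at hu hv
    have h2 : ((i : ℕ) : ZMod n) + (u : ZMod n) = ((i : ℕ) : ZMod n) + (v : ZMod n) := by
      rw [← hψϕ (((i : ℕ) : ZMod n) + (u : ℕ)), h, hψϕ]
    exact hnatinj u v (lt_of_lt_of_le hu hn) (lt_of_lt_of_le hv hn) (add_left_cancel h2)
  have hcol_inj : ∀ j : Fin n, ∀ u ∈ Finset.range (2 * b), ∀ v ∈ Finset.range (2 * b),
      phiAux n (((j : ℕ) : ZMod n) - (u : ℕ)) = phiAux n (((j : ℕ) : ZMod n) - (v : ℕ)) →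
      u = v := by
    intro j u hu v hv h
    rw [Finset.mem_range] at hu hv
    have h2 : ((j : ℕ) : ZMod n) - (u : ZMod n) = ((j : ℕ) : ZMod n) - (v : ZMod n) := by
      rw [← hψϕ (((j : ℕ) : ZMod n) - (u : ℕ)), h, hψϕ]
    exact hnatinj u v (lt_of_lt_of_le hu hn) (lt_of_lt_of_le hv hn) (sub_right_inj.mp h2)
  refine ⟨A, ⟨?_, ?_, ?_, ?_⟩, ?_⟩
  · -- uniqueness
    intro γ
    have hbij : Function.Bijective (fun q : (Fin c × Fin n) × Fin (2 * b) =>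
        entAux g w rep q.1.1 q.1.2 q.2) := by
      rw [Fintype.bijective_iff_injective_and_card]
      constructor
      · rintro ⟨⟨t, i⟩, m⟩ ⟨⟨t', i'⟩, m'⟩ h
        obtain ⟨h1, h2, h3⟩ := hinj t t' i i' m m' m.isLt m'.isLt h
        simp only [Prod.mk.injEq]
        exact ⟨⟨h1, h2⟩, Fin.ext h3⟩
      · simp only [Fintype.card_prod, Fintype.card_fin, hcard]
        ring
    obtain ⟨⟨⟨t, i⟩, m⟩, hq⟩ := hbij.surjective γ
    refine ⟨⟨t, i, phiAux n (((i : ℕ) : ZMod n) + ((m : ℕ) : ℕ))⟩, ?_, ?_⟩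
    · show A t i _ = some γ
      rw [hA_eq, hdg_row i m m.isLt, if_pos m.isLt]
      exact congrArg some hq
    · rintro ⟨t', i', j'⟩ h'
      have hsome : (A t' i' j').isSome = true := by rw [h']; rfl
      have hdlt : dgAux n i' j' < 2 * b := (hisSome _ _ _).mp hsome
      rw [hA_eq, if_pos hdlt, Option.some_inj] at h'
      have h'' : entAux g w rep t' i' (dgAux n i' j') = entAux g w rep t i m := by
        rw [h', ← hq]
      obtain ⟨h1, h2, h3⟩ := hinj t' t i' i _ _ hdlt m.isLt h''
      have hj' : j' = phiAux n (((i : ℕ) : ZMod n) + ((m : ℕ) : ℕ)) := by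
        have h4 : ((i' : ℕ) : ZMod n) + ((dgAux n i' j' : ℕ) : ZMod n)
            = ((j' : ℕ) : ZMod n) := by rw [hdgcast]; ring
        rw [← hϕψ j', ← h4, h3, h2]
      simp only [Prod.mk.injEq]
      exact ⟨h1, h2, hj'⟩
  · -- row cardinalities
    intro t i
    rw [hrowset t i, Finset.card_image_of_injOn
      (fun u hu v hv h => hrow_inj i u hu v hv h), Finset.card_range]
  · -- column cardinalities
    intro t j
    rw [hcolset t j, Finset.card_image_of_injOn
      (fun u hu v hv h => hcol_inj j u hu v hv h), Finset.card_range]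
  · -- sums
    refine ⟨b • w, b • (w + g), ?_, ?_⟩
    · intro t i
      have h0 : ∑ j ∈ Finset.univ.filter (fun j => (A t i j).isSome), (A t i j).getD 0
          = ∑ j : Fin n, (A t i j).getD 0 := by
        apply Finset.sum_filter_of_ne
        intro j _ hne
        by_contra hlt
        rw [hisSome] at hlt
        rw [hA_eq, if_neg hlt] at hne
        exact hne rfl
      rw [← h0, hrowset t i, Finset.sum_image (hrow_inj i)]
      have h1 : ∀ u ∈ Finset.range (2 * b),
          (A t i (phiAux n (((i : ℕ) : ZMod n) + (u : ℕ)))).getD 0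
            = entAux g w rep t i u := by
        intro u hu
        rw [Finset.mem_range] at hu
        rw [hA_eq, hdg_row i u hu, if_pos hu, Option.getD_some]
      rw [Finset.sum_congr rfl h1, sum_range_two_mul']
      have h2 : ∀ r ∈ Finset.range b,
          entAux g w rep t i (2 * r) + entAux g w rep t i (2 * r + 1) = w := by
        intro r _
        have e1 : (2 * r) % 2 = 0 := by omega
        have e2 : (2 * r) / 2 = r := by omega
        have e3 : (2 * r + 1) % 2 = 1 := by omega
        have e4 : (2 * r + 1) / 2 = r := by omega
        simp only [entAux, e1, e2, e3, e4]
        simp only [if_true, if_false]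
        exact groupIdent1 _ _ _
      rw [Finset.sum_congr rfl h2, Finset.sum_const, Finset.card_range]
    · intro t j
      have h0 : ∑ i ∈ Finset.univ.filter (fun i => (A t i j).isSome), (A t i j).getD 0
          = ∑ i : Fin n, (A t i j).getD 0 := by
        apply Finset.sum_filter_of_ne
        intro i _ hne
        by_contra hlt
        rw [hisSome] at hlt
        rw [hA_eq, if_neg hlt] at hne
        exact hne rfl
      rw [← h0, hcolset t j, Finset.sum_image (hcol_inj j)]
      have h1 : ∀ u ∈ Finset.range (2 * b),
          (A t (phiAux n (((j : ℕ) : ZMod n) - (u : ℕ))) j).getD 0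
            = entAux g w rep t ((((j : ℕ) : ZMod n) - (u : ℕ)).val) u := by
        intro u hu
        rw [Finset.mem_range] at hu
        rw [hA_eq, hdg_col j u hu, if_pos hu, Option.getD_some]
        rfl
      rw [Finset.sum_congr rfl h1, sum_range_two_mul']
      have h2 : ∀ r ∈ Finset.range b,
          entAux g w rep t ((((j : ℕ) : ZMod n) - ((2 * r : ℕ) : ℕ)).val) (2 * r)
            + entAux g w rep t ((((j : ℕ) : ZMod n) - ((2 * r + 1 : ℕ) : ℕ)).val) (2 * r + 1)
            = w + g := by
        intro r _
        have e1 : (2 * r) % 2 = 0 := by omega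
        have e2 : (2 * r) / 2 = r := by omega
        have e3 : (2 * r + 1) % 2 = 1 := by omega
        have e4 : (2 * r + 1) / 2 = r := by omega
        have e5 : ((j : ℕ) : ZMod n) - ((2 * r : ℕ) : ZMod n)
            = (((j : ℕ) : ZMod n) - ((2 * r + 1 : ℕ) : ZMod n)) + 1 := by
          push_cast
          ring
        simp only [entAux, e1, e2, e3, e4]
        simp only [if_true, if_false]
        rw [e5, hval_succ_smul]
        exact groupIdent2 _ _ _ _
      rw [Finset.sum_congr rfl h2, Finset.sum_const, Finset.card_range]
  · -- diagonal structure
    intro t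
    refine ⟨0, fun i j => ?_⟩
    rw [hisSome]
    constructor
    · intro h
      exact ⟨dgAux n i j, h, by rw [zero_add]; exact (hdgcast i j).symm⟩
    · rintro ⟨u, hu, he⟩
      rw [zero_add] at he
      have h2 : dgAux n i j = u := by
        rw [dgAux, he]
        exact ZMod.val_natCast_of_lt (lt_of_lt_of_le hu hn)
      omega
/-- Let `2 ≤ 2b ≤ n` and let `Γ` be an abelian group of order `2·n·b·c`. If `Γ` contains an
element of order `n`, then there exists a diagonal `MRS_Γ(n;2b;c)`. -/
theorem stmt12 (b n c : ℕ) (hb : 0 < b) (hn : 2 * b ≤ n) (hbn : 2 ≤ 2 * b) (hc : 0 < c)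
    (Γ : Type*) [AddCommGroup Γ] [Fintype Γ] (hcard : Fintype.card Γ = 2 * n * b * c)
    (hg : ∃ g : Γ, addOrderOf g = n) :
    ∃ A : Fin c → Fin n → Fin n → Option Γ, IsDiagonalMRS n (2 * b) c A := by
  classical
  obtain ⟨g, hgord⟩ := hg
  have hn0 : 0 < n := by omega
  haveI : NeZero n := ⟨hn0.ne'⟩
  set H : AddSubgroup Γ := AddSubgroup.zmultiples g with hHdef
  haveI : Fintype (Γ ⧸ H) := Fintype.ofFinite _
  have hng : n • g = 0 := by rw [← hgord]; exact addOrderOf_nsmul_eq_zero g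
  have hmk_smul : ∀ a : ℕ, (QuotientAddGroup.mk (a • g) : Γ ⧸ H) = 0 := by
    intro a
    rw [QuotientAddGroup.eq_zero_iff]
    exact AddSubgroup.mem_zmultiples_iff.mpr ⟨(a : ℤ), by simp⟩
  have hsmul_key : ∀ a a' : ℕ, a ≤ a' → a' < n → a • g = a' • g → a = a' := by
    intro a a' hle ha' h
    have h2 : (a' - a) • g = 0 := by
      rw [sub_nsmul g hle, ← h]
      simp
    have h3 : n ∣ (a' - a) := hgord ▸ addOrderOf_dvd_of_nsmul_eq_zero h2
    have h4 : a' - a = 0 := Nat.eq_zero_of_dvd_of_lt h3 (by omega)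
    omega
  have hsmul_inj : ∀ a a' : ℕ, a < n → a' < n → a • g = a' • g → a = a' := by
    intro a a' ha ha' h
    rcases le_total a a' with hle | hle
    · exact hsmul_key a a' hle ha' h
    · exact (hsmul_key a' a hle ha h.symm).symm
  have hQcard : Fintype.card (Γ ⧸ H) = 2 * b * c := by
    have h1 : Nat.card Γ = Nat.card (Γ ⧸ H) * Nat.card H :=
      AddSubgroup.card_eq_card_quotient_mul_card_addSubgroup H
    have h2 : Nat.card H = n := by rw [hHdef, Nat.card_zmultiples, hgord]
    have h3 : Nat.card Γ = 2 * n * b * c := by rw [Nat.card_eq_fintype_card, hcard]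
    rw [h1, h2] at h3
    rw [← Nat.card_eq_fintype_card]
    apply Nat.eq_of_mul_eq_mul_right hn0
    rw [h3]; ring
  haveI : Fact (Nat.Prime 2) := ⟨Nat.prime_two⟩
  obtain ⟨x, hx⟩ := exists_prime_addOrderOf_dvd_card (G := Γ ⧸ H) 2
    (by rw [hQcard]; exact ⟨b * c, by ring⟩)
  have hx0 : x ≠ 0 := by
    intro h; rw [h, addOrderOf_zero] at hx; omega
  have hx2 : x + x = 0 := by
    have h := addOrderOf_nsmul_eq_zero x
    rw [hx, two_nsmul] at h
    exact h
  obtain ⟨s, hs⟩ : ∃ s : Γ ⧸ H, ∀ q : Γ ⧸ H, q + q ≠ s := by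
    by_contra hcon
    push_neg at hcon
    have hsurj : Function.Surjective (fun q : Γ ⧸ H => q + q) := fun y => hcon y
    have hinj2 := Finite.injective_iff_surjective.mpr hsurj
    exact hx0 (hinj2 (show x + x = 0 + 0 by rw [hx2, add_zero]))
  obtain ⟨T, hT⟩ := exists_pairing (fun q : Γ ⧸ H => s - q)
    (fun q => sub_sub_cancel s q)
    (fun q hq => hs q (sub_eq_iff_eq_add.mp hq).symm)
  have hTcard : T.card = b * c := by
    have himg : T.image (fun q => s - q) = Tᶜ := by
      ext y
      simp only [Finset.mem_image, Finset.mem_compl]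
      constructor
      · rintro ⟨z, hz, rfl⟩
        exact (hT z).mp hz
      · intro hy
        exact ⟨s - y, (hT (s - y)).mpr (by rwa [sub_sub_cancel]), sub_sub_cancel s y⟩
    have hinj2 : Set.InjOn (fun q => s - q) ↑T := fun p _ q _ h => by
      have h2 := congrArg (fun z => s - z) h
      simpa only [sub_sub_cancel] using h2
    have h1 := Finset.card_image_of_injOn hinj2
    rw [himg] at h1
    have h2 := Finset.card_add_card_compl T
    rw [hQcard] at h2
    rw [h1] at h2
    rw [show 2 * b * c = 2 * (b * c) from by ring] at h2
    omega
  have hTc : Fintype.card ↥T = b * c := by rw [Fintype.card_coe, hTcard]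
  set e1 : Fin (b * c) ≃ ↥T := (Fintype.equivFinOfCardEq hTc).symm with he1
  set τ : Fin b × Fin c → Γ ⧸ H := fun p => ((e1 (finProdFinEquiv p)) : Γ ⧸ H) with hτ
  have hτT : ∀ p, τ p ∈ T := fun p => (e1 (finProdFinEquiv p)).2
  have hτinj : Function.Injective τ := by
    intro p q h
    rw [hτ] at h
    exact finProdFinEquiv.injective (e1.injective (Subtype.ext h))
  set rep : ℕ → ℕ → Γ := fun r t =>
    if h : r < b ∧ t < c then Quotient.out (τ (⟨r, h.1⟩, ⟨t, h.2⟩)) else 0 with hrepdef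
  set w : Γ := Quotient.out s with hwdef
  have hw : (QuotientAddGroup.mk w : Γ ⧸ H) = s := QuotientAddGroup.out_eq' s
  have hrep : ∀ (r : Fin b) (t : Fin c),
      (QuotientAddGroup.mk (rep r t) : Γ ⧸ H) = τ (r, t) := by
    intro r t
    have h : ((r : ℕ) < b ∧ (t : ℕ) < c) := ⟨r.isLt, t.isLt⟩
    simp only [hrepdef, dif_pos h, Fin.eta]
    exact QuotientAddGroup.out_eq' _
  have hsT : ∀ p, s - τ p ∉ T := fun p => (hT (τ p)).mp (hτT p)
  -- the injectivity hypothesis of the construction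
  apply construction b n c hb hn hc hcard g w rep hng
  intro t t' i i' m m' hm hm' h
  have hr : m / 2 < b := by omega
  have hr' : m' / 2 < b := by omega
  have hent : ∀ (t : Fin c) (i : Fin n) (m : ℕ) (hrb : m / 2 < b),
      (QuotientAddGroup.mk (entAux g w rep (t : ℕ) (i : ℕ) m) : Γ ⧸ H)
        = if m % 2 = 0 then τ (⟨m / 2, hrb⟩, t) else s - τ (⟨m / 2, hrb⟩, t) := by
    intro t i m hrb
    by_cases hpar : m % 2 = 0
    · rw [entAux, if_pos hpar, if_pos hpar, QuotientAddGroup.mk_add, hmk_smul, add_zero]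
      exact hrep ⟨m / 2, hrb⟩ t
    · rw [entAux, if_neg hpar, if_neg hpar, QuotientAddGroup.mk_sub,
        QuotientAddGroup.mk_sub, hmk_smul, sub_zero, hw, hrep ⟨m / 2, hrb⟩ t]
  have hmkeq := congrArg (QuotientAddGroup.mk (s := H)) h
  rw [hent t i m hr, hent t' i' m' hr'] at hmkeq
  by_cases hp : m % 2 = 0 <;> by_cases hp' : m' % 2 = 0
  · rw [if_pos hp, if_pos hp'] at hmkeq
    have hpair := hτinj hmkeq
    obtain ⟨h1, h2⟩ := Prod.mk.injEq _ _ _ _ ▸ hpair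
    have hdiv : m / 2 = m' / 2 := by
      have := congrArg (fun z : Fin b => (z : ℕ)) h1
      simpa using this
    refine ⟨h2, ?_, by omega⟩
    rw [entAux, if_pos hp, entAux, if_pos hp', hdiv, h2] at h
    have hG := add_left_cancel h
    exact Fin.ext (hsmul_inj i i' i.isLt i'.isLt hG)
  · rw [if_pos hp, if_neg hp'] at hmkeq
    exact absurd (hmkeq ▸ hτT _) (hsT _)
  · rw [if_neg hp, if_pos hp'] at hmkeq
    exact absurd (hmkeq ▸ hτT _) (hsT _)
  · rw [if_neg hp, if_neg hp'] at hmkeq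
    have hττ := sub_right_inj.mp hmkeq
    have hpair := hτinj hττ
    obtain ⟨h1, h2⟩ := Prod.mk.injEq _ _ _ _ ▸ hpair
    have hdiv : m / 2 = m' / 2 := by
      have := congrArg (fun z : Fin b => (z : ℕ)) h1
      simpa using this
    refine ⟨h2, ?_, by omega⟩
    rw [entAux, if_neg hp, entAux, if_neg hp', hdiv, h2] at h
    have hG := sub_right_inj.mp h
    exact Fin.ext (hsmul_inj i i' i.isLt i'.isLt hG)
end
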